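/- arXiv:0912.2368 — 10 statements merged into one kernel-verified Lean document; each statement's English description precedes it below -/
import Mathlib

section
/- For every integer n ≥ 3 there exists a nontrivial element w of the free group F_2 on two generators with word length |w| ≤ 4n³ + 4n² such that for every finite group H with |H| ≤ n²/9 and every group homomorphism φ : F_2 → H one has φ(w) = 1. (Consequently F_{F_k}(n) ≽ n^{2/3}.) -/
namespace KM
abbrev Ltr := Fin 2 × Bool

def a0 : Ltr := (0, true)
def a1 : Ltr := (0, false)
def b0 : Ltr := (1, true)
def b1 : Ltr := (1, false)

def R (p q : Ltr) : Prop := ¬(p.1 = q.1 ∧ p.2 = !q.2)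

instance : DecidableRel R := fun _ _ => by unfold R; infer_instance

lemma R_refl (p : Ltr) : R p p := by simp [R]

def OK (h t : Ltr) (L : List Ltr) : Prop :=
  L.Chain' R ∧ L.head? = some h ∧ L.getLast? = some t

lemma reduce_eq_self {L : List Ltr} (h : L.Chain' R) : FreeGroup.reduce L = L := by
  induction L with
  | nil => rfl
  | cons x xs ih =>
    have hxs : xs.Chain' R := h.tail
    rw [FreeGroup.reduce.cons, ih hxs]
    cases xs with
    | nil => rfl
    | cons y ys =>
      have hr : R x y := (List.isChain_cons_cons.mp h).1
      simp only [R] at hr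
      simp [hr]

lemma toWord_mk_eq {L : List Ltr} (h : L.Chain' R) :
    (FreeGroup.mk L).toWord = L := by
  rw [FreeGroup.toWord_mk, reduce_eq_self h]

lemma OK.append {h t h' t' L L'} (H : OK h t L) (H' : OK h' t' L') (hr : R t h') :
    OK h t' (L ++ L') := by
  obtain ⟨c, hh, hl⟩ := H
  obtain ⟨c', hh', hl'⟩ := H'
  refine ⟨List.isChain_append.2 ⟨c, c', ?_⟩, ?_, ?_⟩
  · intro x hx y hy
    rw [hl] at hx; rw [hh'] at hy
    cases hx; cases hy; exact hr
  · rwa [List.head?_append_of_ne_nil _ (by rintro rfl; simp at hh)]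
  · rwa [List.getLast?_append_of_ne_nil _ (by rintro rfl; simp at hh')]

lemma OK.single (p : Ltr) : OK p p [p] :=
  ⟨List.isChain_singleton p, rfl, rfl⟩

lemma OK.replicate {p : Ltr} {n : ℕ} (hn : n ≠ 0) : OK p p (List.replicate n p) := by
  refine ⟨List.isChain_replicate_of_rel n (R_refl p), ?_, ?_⟩
  · cases n with
    | zero => simp at hn
    | succ m => simp [List.replicate_succ]
  · cases n with
    | zero => simp at hn
    | succ m => simp [List.getLast?_replicate]

def neg (p : Ltr) : Ltr := (p.1, !p.2)

lemma OK.invRev {h t L} (H : OK h t L) : OK (neg t) (neg h) (FreeGroup.invRev L) := by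
  obtain ⟨c, hh, hl⟩ := H
  refine ⟨?_, ?_, ?_⟩
  · rw [List.Chain', FreeGroup.invRev, List.isChain_reverse, List.isChain_map]
    refine c.imp ?_
    intro p q hpq
    simp only [Function.flip_def, R, neg] at *
    rintro ⟨h1, h2⟩
    exact hpq ⟨h1.symm, by rw [h2]; simp⟩
  · rw [FreeGroup.invRev, List.head?_reverse, List.getLast?_map, hl]; rfl
  · rw [FreeGroup.invRev, List.getLast?_reverse, List.head?_map, hh]; rfl

def wA (e : ℕ) : List Ltr := List.replicate e a0 ++ ([b0] ++ (List.replicate e a1 ++ [b1]))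
def wB (d : ℕ) : List Ltr := [a0] ++ (List.replicate d b0 ++ ([a1] ++ List.replicate d b1))

def node1 (X Y : List Ltr) : List Ltr :=
  [b0] ++ (X ++ ([b1] ++ ([a0] ++ (Y ++ ([a1] ++ ([b0] ++ (FreeGroup.invRev X ++
    ([b1] ++ ([a0] ++ (FreeGroup.invRev Y ++ [a1]))))))))))
def node2 (X Y : List Ltr) : List Ltr :=
  [a0] ++ (X ++ ([a1] ++ ([b0] ++ (Y ++ ([b1] ++ ([a0] ++ (FreeGroup.invRev X ++
    ([a1] ++ ([b0] ++ (FreeGroup.invRev Y ++ [b1]))))))))))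

def T (f : ℕ → List Ltr) : ℕ → ℕ → List Ltr
  | 0, i => f i
  | (k+1), i => (if k % 2 = 0 then node1 else node2) (T f k (2*i)) (T f k (2*i+1))

lemma node1_length (X Y : List Ltr) :
    (node1 X Y).length = 2 * X.length + 2 * Y.length + 8 := by
  simp [node1, FreeGroup.invRev_length]; ring
lemma node2_length (X Y : List Ltr) :
    (node2 X Y).length = 2 * X.length + 2 * Y.length + 8 := by
  simp [node2, FreeGroup.invRev_length]; ring

lemma T_length (f : ℕ → List Ltr) (Hf : ∀ j, (f j).length ≤ 2*j + 4) :
    ∀ k i, (T f k i).length + 3 ≤ 2 * 8^k * i + 8^k + 6 * 4^k := by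
  intro k
  induction k with
  | zero => intro i; have := Hf i; simp [T]; omega
  | succ k ih =>
    intro i
    have h1 := ih (2*i)
    have h2 := ih (2*i+1)
    have hlen : (T f (k+1) i).length
        = 2 * (T f k (2*i)).length + 2 * (T f k (2*i+1)).length + 8 := by
      rw [T]
      split <;> [rw [node1_length]; rw [node2_length]]
    rw [hlen]
    have e8 : (8:ℕ)^(k+1) = 8 * 8^k := pow_succ' 8 k
    have e4 : (4:ℕ)^(k+1) = 4 * 4^k := pow_succ' 4 k
    have h4 : (1:ℕ) ≤ 4^k := Nat.one_le_pow _ _ (by norm_num)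
    nlinarith [h1, h2]

lemma wA_OK {e : ℕ} (he : e ≠ 0) : OK a0 b1 (wA e) :=
  (OK.replicate he).append ((OK.single b0).append
    ((OK.replicate he).append (OK.single b1) (by decide)) (by decide)) (by decide)

lemma wB_OK {d : ℕ} (hd : d ≠ 0) : OK a0 b1 (wB d) :=
  (OK.single a0).append ((OK.replicate hd).append
    ((OK.single a1).append (OK.replicate hd) (by decide)) (by decide)) (by decide)

lemma node1_OK {X Y} (hX : OK a0 b1 X) (hY : OK a0 b1 Y) : OK b0 a1 (node1 X Y) := by
  have hX' := hX.invRev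
  have hY' := hY.invRev
  exact (OK.single b0).append (hX.append ((OK.single b1).append ((OK.single a0).append
    (hY.append ((OK.single a1).append ((OK.single b0).append (hX'.append
    ((OK.single b1).append ((OK.single a0).append (hY'.append (OK.single a1) (by decide))
    (by decide)) (by decide)) (by decide)) (by decide)) (by decide)) (by decide))
    (by decide)) (by decide)) (by decide)) (by decide)

lemma node2_OK {X Y} (hX : OK b0 a1 X) (hY : OK b0 a1 Y) : OK a0 b1 (node2 X Y) := by
  have hX' := hX.invRev
  have hY' := hY.invRev
  exact (OK.single a0).append (hX.append ((OK.single a1).append ((OK.single b0).append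
    (hY.append ((OK.single b1).append ((OK.single a0).append (hX'.append
    ((OK.single a1).append ((OK.single b0).append (hY'.append (OK.single b1) (by decide))
    (by decide)) (by decide)) (by decide)) (by decide)) (by decide)) (by decide))
    (by decide)) (by decide)) (by decide)) (by decide)

lemma T_OK (f : ℕ → List Ltr) (Hf : ∀ j, OK a0 b1 (f j)) :
    ∀ k i, OK (if k % 2 = 0 then a0 else b0) (if k % 2 = 0 then b1 else a1) (T f k i) := by
  intro k
  induction k with
  | zero => intro i; simpa [T] using Hf i
  | succ k ih =>
    intro i
    rw [T]
    rcases Nat.even_or_odd k with hk | hk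
    · have h2 : k % 2 = 0 := Nat.even_iff.mp hk
      have h3 : (k+1) % 2 = 1 := by omega
      simp only [h2, h3, if_pos rfl] at *
      simpa using node1_OK (ih (2*i)) (ih (2*i+1))
    · have h2 : k % 2 = 1 := Nat.odd_iff.mp hk
      have h3 : (k+1) % 2 = 0 := by omega
      simp only [h2, h3] at *
      norm_num at *
      exact node2_OK (ih (2*i)) (ih (2*i+1))

/-! ### Group values -/

lemma mk_replicate (p : Fin 2) (d : ℕ) :
    FreeGroup.mk (List.replicate d (p, true)) = (FreeGroup.of p)^d := by
  induction d with
  | zero => rfl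
  | succ n ih =>
    rw [List.replicate_succ, pow_succ', ← ih,
      show (p, true) :: List.replicate n (p, true) = [(p,true)] ++ List.replicate n (p,true)
        from rfl, ← FreeGroup.mul_mk]
    rfl

lemma mk_replicate_inv (p : Fin 2) (d : ℕ) :
    FreeGroup.mk (List.replicate d (p, false)) = ((FreeGroup.of p)^d)⁻¹ := by
  rw [← mk_replicate, FreeGroup.inv_mk]
  congr 1
  simp [FreeGroup.invRev]

lemma mk_node1 (X Y : List Ltr) :
    FreeGroup.mk (node1 X Y) =
      FreeGroup.of 1 * FreeGroup.mk X * (FreeGroup.of 1)⁻¹ * FreeGroup.of 0 * FreeGroup.mk Y *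
        (FreeGroup.of 0)⁻¹ * FreeGroup.of 1 * (FreeGroup.mk X)⁻¹ * (FreeGroup.of 1)⁻¹ *
        FreeGroup.of 0 * (FreeGroup.mk Y)⁻¹ * (FreeGroup.of 0)⁻¹ := by
  have h1 : FreeGroup.of (1 : Fin 2) = FreeGroup.mk [b0] := rfl
  have h0 : FreeGroup.of (0 : Fin 2) = FreeGroup.mk [a0] := rfl
  rw [h1, h0]
  simp only [FreeGroup.inv_mk, FreeGroup.mul_mk]
  simp [node1, FreeGroup.invRev, a0, a1, b0, b1]

lemma mk_node2 (X Y : List Ltr) :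
    FreeGroup.mk (node2 X Y) =
      FreeGroup.of 0 * FreeGroup.mk X * (FreeGroup.of 0)⁻¹ * FreeGroup.of 1 * FreeGroup.mk Y *
        (FreeGroup.of 1)⁻¹ * FreeGroup.of 0 * (FreeGroup.mk X)⁻¹ * (FreeGroup.of 0)⁻¹ *
        FreeGroup.of 1 * (FreeGroup.mk Y)⁻¹ * (FreeGroup.of 1)⁻¹ := by
  have h1 : FreeGroup.of (1 : Fin 2) = FreeGroup.mk [b0] := rfl
  have h0 : FreeGroup.of (0 : Fin 2) = FreeGroup.mk [a0] := rfl
  rw [h1, h0]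
  simp only [FreeGroup.inv_mk, FreeGroup.mul_mk]
  simp [node2, FreeGroup.invRev, a0, a1, b0, b1]

lemma mk_wB (d : ℕ) :
    FreeGroup.mk (wB d) = FreeGroup.of 0 * (FreeGroup.of 1)^d * (FreeGroup.of 0)⁻¹ *
      ((FreeGroup.of 1)^d)⁻¹ := by
  have h0 : FreeGroup.of (0 : Fin 2) = FreeGroup.mk [a0] := rfl
  have h0' : (FreeGroup.of (0 : Fin 2))⁻¹ = FreeGroup.mk [a1] := by
    rw [h0, FreeGroup.inv_mk]; rfl
  rw [h0', h0, show ((FreeGroup.of (1:Fin 2))^d) = FreeGroup.mk (List.replicate d b0)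
    from (mk_replicate 1 d).symm,
    show ((FreeGroup.mk (List.replicate d b0))⁻¹) = FreeGroup.mk (List.replicate d b1) by
      simp [b0, b1, mk_replicate, mk_replicate_inv]]
  simp only [FreeGroup.mul_mk]
  simp [wB]

lemma mk_wA (e : ℕ) :
    FreeGroup.mk (wA e) = (FreeGroup.of 0)^e * FreeGroup.of 1 * ((FreeGroup.of 0)^e)⁻¹ *
      (FreeGroup.of 1)⁻¹ := by
  have h1 : FreeGroup.of (1 : Fin 2) = FreeGroup.mk [b0] := rfl
  have h1' : (FreeGroup.of (1 : Fin 2))⁻¹ = FreeGroup.mk [b1] := by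
    rw [h1, FreeGroup.inv_mk]; rfl
  rw [h1', h1, show ((FreeGroup.of (0:Fin 2))^e) = FreeGroup.mk (List.replicate e a0)
    from (mk_replicate 0 e).symm,
    show ((FreeGroup.mk (List.replicate e a0))⁻¹) = FreeGroup.mk (List.replicate e a1) by
      simp [a0, a1, mk_replicate, mk_replicate_inv]]
  simp only [FreeGroup.mul_mk]
  simp [wA]

section Dies
variable {H : Type} [Group H] (φ : FreeGroup (Fin 2) →* H)

lemma node1_dies {X Y : List Ltr}
    (h : φ (FreeGroup.mk X) = 1 ∨ φ (FreeGroup.mk Y) = 1) :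
    φ (FreeGroup.mk (node1 X Y)) = 1 := by
  rw [mk_node1]
  rcases h with h | h <;> · simp only [map_mul, map_inv, h]; group

lemma node2_dies {X Y : List Ltr}
    (h : φ (FreeGroup.mk X) = 1 ∨ φ (FreeGroup.mk Y) = 1) :
    φ (FreeGroup.mk (node2 X Y)) = 1 := by
  rw [mk_node2]
  rcases h with h | h <;> · simp only [map_mul, map_inv, h]; group

lemma T_dies (f : ℕ → List Ltr) :
    ∀ k i, (∃ j, j < 2^k ∧ φ (FreeGroup.mk (f (2^k * i + j))) = 1) →
      φ (FreeGroup.mk (T f k i)) = 1 := by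
  intro k
  induction k with
  | zero =>
    intro i ⟨j, hj, hv⟩
    interval_cases j
    simpa [T] using hv
  | succ k ih =>
    intro i ⟨j, hj, hv⟩
    have hsplit : φ (FreeGroup.mk (T f k (2*i))) = 1 ∨ φ (FreeGroup.mk (T f k (2*i+1))) = 1 := by
      by_cases hcase : j < 2^k
      · left
        exact ih (2*i) ⟨j, hcase, by
          have : 2^(k+1) * i + j = 2^k * (2*i) + j := by ring_nf
          rwa [this] at hv⟩
      · right
        push_neg at hcase
        have h2 : (2:ℕ)^(k+1) = 2 * 2^k := by rw [pow_succ]; ring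
        refine ih (2*i+1) ⟨j - 2^k, by omega, ?_⟩
        have e1 : 2^(k+1) * i = 2*(2^k*i) := by rw [h2]; ring
        have e2 : 2^k * (2*i+1) = 2*(2^k*i) + 2^k := by ring
        have : 2^(k+1) * i + j = 2^k * (2*i+1) + (j - 2^k) := by omega
        rwa [this] at hv
    rw [T]
    split
    · exact node1_dies φ hsplit
    · exact node2_dies φ hsplit

end Dies

lemma exists_kill (H : Type) [Group H] [Finite H] (s : ℕ)
    (hcard : Nat.card H ≤ s^2) (x y : H) :
    (∃ d, 1 ≤ d ∧ d ≤ s ∧ y^d = 1) ∨ (∃ e, 1 ≤ e ∧ e ≤ s - 1 ∧ Commute (x^e) y) := by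
  by_cases hd : orderOf y ≤ s
  · left
    exact ⟨orderOf y, orderOf_pos y, hd, pow_orderOf_eq_one y⟩
  · right
    push_neg at hd
    set K := Subgroup.zpowers y with hK
    have hcardK : Nat.card K = orderOf y := Nat.card_zpowers y
    have hlag : Nat.card H = Nat.card (H ⧸ K) * Nat.card K :=
      Subgroup.card_eq_card_quotient_mul_card_subgroup K
    have hQpos : 1 ≤ Nat.card (H ⧸ K) :=
      Nat.one_le_iff_ne_zero.mpr (Nat.card_ne_zero.mpr ⟨inferInstance, inferInstance⟩)
    have hQ : Nat.card (H ⧸ K) < s := by nlinarith [hlag, hcardK, hd, hcard, hQpos]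
    have : Fintype (H ⧸ K) := Fintype.ofFinite _
    obtain ⟨i, j, hij, hfe⟩ := Fintype.exists_ne_map_eq_of_card_lt
      (fun i : Fin s => ((x ^ (i : ℕ) : H) : H ⧸ K))
      (by rw [Fintype.card_fin, ← Nat.card_eq_fintype_card]; exact hQ)
    have key : ∀ (i j : Fin s), (i : ℕ) < (j : ℕ) →
        ((x ^ (i : ℕ) : H) : H ⧸ K) = ((x ^ (j : ℕ) : H) : H ⧸ K) →
        ∃ e, 1 ≤ e ∧ e ≤ s - 1 ∧ Commute (x^e) y := by
      intro i j hlt heq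
      have hmem : (x ^ (i:ℕ))⁻¹ * x ^ (j:ℕ) ∈ K := (QuotientGroup.eq).mp heq
      have hxe : (x ^ (i:ℕ))⁻¹ * x ^ (j:ℕ) = x ^ ((j:ℕ) - (i:ℕ)) := by
        have hj : (j:ℕ) = (i:ℕ) + ((j:ℕ) - (i:ℕ)) := by omega
        rw [hj, pow_add]
        group
        rw [← hj]
      rw [hxe] at hmem
      obtain ⟨k, hk⟩ := Subgroup.mem_zpowers_iff.mp hmem
      refine ⟨(j:ℕ) - (i:ℕ), by omega, by have := j.2; omega, ?_⟩
      rw [← hk]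
      exact ((Commute.refl y).zpow_left k).symm.symm
    rcases Ne.lt_or_gt (fun h : (i:ℕ) = (j:ℕ) => hij (Fin.ext h)) with hlt | hlt
    · exact key i j hlt hfe
    · exact key j i hlt hfe.symm

/-- leaf assignment -/
def leaf (s : ℕ) (j : ℕ) : List Ltr :=
  if j < s then wB (j+1) else if j < 2*s - 1 then wA (j - s + 1) else wB 1

lemma leaf_OK (s : ℕ) (j : ℕ) : OK a0 b1 (leaf s j) := by
  unfold leaf
  split
  · exact wB_OK (by omega)
  · split
    · exact wA_OK (by omega)
    · exact wB_OK (by omega)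

lemma wB_length (d : ℕ) : (wB d).length = 2*d + 2 := by simp [wB]; ring
lemma wA_length (e : ℕ) : (wA e).length = 2*e + 2 := by simp [wA]; ring

lemma leaf_length (s : ℕ) (j : ℕ) : (leaf s j).length ≤ 2*j + 4 := by
  unfold leaf
  split
  · rw [wB_length]; omega
  · split
    · rw [wA_length]
      omega
    · rw [wB_length]; omega

end KM

open KM

/-- For every integer `n ≥ 3` there exists a nontrivial element `w` of the free group
on two generators, of word length at most `4n³ + 4n²`, such that every homomorphism
from the free group to a finite group of order at most `n²/9` kills `w`. -/
theorem stmt_0 (n : ℕ) (hn : 3 ≤ n) :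
    ∃ w : FreeGroup (Fin 2), w ≠ 1 ∧
      (FreeGroup.toWord w).length ≤ 4 * n ^ 3 + 4 * n ^ 2 ∧
      ∀ (H : Type) (_ : Group H) (_ : Finite H),
        (Nat.card H : ℝ) ≤ (n : ℝ) ^ 2 / 9 →
        ∀ φ : FreeGroup (Fin 2) →* H, φ w = 1 := by
  set s : ℕ := (n + 2) / 3 with hs
  have hdm := Nat.div_add_mod (n + 2) 3
  have hmod : (n + 2) % 3 < 3 := Nat.mod_lt _ (by norm_num)
  have h3s_le : 3 * s ≤ n + 2 := by omega
  have h3s_ge : n ≤ 3 * s := by omega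
  have hs1 : 1 ≤ s := by omega
  set L0 : ℕ := Nat.log 2 (2 * s - 1) with hL0
  set k : ℕ := L0 + 1 with hk
  have hpow_lt : 2 * s - 1 < 2 ^ k := Nat.lt_pow_succ_log_self (by norm_num) _
  have hpow_le : 2 ^ L0 ≤ 2 * s - 1 := Nat.pow_log_le_self 2 (by omega)
  have hkpow : 2 ^ k = 2 * 2 ^ L0 := by rw [hk, pow_succ]; ring
  set f : ℕ → List Ltr := leaf s with hf
  refine ⟨FreeGroup.mk (T f k 0), ?_, ?_, ?_⟩
  · -- nontrivial
    have hOK := T_OK f (fun j => leaf_OK s j) k 0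
    have htw : (FreeGroup.mk (T f k 0)).toWord = T f k 0 := toWord_mk_eq hOK.1
    intro hcontra
    rw [hcontra, FreeGroup.toWord_one] at htw
    have := hOK.2.1
    rw [← htw] at this
    simp at this
  · -- length
    have hlen := T_length f (fun j => leaf_length s j) k 0
    have htw : (FreeGroup.mk (T f k 0)).toWord = T f k 0 :=
      toWord_mk_eq (T_OK f (fun j => leaf_OK s j) k 0).1
    rw [htw]
    set M : ℕ := 2 ^ k with hM
    have h8 : (8:ℕ) ^ k = M ^ 3 := by
      rw [hM, show (8:ℕ) = 2 ^ 3 from rfl, ← pow_mul, ← pow_mul, Nat.mul_comm]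
    have h4 : (4:ℕ) ^ k = M ^ 2 := by
      rw [hM, show (4:ℕ) = 2 ^ 2 from rfl, ← pow_mul, ← pow_mul, Nat.mul_comm]
    rw [h8, h4] at hlen
    simp only [Nat.mul_zero, Nat.zero_add] at hlen
    rcases Nat.eq_or_lt_of_le hs1 with hseq | hs2
    · -- s = 1
      have hM2 : M ≤ 2 := by
        rw [hkpow]
        have : 2 ^ L0 ≤ 1 := by omega
        omega
      have hn3 : 27 ≤ n ^ 3 := by
        calc (27:ℕ) = 3 ^ 3 := by norm_num
        _ ≤ n ^ 3 := Nat.pow_le_pow_left hn 3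
      nlinarith [hlen, hM2, hn3]
    · -- s ≥ 2
      have h2L : 2 ^ L0 ≤ 2 * s - 2 := by
        rcases Nat.lt_or_ge (2 ^ L0) (2 * s - 1) with h | h
        · omega
        · have heq : 2 ^ L0 = 2 * s - 1 := le_antisymm hpow_le h
          have hL0ne : L0 ≠ 0 := by
            intro h0
            rw [h0] at heq
            simp at heq
            omega
          have hev : 2 ^ L0 = 2 * 2 ^ (L0 - 1) := by
            conv_lhs => rw [← Nat.sub_add_cancel (Nat.one_le_iff_ne_zero.mpr hL0ne)]
            rw [pow_succ]
            ring
          omega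
      have hM4 : M ≤ 4 * s - 4 := by rw [hkpow]; omega
      set m : ℕ := n - 1 with hm
      have hnm : n = m + 1 := by omega
      have h3M : 3 * M ≤ 4 * m := by omega
      have hc3 : (3 * M) ^ 3 ≤ (4 * m) ^ 3 := Nat.pow_le_pow_left h3M 3
      have hc2 : (3 * M) ^ 2 ≤ (4 * m) ^ 2 := Nat.pow_le_pow_left h3M 2
      rw [hnm]
      nlinarith [hlen, hc3, hc2]
  · -- kill property
    intro H hG hF hcard φ
    letI := hG
    letI := hF
    have hcard9 : 9 * Nat.card H ≤ n ^ 2 := by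
      have h9 : (9:ℝ) * (Nat.card H : ℝ) ≤ (n:ℝ) ^ 2 := by linarith
      exact_mod_cast h9
    have hcards : Nat.card H ≤ s ^ 2 := by nlinarith [h3s_ge, hcard9]
    set x : H := φ (FreeGroup.of 0) with hx
    set y : H := φ (FreeGroup.of 1) with hy
    rcases exists_kill H s hcards x y with ⟨d, hd1, hds, hyd⟩ | ⟨e, he1, hes, hcom⟩
    · refine T_dies φ f k 0 ⟨d - 1, by omega, ?_⟩
      have hleaf : f (2 ^ k * 0 + (d - 1)) = wB d := by
        rw [Nat.mul_zero, Nat.zero_add, hf]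
        unfold leaf
        rw [if_pos (by omega)]
        congr 1
        omega
      rw [hleaf, mk_wB]
      simp only [map_mul, map_inv, map_pow, ← hx, ← hy, hyd]
      group
    · have hs2 : 2 ≤ s := by omega
      refine T_dies φ f k 0 ⟨s + e - 1, by omega, ?_⟩
      have hleaf : f (2 ^ k * 0 + (s + e - 1)) = wA e := by
        rw [Nat.mul_zero, Nat.zero_add, hf]
        unfold leaf
        rw [if_neg (by omega), if_pos (by omega)]
        congr 1
        omega
      have hcom' : x ^ e * y = y * x ^ e := hcom
      rw [hleaf, mk_wA]
      simp only [map_mul, map_inv, map_pow, ← hx, ← hy]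
      rw [hcom']
      group
end

section
/- For every integer n ≥ 1 there exists a nontrivial element w of the free group F_2 on two generators with word length |w| ≤ 4n³ + 4n² such that for every finite group H with |H| ≤ n and every group homomorphism φ : F_2 → H one has φ(w) = 1. (Consequently F_{F_k}(n) ≽ n^{1/3}.) -/
namespace Stmt1Aux

abbrev Wd := List (Fin 2 × Bool)

def aT : Fin 2 × Bool := (0, true)
def aF : Fin 2 × Bool := (0, false)
def bT : Fin 2 × Bool := (1, true)
def bF : Fin 2 × Bool := (1, false)

def Rel (p q : Fin 2 × Bool) : Prop := ¬(p.1 = q.1 ∧ p.2 = !q.2)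

instance (p q : Fin 2 × Bool) : Decidable (Rel p q) := by unfold Rel; infer_instance

lemma reduce_of_chain' : ∀ L : Wd, List.Chain' Rel L → FreeGroup.reduce L = L := by
  intro L hL
  induction L with
  | nil => rfl
  | cons x t ih =>
    cases t with
    | nil => rfl
    | cons y s =>
      rw [List.Chain', List.isChain_cons_cons] at hL
      have h2 : FreeGroup.reduce (y :: s) = y :: s := ih hL.2
      rw [FreeGroup.reduce.cons, h2]
      simp only []
      rw [if_neg hL.1]

def blockA (L : Wd) : Wd := aT :: (L ++ [aF])
def blockB (L : Wd) : Wd := bT :: (L ++ [bF])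

def dIdx (n j : ℕ) : ℕ := if j < n then j + 1 else 1

def leafW (d : ℕ) : Wd := blockB (List.replicate d aT) ++ List.replicate d aF

def nodeW (U V : Wd) : Wd :=
  blockB V ++ (blockA U ++ (blockB (FreeGroup.invRev V) ++ blockA (FreeGroup.invRev U)))

def TW (n : ℕ) : ℕ → ℕ → Wd
  | 0, i => leafW (dIdx n i)
  | (k+1), i => nodeW (TW n k (2*i)) (TW n k (2*i+1))

structure Good (L : Wd) : Prop where
  chain : List.Chain' Rel L
  head : L.head? = some bT
  last : L.getLast? = some aF

lemma chain_block {c : Fin 2 × Bool} {L : Wd} {h l : Fin 2 × Bool}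
    (hc : List.Chain' Rel L) (hh : L.head? = some h) (hl : L.getLast? = some l)
    (h1 : Rel c h) (h2 : Rel l (c.1, !c.2)) :
    List.Chain' Rel (c :: (L ++ [(c.1, !c.2)])) := by
  rw [List.Chain', List.isChain_cons]
  constructor
  · intro y hy
    have hne : L ≠ [] := by intro e; rw [e] at hh; simp at hh
    rw [List.head?_append, hh] at hy
    simp at hy; rwa [← hy]
  · rw [List.isChain_append]
    refine ⟨hc, List.isChain_singleton _, ?_⟩
    intro x hx y hy
    rw [hl] at hx; simp at hx hy; rw [← hx, ← hy]; exact h2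

lemma head?_invRev (L : Wd) :
    (FreeGroup.invRev L).head? = L.getLast?.map (fun p => (p.1, !p.2)) := by
  unfold FreeGroup.invRev
  rw [List.head?_reverse, List.getLast?_map]

lemma getLast?_invRev (L : Wd) :
    (FreeGroup.invRev L).getLast? = L.head?.map (fun p => (p.1, !p.2)) := by
  unfold FreeGroup.invRev
  rw [List.getLast?_reverse, List.head?_map]

lemma chain'_invRev {L : Wd} (h : List.Chain' Rel L) :
    List.Chain' Rel (FreeGroup.invRev L) := by
  unfold FreeGroup.invRev
  rw [List.Chain', ← List.map_reverse, List.isChain_map, List.isChain_reverse]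
  refine h.imp ?_
  rintro ⟨x1, x2⟩ ⟨y1, y2⟩ hr ⟨e1, e2⟩
  exact hr ⟨e1.symm, by revert e2; cases x2 <;> cases y2 <;> simp⟩

lemma headB (L : Wd) : (blockB L).head? = some bT := rfl
lemma headA (L : Wd) : (blockA L).head? = some aT := rfl
lemma lastB (L : Wd) : (blockB L).getLast? = some bF := by
  unfold blockB; rw [← List.cons_append, List.getLast?_concat]
lemma lastA (L : Wd) : (blockA L).getLast? = some aF := by
  unfold blockA; rw [← List.cons_append, List.getLast?_concat]

lemma good_node {U V : Wd} (hU : Good U) (hV : Good V) : Good (nodeW U V) := by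
  have hiU := chain'_invRev hU.chain
  have hiV := chain'_invRev hV.chain
  have hiUh : (FreeGroup.invRev U).head? = some aT := by
    rw [head?_invRev, hU.last]; rfl
  have hiUl : (FreeGroup.invRev U).getLast? = some bF := by
    rw [getLast?_invRev, hU.head]; rfl
  have hiVh : (FreeGroup.invRev V).head? = some aT := by
    rw [head?_invRev, hV.last]; rfl
  have hiVl : (FreeGroup.invRev V).getLast? = some bF := by
    rw [getLast?_invRev, hV.head]; rfl
  have c1 : List.Chain' Rel (blockB V) :=
    chain_block hV.chain hV.head hV.last (by decide) (by decide)
  have c2 : List.Chain' Rel (blockA U) :=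
    chain_block hU.chain hU.head hU.last (by decide) (by decide)
  have c3 : List.Chain' Rel (blockB (FreeGroup.invRev V)) :=
    chain_block hiV hiVh hiVl (by decide) (by decide)
  have c4 : List.Chain' Rel (blockA (FreeGroup.invRev U)) :=
    chain_block hiU hiUh hiUl (by decide) (by decide)
  constructor
  · unfold nodeW
    rw [List.Chain', List.isChain_append]
    refine ⟨c1, ?_, ?_⟩
    · rw [List.isChain_append]
      refine ⟨c2, ?_, ?_⟩
      · rw [List.isChain_append]
        refine ⟨c3, c4, ?_⟩
        intro x hx y hy
        rw [lastB] at hx; rw [headA] at hy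
        simp at hx hy; rw [← hx, ← hy]; decide
      · intro x hx y hy
        rw [lastA] at hx
        rw [List.head?_append, headB] at hy
        simp at hx hy; rw [← hx, ← hy]; decide
    · intro x hx y hy
      rw [lastB] at hx
      rw [List.head?_append, headA] at hy
      simp at hx hy; rw [← hx, ← hy]; decide
  · unfold nodeW; rw [List.head?_append, headB]; rfl
  · unfold nodeW
    rw [List.getLast?_append_of_ne_nil, List.getLast?_append_of_ne_nil,
      List.getLast?_append_of_ne_nil, lastA]
    · unfold blockA; simp
    · unfold blockA blockB; simp
    · unfold blockA blockB; simp

lemma good_leaf {d : ℕ} (hd : 1 ≤ d) : Good (leafW d) := by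
  obtain ⟨e, rfl⟩ : ∃ e, d = e + 1 := ⟨d - 1, by omega⟩
  have hrepTh : (List.replicate (e+1) aT).head? = some aT := by
    rw [List.replicate_succ]; rfl
  have hrepTl : (List.replicate (e+1) aT).getLast? = some aT := by
    rw [List.replicate_succ', List.getLast?_concat]
  have hrepFh : (List.replicate (e+1) aF).head? = some aF := by
    rw [List.replicate_succ]; rfl
  have hrepFl : (List.replicate (e+1) aF).getLast? = some aF := by
    rw [List.replicate_succ', List.getLast?_concat]
  have cB : List.Chain' Rel (blockB (List.replicate (e+1) aT)) :=
    chain_block (List.isChain_replicate_of_rel _ (by decide)) hrepTh hrepTl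
      (by decide) (by decide)
  constructor
  · unfold leafW
    rw [List.Chain', List.isChain_append]
    refine ⟨cB, List.isChain_replicate_of_rel _ (by decide), ?_⟩
    intro x hx y hy
    rw [lastB] at hx
    rw [hrepFh] at hy
    simp at hx hy; rw [← hx, ← hy]; decide
  · rfl
  · unfold leafW
    rw [List.getLast?_append_of_ne_nil _ (by simp), hrepFl]

lemma dIdx_pos (n j : ℕ) : 1 ≤ dIdx n j := by unfold dIdx; split <;> omega

lemma good_TW (n : ℕ) : ∀ k i, Good (TW n k i) := by
  intro k
  induction k with
  | zero => intro i; exact good_leaf (dIdx_pos n i)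
  | succ k ih => intro i; exact good_node (ih (2*i)) (ih (2*i+1))


def A : FreeGroup (Fin 2) := FreeGroup.of 0
def B : FreeGroup (Fin 2) := FreeGroup.of 1

lemma mk_single_T (x : Fin 2) : FreeGroup.mk [(x, true)] = FreeGroup.of x := rfl

lemma mk_single_F (x : Fin 2) : FreeGroup.mk [(x, false)] = (FreeGroup.of x)⁻¹ := by
  rw [show FreeGroup.of x = FreeGroup.mk [(x, true)] from rfl, FreeGroup.inv_mk]
  rfl

lemma mk_replicate_T (x : Fin 2) (d : ℕ) :
    FreeGroup.mk (List.replicate d (x, true)) = (FreeGroup.of x) ^ d := by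
  rw [← FreeGroup.toWord_of_pow, FreeGroup.mk_toWord]

lemma mk_replicate_F (x : Fin 2) (d : ℕ) :
    FreeGroup.mk (List.replicate d (x, false)) = ((FreeGroup.of x) ^ d)⁻¹ := by
  have : FreeGroup.invRev (List.replicate d (x, true)) = List.replicate d (x, false) := by
    unfold FreeGroup.invRev
    simp
  rw [← this, ← FreeGroup.inv_mk, mk_replicate_T]

lemma mk_blockB (L : Wd) :
    FreeGroup.mk (blockB L) = B * FreeGroup.mk L * B⁻¹ := by
  unfold blockB
  rw [show bT :: (L ++ [bF]) = [bT] ++ L ++ [bF] by simp, ← FreeGroup.mul_mk, ← FreeGroup.mul_mk]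
  rw [show ([bT] : Wd) = [((1 : Fin 2), true)] from rfl, show ([bF] : Wd) = [((1 : Fin 2), false)] from rfl]
  rw [mk_single_T, mk_single_F]
  rfl

lemma mk_blockA (L : Wd) :
    FreeGroup.mk (blockA L) = A * FreeGroup.mk L * A⁻¹ := by
  unfold blockA
  rw [show aT :: (L ++ [aF]) = [aT] ++ L ++ [aF] by simp, ← FreeGroup.mul_mk, ← FreeGroup.mul_mk]
  rw [show ([aT] : Wd) = [((0 : Fin 2), true)] from rfl, show ([aF] : Wd) = [((0 : Fin 2), false)] from rfl]
  rw [mk_single_T, mk_single_F]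
  rfl

lemma mk_leafW (d : ℕ) :
    FreeGroup.mk (leafW d) = B * A ^ d * B⁻¹ * (A ^ d)⁻¹ := by
  unfold leafW
  rw [← FreeGroup.mul_mk, mk_blockB]
  unfold aT aF
  rw [mk_replicate_T, mk_replicate_F]
  rfl

lemma mk_nodeW (U V : Wd) :
    FreeGroup.mk (nodeW U V) =
      (B * FreeGroup.mk V * B⁻¹) * ((A * FreeGroup.mk U * A⁻¹) *
      ((B * (FreeGroup.mk V)⁻¹ * B⁻¹) * (A * (FreeGroup.mk U)⁻¹ * A⁻¹))) := by
  unfold nodeW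
  rw [← FreeGroup.mul_mk, ← FreeGroup.mul_mk, ← FreeGroup.mul_mk,
    mk_blockB, mk_blockA, mk_blockB, mk_blockA, ← FreeGroup.inv_mk, ← FreeGroup.inv_mk]

lemma kill (n : ℕ) {H : Type} [Group H] (φ : FreeGroup (Fin 2) →* H) :
    ∀ k i, (∃ j, j < 2^k ∧ (φ A) ^ (dIdx n (i * 2^k + j)) = 1) →
      φ (FreeGroup.mk (TW n k i)) = 1 := by
  intro k
  induction k with
  | zero =>
    intro i ⟨j, hj, hpow⟩
    interval_cases j
    simp only [pow_zero, mul_one, Nat.add_zero] at hpow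
    show φ (FreeGroup.mk (leafW (dIdx n i))) = 1
    rw [mk_leafW, map_mul, map_mul, map_mul, map_inv, map_inv, map_pow, hpow]
    simp
  | succ k ih =>
    intro i ⟨j, hj, hpow⟩
    show φ (FreeGroup.mk (nodeW (TW n k (2*i)) (TW n k (2*i+1)))) = 1
    rw [mk_nodeW]
    simp only [map_mul, map_inv]
    rcases lt_or_ge j (2^k) with hcase | hcase
    · have hu : φ (FreeGroup.mk (TW n k (2*i))) = 1 := by
        apply ih
        refine ⟨j, hcase, ?_⟩
        have : 2*i * 2^k + j = i * 2^(k+1) + j := by ring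
        rw [this]; exact hpow
      rw [hu]
      group
    · obtain ⟨j', rfl⟩ : ∃ j', j = 2^k + j' := ⟨j - 2^k, by omega⟩
      have hj' : j' < 2^k := by
        have : 2^(k+1) = 2^k + 2^k := by ring
        omega
      have hv : φ (FreeGroup.mk (TW n k (2*i+1))) = 1 := by
        apply ih
        refine ⟨j', hj', ?_⟩
        have : (2*i+1) * 2^k + j' = i * 2^(k+1) + (2^k + j') := by ring
        rw [this]; exact hpow
      rw [hv]
      group


lemma length_leafW (d : ℕ) : (leafW d).length = 2*d + 2 := by
  simp [leafW, blockB]; omega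

lemma length_nodeW (U V : Wd) :
    (nodeW U V).length = 2*U.length + 2*V.length + 8 := by
  simp [nodeW, blockA, blockB, FreeGroup.invRev_length]; omega

def SW (n : ℕ) : ℕ → ℕ → ℕ
  | 0, i => 2 * dIdx n i + 2
  | (k+1), i => SW n k (2*i) + SW n k (2*i+1)

lemma len_TW (n : ℕ) : ∀ k i,
    3 * (TW n k i).length + 8 ≤ 3 * 2^k * SW n k i + 8 * 4^k := by
  intro k
  induction k with
  | zero =>
    intro i
    show 3 * (leafW (dIdx n i)).length + 8 ≤ _
    rw [length_leafW]
    show _ ≤ 3 * 2^0 * (2 * dIdx n i + 2) + 8 * 4^0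
    omega
  | succ k ih =>
    intro i
    show 3 * (nodeW (TW n k (2*i)) (TW n k (2*i+1))).length + 8 ≤
      3 * 2^(k+1) * (SW n k (2*i) + SW n k (2*i+1)) + 8 * 4^(k+1)
    rw [length_nodeW]
    have h1 := ih (2*i)
    have h2 := ih (2*i+1)
    have e1 : (2:ℕ)^(k+1) = 2 * 2^k := by ring
    have e2 : (4:ℕ)^(k+1) = 4 * 4^k := by ring
    rw [e1, e2]
    nlinarith [h1, h2]

lemma SW_eq (n : ℕ) : ∀ k i,
    SW n k i = ∑ j ∈ Finset.range (2^k), (2 * dIdx n (i * 2^k + j) + 2) := by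
  intro k
  induction k with
  | zero =>
    intro i
    show 2 * dIdx n i + 2 = _
    rw [pow_zero, Finset.sum_range_one]
    simp
  | succ k ih =>
    intro i
    show SW n k (2*i) + SW n k (2*i+1) = _
    rw [ih, ih]
    have e : (2:ℕ)^(k+1) = 2^k + 2^k := by ring
    rw [e, Finset.sum_range_add]
    congr 1
    · apply Finset.sum_congr rfl
      intro j _
      have : 2*i * 2^k + j = i * (2^k + 2^k) + j := by ring
      rw [this]
    · apply Finset.sum_congr rfl
      intro j _
      have : (2*i+1) * 2^k + j = i * (2^k + 2^k) + (2^k + j) := by ring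
      rw [this]

lemma sum_aux : ∀ m : ℕ, (∑ j ∈ Finset.range m, (2*(j+1)+2)) = m*m + 3*m := by
  intro m
  induction m with
  | zero => simp
  | succ m ih => rw [Finset.sum_range_succ, ih]; ring

lemma SW_val (n k : ℕ) (h : n ≤ 2^k) :
    SW n k 0 + 4*n = n*n + 3*n + 4 * 2^k := by
  rw [SW_eq]
  simp only [Nat.zero_mul, Nat.zero_add]
  obtain ⟨m, hm⟩ : ∃ m, 2^k = n + m := ⟨2^k - n, by omega⟩
  rw [hm, Finset.sum_range_add]
  have e1 : (∑ j ∈ Finset.range n, (2 * dIdx n j + 2)) = n*n + 3*n := by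
    rw [← sum_aux n]
    apply Finset.sum_congr rfl
    intro j hj
    rw [Finset.mem_range] at hj
    unfold dIdx
    rw [if_pos hj]
  have e2 : (∑ j ∈ Finset.range m, (2 * dIdx n (n + j) + 2)) = 4*m := by
    rw [show 4*m = ∑ _j ∈ Finset.range m, 4 by simp [Finset.sum_const, mul_comm]]
    apply Finset.sum_congr rfl
    intro j _
    unfold dIdx
    rw [if_neg (by omega)]
  rw [e1, e2]
  omega

lemma arith (q P len S : ℕ) (hq : 1 ≤ q) (h1 : q + 1 ≤ P) (h2 : P ≤ 2*q)
    (hlen : 3*len + 8 ≤ 3*P*S + 8*(P*P))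
    (hS : S + 4*(q+1) = (q+1)*(q+1) + 3*(q+1) + 4*P) :
    len ≤ 4*(q+1)^3 + 4*(q+1)^2 := by
  zify at *
  nlinarith [mul_nonneg (by linarith : (0:ℤ) ≤ 2*q - P) (by linarith : (0:ℤ) ≤ P - (q+1)),
    sq_nonneg ((q:ℤ) - 3), mul_nonneg (by positivity : (0:ℤ) ≤ (q:ℤ)) (sq_nonneg ((q:ℤ) - 3)),
    mul_pos (by positivity : (0:ℤ) < (q:ℤ)) (by linarith : (0:ℤ) < (q:ℤ) + 1)]

end Stmt1Aux



open Stmt1Aux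

/-- For every integer `n ≥ 1` there exists a nontrivial element `w` of the free group
on two generators, of word length at most `4n³ + 4n²`, such that every homomorphism
from the free group to a finite group of order at most `n` kills `w`. -/
theorem stmt_1 (n : ℕ) (hn : 1 ≤ n) :
    ∃ w : FreeGroup (Fin 2), w ≠ 1 ∧
      (FreeGroup.toWord w).length ≤ 4 * n ^ 3 + 4 * n ^ 2 ∧
      ∀ (H : Type) (_ : Group H) (_ : Finite H),
        Nat.card H ≤ n →
        ∀ φ : FreeGroup (Fin 2) →* H, φ w = 1 := by
  set k := Nat.clog 2 n with hk
  have hnk : n ≤ 2^k := Nat.le_pow_clog (by norm_num) n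
  refine ⟨FreeGroup.mk (TW n k 0), ?_, ?_, ?_⟩
  · intro h
    have hg := good_TW n k 0
    have : (TW n k 0).head? = some bT := hg.head
    have h2 : FreeGroup.reduce (TW n k 0) = TW n k 0 := reduce_of_chain' _ hg.chain
    have h3 : FreeGroup.mk (TW n k 0) = (1 : FreeGroup (Fin 2)) := h
    have h4 : (FreeGroup.mk (TW n k 0)).toWord = [] := by rw [h3, FreeGroup.toWord_one]
    rw [FreeGroup.toWord_mk, h2] at h4
    rw [h4] at this
    simp at this
  · have hg := good_TW n k 0
    have h2 : FreeGroup.reduce (TW n k 0) = TW n k 0 := reduce_of_chain' _ hg.chain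
    rw [FreeGroup.toWord_mk, h2]
    rcases eq_or_lt_of_le hn with h1 | h1
    · -- n = 1
      have hk0 : k = 0 := by rw [hk, ← h1, Nat.clog_one_right]
      rw [hk0]
      show (leafW (dIdx n 0)).length ≤ _
      rw [length_leafW]
      have : dIdx n 0 = 1 := by unfold dIdx; rw [if_pos (by omega)]
      rw [this, ← h1]
      norm_num
    · -- n ≥ 2
      obtain ⟨q, rfl⟩ : ∃ q, n = q + 1 := ⟨n - 1, by omega⟩
      have hq : 1 ≤ q := by omega
      have hP2 : 2^k ≤ 2*q := by
        have hkpos : 0 < k := Nat.clog_pos (by norm_num) (by omega)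
        have hlt := Nat.pow_pred_clog_lt_self (b := 2) (by norm_num) (x := q+1) (by omega)
        rw [← hk] at hlt
        obtain ⟨k', hk'⟩ : ∃ k', k = k' + 1 := ⟨k - 1, by omega⟩
        rw [hk'] at hlt ⊢
        have hlt2 : 2 ^ k' < q + 1 := by
          rwa [Nat.pred_succ] at hlt
        rw [pow_succ']
        omega
      have hlen := len_TW (q+1) k 0
      have hS := SW_val (q+1) k hnk
      have h4 : (4:ℕ)^k = 2^k * 2^k := by
        rw [show (4:ℕ) = 2*2 from rfl, mul_pow]
      rw [h4] at hlen
      have := arith q (2^k) (TW (q+1) k 0).length (SW (q+1) k 0) hq hnk hP2 hlen hS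
      calc (TW (q+1) k 0).length ≤ 4*(q+1)^3 + 4*(q+1)^2 := this
        _ = 4 * (q+1) ^ 3 + 4 * (q+1) ^ 2 := by ring
  · intro H _ _ hcard φ
    have hpos : 0 < Nat.card H := Nat.card_pos
    set d := orderOf (φ A) with hd
    have hdvd : d ∣ Nat.card H := orderOf_dvd_natCard (φ A)
    have hd1 : 1 ≤ d := by
      rcases Nat.eq_zero_or_pos d with h0 | h; · rw [h0] at hdvd; omega
      · exact h
    have hdn : d ≤ n := le_trans (Nat.le_of_dvd hpos hdvd) hcard
    apply kill n φ k 0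
    refine ⟨d - 1, by omega, ?_⟩
    have e1 : (0 : ℕ) * 2^k + (d-1) = d - 1 := by omega
    rw [e1]
    have e2 : dIdx n (d-1) = d := by unfold dIdx; rw [if_pos (by omega)]; omega
    rw [e2, hd]
    exact pow_orderOf_eq_one (φ A)
end

section
/- Let r_1 > r_2 > … > r_m be a finite strictly decreasing sequence of positive integers. Then there exists a nontrivial word w ∈ F_2 of word length at most 4m²·(r_1 + 1) with the following property: w is a law in every finite group Γ in which every element γ ∈ Γ satisfies γ^{r_i} = 1 for at least one index i ∈ {1, …, m}. -/
/- Auxiliary development: we construct the law as an explicit reduced word in the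
free group on two generators.

Construction: for each pair of exponents (a, b) we use the "atom"
`[(x^a)^y, x^b]` (a commutator which evaluates to 1 as soon as `g^a = 1` or `g^b = 1`,
where `g`, `h` are the images of the generators `x`, `y`).  Atoms for the pairs
`(r 0, r 1), (r 2, r 3), …` are combined by a balanced binary tree of commutators
`comb P Q = [y P y⁻¹, x Q x⁻¹]`, which evaluates to 1 whenever one of the children does.
Every element of the target group kills some `r i`, hence the leaf containing `i` dies and
the whole tree evaluates to 1.  The word is constructed so that it is literally reduced
(no cancellation at any junction), which gives nontriviality and the exact length count. -/

namespace Stmt2Aux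

open List

abbrev Ltr := (Fin 2) × Bool
abbrev Wd := List Ltr

def X : Fin 2 := 0
def Y : Fin 2 := 1

/-- a block of `n` copies of the letter `x^{±1}` -/
def xs (n : ℕ) (s : Bool) : Wd := List.replicate n (X, s)

/-- the word `y x^a y⁻¹ x^b y x^{-a} y⁻¹ x^{-b}`, i.e. the commutator `[(x^a)^y, x^b]`. -/
def atomL (a b : ℕ) : Wd :=
  (Y, true) :: (xs a true ++ ((Y, false) :: (xs b true ++
    ((Y, true) :: (xs a false ++ ((Y, false) :: xs b false))))))

/-- the commutator `[y P y⁻¹, x Q x⁻¹]`, written out as a list. -/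
def combL (P Q : Wd) : Wd :=
  (Y, true) :: (P ++ ((Y, false) :: (X, true) :: (Q ++ ((X, false) :: (Y, true) ::
    (FreeGroup.invRev P ++ ((Y, false) :: (X, true) ::
      (FreeGroup.invRev Q ++ [(X, false)])))))))

/-- balanced binary tree of `comb`s over the leaves `f 0, …, f (2^k - 1)`. -/
def treeL : ℕ → (ℕ → Wd) → Wd
  | 0, f => f 0
  | (k+1), f => combL (treeL k f) (treeL k (fun i => f (2^k + i)))

/-- the no-cancellation relation between adjacent letters -/
def R' (p q : Ltr) : Prop := ¬(p.1 = q.1 ∧ p.2 = !q.2)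

theorem reduce_chain : ∀ {L : Wd}, List.Chain' R' L → FreeGroup.reduce L = L
  | [], _ => rfl
  | [p], _ => rfl
  | p :: q :: L, h => by
      have h1 : R' p q := (List.isChain_cons_cons.mp h).1
      have h2 := reduce_chain (List.isChain_cons_cons.mp h).2
      rw [FreeGroup.reduce.cons, h2]
      exact if_neg h1

structure Ok (L : Wd) : Prop where
  chain : List.Chain' R' L
  hd : L.head? = some (Y, true)
  lst : L.getLast? = some (X, false)

theorem Ok.ne_nil {L : Wd} (h : Ok L) : L ≠ [] := by
  intro hL
  rw [hL] at h
  exact absurd h.hd (by simp)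

/- helpers for head?/getLast? bookkeeping -/
theorem gl_cons {x : Ltr} {l : Wd} {p : Ltr} (h : l.getLast? = some p) :
    (x :: l).getLast? = some p := by
  cases l with
  | nil => simp at h
  | cons y t => rw [List.getLast?_cons_cons]; exact h

theorem gl_app {l₁ l₂ : Wd} {p : Ltr} (h : l₂.getLast? = some p) :
    (l₁ ++ l₂).getLast? = some p := by
  rw [List.getLast?_append_of_ne_nil l₁ (by intro hh; rw [hh] at h; simp at h)]
  exact h

theorem hd_app {l₁ l₂ : Wd} {p : Ltr} (h : l₁.head? = some p) :
    (l₁ ++ l₂).head? = some p := by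
  rw [List.head?_append_of_ne_nil l₁ (by intro hh; rw [hh] at h; simp at h)]
  exact h

theorem chain'_append_of {P Q : Wd} (hP : List.Chain' R' P) (hQ : List.Chain' R' Q)
    (h : ∀ p ∈ P.getLast?, ∀ q ∈ Q.head?, R' p q) : List.Chain' R' (P ++ Q) :=
  List.isChain_append.mpr ⟨hP, hQ, h⟩

theorem chain'_cons_of {x : Ltr} {l : Wd} (hl : List.Chain' R' l)
    (hx : ∀ p ∈ l.head?, R' x p) : List.Chain' R' (x :: l) :=
  List.isChain_cons.mpr ⟨hx, hl⟩

theorem xs_chain (n : ℕ) (s : Bool) : List.Chain' R' (xs n s) :=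
  List.isChain_replicate_of_rel _ (by simp [R'])

theorem xs_head (n : ℕ) (s : Bool) : (xs (n+1) s).head? = some (X, s) := rfl

theorem xs_last (n : ℕ) (s : Bool) : (xs (n+1) s).getLast? = some (X, s) := by
  rw [xs, List.replicate_succ']
  exact List.getLast?_concat

/- invRev preserves chains and swaps head/last -/
theorem invRev_chain {L : Wd} (h : List.Chain' R' L) :
    List.Chain' R' (FreeGroup.invRev L) := by
  rw [FreeGroup.invRev]
  show List.IsChain _ _
  rw [List.isChain_reverse, List.isChain_map]
  refine h.imp ?_
  intro p q hpq hc
  refine hpq ⟨hc.1.symm, ?_⟩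
  have h2 := hc.2
  simp only [Bool.not_not] at h2
  simpa using h2.symm

theorem invRev_head {L : Wd} {p : Ltr} (h : L.getLast? = some p) :
    (FreeGroup.invRev L).head? = some (p.1, !p.2) := by
  induction L using List.reverseRecOn with
  | nil => simp at h
  | append_singleton l a ih =>
    rw [List.getLast?_concat] at h
    obtain rfl : a = p := by injection h
    simp [FreeGroup.invRev]

theorem invRev_last {L : Wd} {p : Ltr} (h : L.head? = some p) :
    (FreeGroup.invRev L).getLast? = some (p.1, !p.2) := by
  cases L with
  | nil => simp at h
  | cons q t =>
    have hq : q = p := by simpa using h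
    subst hq
    have hrw : FreeGroup.invRev (q :: t)
        = (List.map (fun g : Ltr => (g.1, !g.2)) t).reverse ++ [(q.1, !q.2)] := by
      simp [FreeGroup.invRev]
    rw [hrw, List.getLast?_concat]

theorem R'_concrete : ∀ (p q : Ltr), p.1 ≠ q.1 → R' p q := by
  rintro ⟨i, s⟩ ⟨j, t⟩ h ⟨h1, _⟩
  exact h h1

theorem R'_same : ∀ (i : Fin 2) (s : Bool), R' (i, s) (i, s) := by
  rintro i s ⟨_, h2⟩
  simp at h2

theorem XY_ne : X ≠ Y := by decide
theorem YX_ne : Y ≠ X := by decide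

theorem Ok_atom (a b : ℕ) (ha : 0 < a) (hb : 0 < b) : Ok (atomL a b) := by
  obtain ⟨a', rfl⟩ : ∃ a', a = a' + 1 := ⟨a - 1, by omega⟩
  obtain ⟨b', rfl⟩ : ∃ b', b = b' + 1 := ⟨b - 1, by omega⟩
  -- bottom-up chain construction
  have c1 : List.Chain' R' (xs (b'+1) false) := xs_chain _ _
  have c2 : List.Chain' R' ((Y, false) :: xs (b'+1) false) := by
    refine chain'_cons_of c1 ?_
    rw [xs_head]
    rintro p hp
    obtain rfl : (X, false) = p := by injection hp
    exact R'_concrete _ _ XY_ne.symm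
  have g2 : ((Y, false) :: xs (b'+1) false).getLast? = some (X, false) :=
    gl_cons (xs_last _ _)
  have c3 : List.Chain' R' (xs (a'+1) false ++ ((Y, false) :: xs (b'+1) false)) := by
    refine chain'_append_of (xs_chain _ _) c2 ?_
    rw [xs_last]
    rintro p hp q hq
    obtain rfl : (X, false) = p := by injection hp
    obtain rfl : (Y, false) = q := by injection hq
    exact R'_concrete _ _ XY_ne
  have h3 : (xs (a'+1) false ++ ((Y, false) :: xs (b'+1) false)).head? = some (X, false) :=
    hd_app (xs_head _ _)
  have g3 : (xs (a'+1) false ++ ((Y, false) :: xs (b'+1) false)).getLast? = some (X, false) :=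
    gl_app g2
  have c4 : List.Chain' R' ((Y, true) :: (xs (a'+1) false ++ ((Y, false) :: xs (b'+1) false))) := by
    refine chain'_cons_of c3 ?_
    rw [h3]
    rintro p hp
    obtain rfl : (X, false) = p := by injection hp
    exact R'_concrete _ _ XY_ne.symm
  have g4 : ((Y, true) :: (xs (a'+1) false ++ ((Y, false) :: xs (b'+1) false))).getLast?
      = some (X, false) := gl_cons g3
  have c5 : List.Chain' R' (xs (b'+1) true ++ ((Y, true) ::
      (xs (a'+1) false ++ ((Y, false) :: xs (b'+1) false)))) := by
    refine chain'_append_of (xs_chain _ _) c4 ?_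
    rw [xs_last]
    rintro p hp q hq
    obtain rfl : (X, true) = p := by injection hp
    obtain rfl : (Y, true) = q := by injection hq
    exact R'_concrete _ _ XY_ne
  have h5 : (xs (b'+1) true ++ ((Y, true) ::
      (xs (a'+1) false ++ ((Y, false) :: xs (b'+1) false)))).head? = some (X, true) :=
    hd_app (xs_head _ _)
  have g5 : (xs (b'+1) true ++ ((Y, true) ::
      (xs (a'+1) false ++ ((Y, false) :: xs (b'+1) false)))).getLast? = some (X, false) :=
    gl_app g4
  have c6 : List.Chain' R' ((Y, false) :: (xs (b'+1) true ++ ((Y, true) ::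
      (xs (a'+1) false ++ ((Y, false) :: xs (b'+1) false))))) := by
    refine chain'_cons_of c5 ?_
    rw [h5]
    rintro p hp
    obtain rfl : (X, true) = p := by injection hp
    exact R'_concrete _ _ XY_ne.symm
  have g6 : ((Y, false) :: (xs (b'+1) true ++ ((Y, true) ::
      (xs (a'+1) false ++ ((Y, false) :: xs (b'+1) false))))).getLast? = some (X, false) :=
    gl_cons g5
  have c7 : List.Chain' R' (xs (a'+1) true ++ ((Y, false) :: (xs (b'+1) true ++ ((Y, true) ::
      (xs (a'+1) false ++ ((Y, false) :: xs (b'+1) false)))))) := by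
    refine chain'_append_of (xs_chain _ _) c6 ?_
    rw [xs_last]
    rintro p hp q hq
    obtain rfl : (X, true) = p := by injection hp
    obtain rfl : (Y, false) = q := by injection hq
    exact R'_concrete _ _ XY_ne
  have h7 : (xs (a'+1) true ++ ((Y, false) :: (xs (b'+1) true ++ ((Y, true) ::
      (xs (a'+1) false ++ ((Y, false) :: xs (b'+1) false)))))).head? = some (X, true) :=
    hd_app (xs_head _ _)
  have g7 : (xs (a'+1) true ++ ((Y, false) :: (xs (b'+1) true ++ ((Y, true) ::
      (xs (a'+1) false ++ ((Y, false) :: xs (b'+1) false)))))).getLast? = some (X, false) :=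
    gl_app g6
  refine ⟨?_, rfl, gl_cons g7⟩
  refine chain'_cons_of c7 ?_
  rw [h7]
  rintro p hp
  obtain rfl : (X, true) = p := by injection hp
  exact R'_concrete _ _ XY_ne.symm

theorem Ok_comb {P Q : Wd} (hP : Ok P) (hQ : Ok Q) : Ok (combL P Q) := by
  have iPc := invRev_chain hP.chain
  have iQc := invRev_chain hQ.chain
  have iPh : (FreeGroup.invRev P).head? = some (X, true) := invRev_head hP.lst
  have iPl : (FreeGroup.invRev P).getLast? = some (Y, false) := invRev_last hP.hd
  have iQh : (FreeGroup.invRev Q).head? = some (X, true) := invRev_head hQ.lst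
  have iQl : (FreeGroup.invRev Q).getLast? = some (Y, false) := invRev_last hQ.hd
  -- bottom-up
  have c2 : List.Chain' R' (FreeGroup.invRev Q ++ [(X, false)]) := by
    refine chain'_append_of iQc (List.isChain_singleton _) ?_
    rw [iQl]
    rintro p hp q hq
    obtain rfl : (Y, false) = p := by injection hp
    obtain rfl : (X, false) = q := by injection hq
    exact R'_concrete _ _ YX_ne
  have h2 : (FreeGroup.invRev Q ++ [(X, false)]).head? = some (X, true) := hd_app iQh
  have g2 : (FreeGroup.invRev Q ++ [(X, false)]).getLast? = some (X, false) :=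
    gl_app rfl
  have c3 : List.Chain' R' ((X, true) :: (FreeGroup.invRev Q ++ [(X, false)])) := by
    refine chain'_cons_of c2 ?_
    rw [h2]
    rintro p hp
    obtain rfl : (X, true) = p := by injection hp
    exact R'_same _ _
  have g3 := gl_cons (x := ((X : Fin 2), true)) g2
  have c4 : List.Chain' R' ((Y, false) :: (X, true) :: (FreeGroup.invRev Q ++ [(X, false)])) := by
    refine chain'_cons_of c3 ?_
    rintro p hp
    obtain rfl : (X, true) = p := by injection hp
    exact R'_concrete _ _ YX_ne
  have g4 := gl_cons (x := ((Y : Fin 2), false)) g3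
  have c5 : List.Chain' R' (FreeGroup.invRev P ++ ((Y, false) :: (X, true) ::
      (FreeGroup.invRev Q ++ [(X, false)]))) := by
    refine chain'_append_of iPc c4 ?_
    rw [iPl]
    rintro p hp q hq
    obtain rfl : (Y, false) = p := by injection hp
    obtain rfl : (Y, false) = q := by injection hq
    exact R'_same _ _
  have h5 : (FreeGroup.invRev P ++ ((Y, false) :: (X, true) ::
      (FreeGroup.invRev Q ++ [(X, false)]))).head? = some (X, true) := hd_app iPh
  have g5 := gl_app (l₁ := FreeGroup.invRev P) g4
  have c6 : List.Chain' R' ((Y, true) :: (FreeGroup.invRev P ++ ((Y, false) :: (X, true) ::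
      (FreeGroup.invRev Q ++ [(X, false)])))) := by
    refine chain'_cons_of c5 ?_
    rw [h5]
    rintro p hp
    obtain rfl : (X, true) = p := by injection hp
    exact R'_concrete _ _ YX_ne
  have g6 := gl_cons (x := ((Y : Fin 2), true)) g5
  have c7 : List.Chain' R' ((X, false) :: (Y, true) :: (FreeGroup.invRev P ++
      ((Y, false) :: (X, true) :: (FreeGroup.invRev Q ++ [(X, false)])))) := by
    refine chain'_cons_of c6 ?_
    rintro p hp
    obtain rfl : (Y, true) = p := by injection hp
    exact R'_concrete _ _ XY_ne
  have g7 := gl_cons (x := ((X : Fin 2), false)) g6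
  have c8 : List.Chain' R' (Q ++ ((X, false) :: (Y, true) :: (FreeGroup.invRev P ++
      ((Y, false) :: (X, true) :: (FreeGroup.invRev Q ++ [(X, false)]))))) := by
    refine chain'_append_of hQ.chain c7 ?_
    rw [hQ.lst]
    rintro p hp q hq
    obtain rfl : (X, false) = p := by injection hp
    obtain rfl : (X, false) = q := by injection hq
    exact R'_same _ _
  have h8 : (Q ++ ((X, false) :: (Y, true) :: (FreeGroup.invRev P ++
      ((Y, false) :: (X, true) :: (FreeGroup.invRev Q ++ [(X, false)]))))).head?
        = some (Y, true) := hd_app hQ.hd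
  have g8 := gl_app (l₁ := Q) g7
  have c9 : List.Chain' R' ((X, true) :: (Q ++ ((X, false) :: (Y, true) ::
      (FreeGroup.invRev P ++ ((Y, false) :: (X, true) ::
        (FreeGroup.invRev Q ++ [(X, false)])))))) := by
    refine chain'_cons_of c8 ?_
    rw [h8]
    rintro p hp
    obtain rfl : (Y, true) = p := by injection hp
    exact R'_concrete _ _ XY_ne
  have g9 := gl_cons (x := ((X : Fin 2), true)) g8
  have c10 : List.Chain' R' ((Y, false) :: (X, true) :: (Q ++ ((X, false) :: (Y, true) ::
      (FreeGroup.invRev P ++ ((Y, false) :: (X, true) ::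
        (FreeGroup.invRev Q ++ [(X, false)])))))) := by
    refine chain'_cons_of c9 ?_
    rintro p hp
    obtain rfl : (X, true) = p := by injection hp
    exact R'_concrete _ _ YX_ne
  have g10 := gl_cons (x := ((Y : Fin 2), false)) g9
  have c11 : List.Chain' R' (P ++ ((Y, false) :: (X, true) :: (Q ++ ((X, false) :: (Y, true) ::
      (FreeGroup.invRev P ++ ((Y, false) :: (X, true) ::
        (FreeGroup.invRev Q ++ [(X, false)]))))))) := by
    refine chain'_append_of hP.chain c10 ?_
    rw [hP.lst]
    rintro p hp q hq
    obtain rfl : (X, false) = p := by injection hp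
    obtain rfl : (Y, false) = q := by injection hq
    exact R'_concrete _ _ XY_ne
  have h11 : (P ++ ((Y, false) :: (X, true) :: (Q ++ ((X, false) :: (Y, true) ::
      (FreeGroup.invRev P ++ ((Y, false) :: (X, true) ::
        (FreeGroup.invRev Q ++ [(X, false)]))))))).head? = some (Y, true) := hd_app hP.hd
  have g11 := gl_app (l₁ := P) g10
  refine ⟨?_, rfl, gl_cons g11⟩
  refine chain'_cons_of c11 ?_
  rw [h11]
  rintro p hp
  obtain rfl : (Y, true) = p := by injection hp
  exact R'_same _ _

theorem Ok_tree : ∀ (k : ℕ) (f : ℕ → Wd), (∀ i, Ok (f i)) → Ok (treeL k f)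
  | 0, f, hf => hf 0
  | (k+1), f, hf => Ok_comb (Ok_tree k f hf) (Ok_tree k _ (fun i => hf _))

/- lengths -/
theorem len_atom (a b : ℕ) : (atomL a b).length = 2*a + 2*b + 4 := by
  simp [atomL, xs]
  omega

theorem len_comb (P Q : Wd) : (combL P Q).length = 2*P.length + 2*Q.length + 8 := by
  simp [combL]
  omega

theorem len_tree (B : ℕ) : ∀ (k : ℕ) (f : ℕ → Wd), (∀ i, (f i).length ≤ B) →
    (treeL k f).length + 3 ≤ 4^k * (B + 3)
  | 0, f, hf => by
      have := hf 0
      simpa [treeL] using by omega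
  | (k+1), f, hf => by
      have h1 := len_tree B k f hf
      have h2 := len_tree B k (fun i => f (2^k + i)) (fun i => hf _)
      rw [treeL, len_comb]
      rw [pow_succ, mul_comm (4^k) 4, mul_assoc]
      set c := 4^k * (B + 3)
      omega

/- evaluations -/
section Eval

variable {Γ : Type} [Group Γ] (φ : FreeGroup (Fin 2) →* Γ)

theorem eval_append (L₁ L₂ : Wd) :
    φ (FreeGroup.mk (L₁ ++ L₂)) = φ (FreeGroup.mk L₁) * φ (FreeGroup.mk L₂) := by
  rw [← FreeGroup.mul_mk, map_mul]

theorem eval_cons (p : Ltr) (L : Wd) :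
    φ (FreeGroup.mk (p :: L)) = φ (FreeGroup.mk [p]) * φ (FreeGroup.mk L) := by
  rw [show p :: L = [p] ++ L from rfl, eval_append]

theorem mk_single_t (i : Fin 2) : FreeGroup.mk [(i, true)] = FreeGroup.of i := rfl

theorem mk_single_f (i : Fin 2) : FreeGroup.mk [(i, false)] = (FreeGroup.of i)⁻¹ := by
  rw [FreeGroup.of, FreeGroup.inv_mk]
  simp [FreeGroup.invRev]

theorem mk_xs_t (n : ℕ) : FreeGroup.mk (xs n true) = (FreeGroup.of X)^n := by
  induction n with
  | zero => rw [xs, List.replicate_zero, ← FreeGroup.one_eq_mk, pow_zero]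
  | succ n ih =>
      rw [xs, List.replicate_succ, show ((X, true) :: List.replicate n (X, true))
        = [(X, true)] ++ List.replicate n (X, true) from rfl, ← FreeGroup.mul_mk,
        mk_single_t]
      rw [show List.replicate n ((X : Fin 2), true) = xs n true from rfl, ih, pow_succ']

theorem mk_xs_f (n : ℕ) : FreeGroup.mk (xs n false) = ((FreeGroup.of X)^n)⁻¹ := by
  have : FreeGroup.invRev (xs n true) = xs n false := by
    simp [FreeGroup.invRev, xs, List.map_replicate]
  rw [← this, ← FreeGroup.inv_mk, mk_xs_t]

theorem eval_atom {a b : ℕ} (h : φ (FreeGroup.of X)^a = 1 ∨ φ (FreeGroup.of X)^b = 1) :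
    φ (FreeGroup.mk (atomL a b)) = 1 := by
  set g := φ (FreeGroup.of X) with hg
  set h' := φ (FreeGroup.of Y) with hh
  have expand : φ (FreeGroup.mk (atomL a b))
      = h' * (g^a * (h'⁻¹ * (g^b * (h' * ((g^a)⁻¹ * (h'⁻¹ * (g^b)⁻¹)))))) := by
    rw [atomL, eval_cons, mk_single_t, eval_append, mk_xs_t, eval_cons, mk_single_f,
      eval_append, mk_xs_t, eval_cons, mk_single_t, eval_append, mk_xs_f, eval_cons,
      mk_single_f, mk_xs_f]
    simp only [map_mul, map_inv, map_pow]
    group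
    rfl
  rcases h with h | h <;> rw [expand, h] <;> group

theorem eval_comb {P Q : Wd}
    (h : φ (FreeGroup.mk P) = 1 ∨ φ (FreeGroup.mk Q) = 1) :
    φ (FreeGroup.mk (combL P Q)) = 1 := by
  set g := φ (FreeGroup.of X) with hg
  set h' := φ (FreeGroup.of Y) with hh
  set p := φ (FreeGroup.mk P) with hp
  set q := φ (FreeGroup.mk Q) with hq
  have eP : φ (FreeGroup.mk (FreeGroup.invRev P)) = p⁻¹ := by
    rw [← FreeGroup.inv_mk, map_inv]
  have eQ : φ (FreeGroup.mk (FreeGroup.invRev Q)) = q⁻¹ := by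
    rw [← FreeGroup.inv_mk, map_inv]
  have expand : φ (FreeGroup.mk (combL P Q))
      = h' * (p * (h'⁻¹ * (g * (q * (g⁻¹ * (h' * (p⁻¹ * (h'⁻¹ * (g * (q⁻¹ * g⁻¹)))))))))) := by
    rw [combL, eval_cons, mk_single_t, eval_append, eval_cons, mk_single_f, eval_cons,
      mk_single_t, eval_append, eval_cons, mk_single_f, eval_cons, mk_single_t,
      eval_append, eP, eval_cons, mk_single_f, eval_cons, mk_single_t, eval_append, eQ,
      mk_single_f]
    simp only [map_mul, map_inv, map_pow]
    group
    rfl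
  rcases h with h | h <;> rw [expand, h] <;> group

theorem eval_tree : ∀ (k : ℕ) (f : ℕ → Wd),
    (∃ i, i < 2^k ∧ φ (FreeGroup.mk (f i)) = 1) → φ (FreeGroup.mk (treeL k f)) = 1
  | 0, f, ⟨i, hi, h1⟩ => by
      interval_cases i
      exact h1
  | (k+1), f, ⟨i, hi, h1⟩ => by
      rw [treeL]
      by_cases hik : i < 2^k
      · exact eval_comb φ (Or.inl (eval_tree k f ⟨i, hik, h1⟩))
      · refine eval_comb φ (Or.inr (eval_tree k _ ⟨i - 2^k, ?_, ?_⟩))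
        · have : 2^(k+1) = 2^k + 2^k := by rw [pow_succ]; omega
          omega
        · rw [show 2^k + (i - 2^k) = i by omega]
          exact h1

end Eval

end Stmt2Aux

open Stmt2Aux in
/-- Given a strictly decreasing sequence `r 0 > r 1 > ⋯ > r (m-1)` of positive integers,
there is a nontrivial word `w` in the free group on two generators of length at most
`4m²(r 0 + 1)` which is a law in every finite group `Γ` in which every element satisfies
`γ ^ (r i) = 1` for some `i`. -/
theorem stmt_2 (m : ℕ) (hm : 1 ≤ m) (r : Fin m → ℕ) (hpos : ∀ i, 0 < r i)
    (hdec : StrictAnti r) :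
    ∃ w : FreeGroup (Fin 2), w ≠ 1 ∧
      (FreeGroup.toWord w).length ≤ 4 * m ^ 2 * (r ⟨0, hm⟩ + 1) ∧
      ∀ (Γ : Type) (_ : Group Γ) (_ : Finite Γ),
        (∀ γ : Γ, ∃ i : Fin m, γ ^ (r i) = 1) →
        ∀ φ : FreeGroup (Fin 2) →* Γ, φ w = 1 := by
  classical
  set r0 := r ⟨0, hm⟩ with hr0
  -- r is bounded by r0, and r0 ≥ m
  have hle : ∀ j : Fin m, r j ≤ r0 := by
    intro j
    rcases eq_or_lt_of_le (show (⟨0, hm⟩ : Fin m) ≤ j from Fin.mk_le_mk.mpr (Nat.zero_le _)) with h | h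
    · rw [← h]
    · exact le_of_lt (hdec h)
  have haux : ∀ (k : ℕ) (hk : k < m), r ⟨k, hk⟩ + k ≤ r0 := by
    intro k
    induction k with
    | zero => intro hk; simp [hr0]
    | succ k ih =>
        intro hk
        have hk' : k < m := by omega
        have h1 := ih hk'
        have h2 : r ⟨k+1, hk⟩ < r ⟨k, hk'⟩ := hdec (by simp [Fin.lt_def])
        omega
  have hr0m : m ≤ r0 := by
    have h1 := haux (m-1) (by omega)
    have h2 := hpos ⟨m-1, by omega⟩
    omega
  -- the leaves
  have hidx : ∀ t : ℕ, min t (m-1) < m := fun t => by omega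
  set idx : ℕ → Fin m := fun t => ⟨min t (m-1), hidx t⟩ with hidxdef
  set f : ℕ → Wd := fun i => atomL (r (idx (2*i))) (r (idx (2*i+1))) with hf
  set M := (m+1)/2 with hM
  set d := Nat.clog 2 M with hd
  have hOkf : ∀ i, Ok (f i) := fun i => Ok_atom _ _ (hpos _) (hpos _)
  have hOk : Ok (treeL d f) := Ok_tree d f hOkf
  have htw : (FreeGroup.mk (treeL d f)).toWord = treeL d f := by
    rw [FreeGroup.toWord_mk, reduce_chain hOk.chain]
  refine ⟨FreeGroup.mk (treeL d f), ?_, ?_, ?_⟩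
  · -- nontrivial
    intro h1
    rw [h1, FreeGroup.toWord_one] at htw
    exact hOk.ne_nil htw.symm
  · -- length bound
    rw [htw]
    have hleaf : ∀ i, (f i).length ≤ 4*r0 + 4 := by
      intro i
      rw [hf]
      simp only []
      rw [len_atom]
      have := hle (idx (2*i))
      have := hle (idx (2*i+1))
      omega
    have hlen := len_tree (4*r0 + 4) d f hleaf
    rcases Nat.lt_or_ge m 2 with hm2 | hm2
    · -- m = 1
      obtain rfl : m = 1 := by omega
      have hd0 : d = 0 := by rw [hd, show M = 1 by omega, Nat.clog_one_right]
      rw [hd0] at hlen ⊢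
      norm_num at hlen ⊢
      omega
    · -- m ≥ 2 : 2^d ≤ m - 1
      have h2d : 2^d ≤ m - 1 := by
        rcases Nat.lt_or_ge M 2 with hM2 | hM2
        · have hM1 : M = 1 := by omega
          rw [hd, hM1, Nat.clog_one_right, pow_zero]
          omega
        · have hdpos : 1 ≤ d := by
            rw [hd]
            exact Nat.clog_pos (by norm_num) hM2
          obtain ⟨e, he⟩ : ∃ e, d = e + 1 := ⟨d - 1, by omega⟩
          have hlt : 2 ^ e < M := by
            have h := Nat.pow_pred_clog_lt_self (b := 2) (by norm_num) (x := M) hM2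
            rw [← hd, he] at h
            simpa using h
          have h2M : 2 * M ≤ m + 1 := by omega
          rw [he, pow_succ]
          omega
      have h4d : 4^d ≤ (m-1) * (m-1) := by
        calc 4^d = 2^d * 2^d := by rw [← Nat.mul_pow]
        _ ≤ (m-1) * (m-1) := Nat.mul_le_mul h2d h2d
      have hbig : (treeL d f).length + 3 ≤ (m-1) * (m-1) * (4*r0 + 7) := by
        calc (treeL d f).length + 3 ≤ 4^d * (4*r0 + 4 + 3) := hlen
        _ ≤ (m-1)*(m-1) * (4*r0+7) := Nat.mul_le_mul_right _ h4d
      obtain ⟨k, rfl⟩ : ∃ k, m = k + 2 := ⟨m - 2, by omega⟩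
      have hmk : k + 2 ≤ r0 := hr0m
      simp only [show k + 2 - 1 = k + 1 from rfl] at hbig
      nlinarith [hbig, hmk]
  · -- the law
    intro Γ _ _ hcl φ
    obtain ⟨i0, hi0⟩ := hcl (φ (FreeGroup.of X))
    have hi0m : (i0 : ℕ) < m := i0.isLt
    apply eval_tree
    refine ⟨(i0 : ℕ) / 2, ?_, ?_⟩
    · have hMle : M ≤ 2^d := Nat.le_pow_clog (by norm_num) _
      have : (i0 : ℕ)/2 < M := by omega
      omega
    · rw [hf]
      simp only []
      apply eval_atom
      rcases Nat.even_or_odd (i0 : ℕ) with he | ho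
      · left
        have h2i : 2 * ((i0 : ℕ)/2) = (i0 : ℕ) := by
          obtain ⟨t, ht⟩ := he; omega
        have : idx (2 * ((i0 : ℕ)/2)) = i0 := by
          rw [h2i, hidxdef]
          exact Fin.ext (by simp; omega)
        rw [this]
        exact hi0
      · right
        have h2i : 2 * ((i0 : ℕ)/2) + 1 = (i0 : ℕ) := by
          obtain ⟨t, ht⟩ := ho; omega
        have : idx (2 * ((i0 : ℕ)/2) + 1) = i0 := by
          rw [h2i, hidxdef]
          exact Fin.ext (by simp; omega)
        rw [this]
        exact hi0
end

section
/- For every positive integer n there exists a nontrivial word v_n ∈ F_2 of word length at most 4n²(n+1) such that v_n is a law in every finite group Γ with |Γ| ≤ n²/9. -/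
namespace Stmt3Aux

open FreeGroup List
open scoped commutatorElement

abbrev β := Fin 2 × Bool

def R (a b : β) : Prop := ¬(a.1 = b.1 ∧ a.2 = !b.2)

instance : DecidableRel R := fun a b => by unfold R; infer_instance

lemma reduce_eq_self {l : List β} (h : l.Chain' R) : FreeGroup.reduce l = l := by
  induction l with
  | nil => rfl
  | cons a l ih =>
    cases l with
    | nil => simp [FreeGroup.reduce]
    | cons b l2 =>
      rcases List.isChain_cons_cons.mp h with ⟨hab, htl⟩
      rw [FreeGroup.reduce.cons, ih htl]
      simp only []
      rw [if_neg hab]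

lemma toWord_mk_of_chain {l : List β} (h : l.Chain' R) : (FreeGroup.mk l).toWord = l := by
  rw [FreeGroup.toWord_mk, reduce_eq_self h]

lemma chain'_invRev {l : List β} (h : l.Chain' R) : (FreeGroup.invRev l).Chain' R := by
  show List.IsChain R (FreeGroup.invRev l)
  rw [FreeGroup.invRev, List.isChain_reverse, List.isChain_map]
  refine List.IsChain.imp ?_ h
  rintro ⟨u, s⟩ ⟨v, t⟩ huv
  show R _ _
  unfold R at huv ⊢
  rintro ⟨h1, h2⟩
  rw [Bool.not_not] at h2
  exact huv ⟨h1.symm, h2.symm⟩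

lemma head?_invRev (l : List β) : (FreeGroup.invRev l).head? = l.getLast?.map (fun p => (p.1, !p.2)) := by
  rw [FreeGroup.invRev, List.head?_reverse, List.getLast?_map]

lemma getLast?_invRev (l : List β) : (FreeGroup.invRev l).getLast? = l.head?.map (fun p => (p.1, !p.2)) := by
  rw [FreeGroup.invRev, List.getLast?_reverse, List.head?_map]

lemma R_of_snd_eq {u v : Fin 2} {s : Bool} : R (u, s) (v, s) := by
  unfold R; rintro ⟨-, h⟩; exact (Bool.eq_not_self _).mp h

lemma R_of_fst_ne {u v : Fin 2} {s t : Bool} (h : u ≠ v) : R (u, s) (v, t) := by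
  unfold R; rintro ⟨h1, -⟩; exact h h1

def Xp : β := (0, true)
def Xm : β := (0, false)
def Yp : β := (1, true)
def Ym : β := (1, false)

def w1 (a : ℕ) : List β := replicate a Xp ++ ([Yp] ++ (replicate a Xm ++ [Ym]))
def w2 (b : ℕ) : List β := Xp :: (replicate b Yp ++ ([Xm] ++ replicate b Ym))
def baseL (k j : ℕ) : List β := if j < k then w1 (j + 1) else w2 (min (j - k) (k - 1) + 1)

lemma R_self (x : β) : R x x := by
  unfold R; rintro ⟨-, h⟩; exact (Bool.eq_not_self _).mp h

lemma head?_replicate_succ (n : ℕ) (x : β) : (replicate (n+1) x).head? = some x := by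
  rw [List.replicate_succ]; rfl

lemma getLast?_replicate_succ (n : ℕ) (x : β) : (replicate (n+1) x).getLast? = some x := by
  rw [List.replicate_succ', List.getLast?_concat]

lemma chain'_w1 (a : ℕ) : (w1 (a+1)).Chain' R := by
  unfold w1
  refine List.isChain_append.mpr ⟨isChain_replicate_of_rel _ (R_self _), ?_, ?_⟩
  · refine List.isChain_append.mpr ⟨List.isChain_singleton _, ?_, ?_⟩
    · refine List.isChain_append.mpr ⟨isChain_replicate_of_rel _ (R_self _), List.isChain_singleton _, ?_⟩
      · intro x hx y hy
        rw [getLast?_replicate_succ] at hx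
        simp only [List.head?_cons, Option.mem_def, Option.some.injEq] at hx hy
        subst hx; subst hy; decide
    · intro x hx y hy
      simp only [List.getLast?_singleton, Option.mem_def, Option.some.injEq] at hx
      rw [List.head?_append_of_ne_nil _ (by simp), head?_replicate_succ] at hy
      simp only [Option.mem_def, Option.some.injEq] at hy
      subst hx; subst hy; decide
  · intro x hx y hy
    rw [getLast?_replicate_succ] at hx
    simp only [Option.mem_def, Option.some.injEq] at hx
    rw [List.head?_append_of_ne_nil _ (by simp)] at hy
    simp only [List.head?_cons, Option.mem_def, Option.some.injEq] at hy
    subst hx; subst hy; decide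

lemma chain'_w2 (b : ℕ) : (w2 (b+1)).Chain' R := by
  unfold w2
  refine List.isChain_cons.mpr ⟨?_, ?_⟩
  · intro y hy
    rw [List.head?_append_of_ne_nil _ (by simp), head?_replicate_succ] at hy
    simp only [Option.mem_def, Option.some.injEq] at hy
    subst hy; decide
  · refine List.isChain_append.mpr ⟨isChain_replicate_of_rel _ (R_self _), ?_, ?_⟩
    · refine List.isChain_append.mpr ⟨List.isChain_singleton _, isChain_replicate_of_rel _ (R_self _), ?_⟩
      · intro x hx y hy
        simp only [List.getLast?_singleton, Option.mem_def, Option.some.injEq] at hx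
        rw [head?_replicate_succ] at hy
        simp only [Option.mem_def, Option.some.injEq] at hy
        subst hx; subst hy; decide
    · intro x hx y hy
      rw [getLast?_replicate_succ] at hx
      simp only [Option.mem_def, Option.some.injEq] at hx
      rw [List.head?_append_of_ne_nil _ (by simp)] at hy
      simp only [List.head?_cons, Option.mem_def, Option.some.injEq] at hy
      subst hx; subst hy; decide

lemma head?_w1 (a : ℕ) : (w1 (a+1)).head? = some Xp := by
  unfold w1
  rw [List.head?_append_of_ne_nil _ (by simp), head?_replicate_succ]

lemma head?_w2 (b : ℕ) : (w2 (b+1)).head? = some Xp := rfl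

lemma getLast?_w1 (a : ℕ) : (w1 (a+1)).getLast? = some Ym := by
  unfold w1
  rw [List.getLast?_append_of_ne_nil _ (by simp),
      List.getLast?_append_of_ne_nil _ (by simp), List.getLast?_concat]

lemma getLast?_w2 (b : ℕ) : (w2 (b+1)).getLast? = some Ym := by
  have h : w2 (b+1) = (Xp :: (replicate (b+1) Yp ++ [Xm])) ++ replicate (b+1) Ym := by
    simp [w2]
  rw [h, List.getLast?_append_of_ne_nil _ (by simp), getLast?_replicate_succ]


lemma chain'_baseL {k j : ℕ} : (baseL k j).Chain' R := by
  unfold baseL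
  split
  · exact chain'_w1 _
  · exact chain'_w2 _

lemma head?_baseL {k j : ℕ} : (baseL k j).head? = some Xp := by
  unfold baseL; split
  · exact head?_w1 _
  · exact head?_w2 _

lemma getLast?_baseL {k j : ℕ} : (baseL k j).getLast? = some Ym := by
  unfold baseL; split
  · exact getLast?_w1 _
  · exact getLast?_w2 _

lemma length_w1 (a : ℕ) : (w1 a).length = 2*a + 2 := by simp [w1]; ring
lemma length_w2 (b : ℕ) : (w2 b).length = 2*b + 2 := by simp [w2]; ring

lemma length_baseL {k j : ℕ} (hk : 1 ≤ k) : (baseL k j).length ≤ 2*k + 2 := by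
  unfold baseL; split
  · rw [length_w1]; omega
  · rw [length_w2]
    have : min (j - k) (k-1) ≤ k - 1 := min_le_right _ _
    omega


lemma baseL_ne_nil {k j : ℕ} : baseL k j ≠ [] := by
  intro h
  have := head?_baseL (k := k) (j := j)
  rw [h] at this
  simp at this

lemma invRev_ne_nil {l : List β} (h : l ≠ []) : FreeGroup.invRev l ≠ [] := by
  intro h0
  apply h
  have := congrArg List.length h0
  rw [FreeGroup.invRev_length] at this
  exact List.length_eq_zero_iff.mp this

lemma ne_nil_append_right {l₁ l₂ : List β} (h : l₂ ≠ []) : l₁ ++ l₂ ≠ [] :=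
  fun h0 => h (List.append_eq_nil_iff.mp h0).2

lemma getLast?_cons_of_ne_nil (a : β) {l : List β} (h : l ≠ []) : (a :: l).getLast? = l.getLast? := by
  rw [show (a :: l) = [a] ++ l from rfl, List.getLast?_append_of_ne_nil _ h]

def treeL (k : ℕ) : ℕ → Fin 2 → ℕ → List β
  | 0, t, j => ((t, true) :: baseL k j) ++ [(t, false)]
  | d+1, t, j =>
    ((t, true) :: (treeL k d 0 (2*j) ++ (treeL k d 1 (2*j+1) ++
      (FreeGroup.invRev (treeL k d 0 (2*j)) ++ FreeGroup.invRev (treeL k d 1 (2*j+1)))))) ++ [(t, false)]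

lemma head?_treeL (k d : ℕ) (t : Fin 2) (j : ℕ) : (treeL k d t j).head? = some (t, true) := by
  cases d <;> rfl

lemma getLast?_treeL (k d : ℕ) (t : Fin 2) (j : ℕ) : (treeL k d t j).getLast? = some (t, false) := by
  cases d <;> (unfold treeL; rw [List.getLast?_concat])

lemma treeL_ne_nil (k d : ℕ) (t : Fin 2) (j : ℕ) : treeL k d t j ≠ [] := by
  intro h
  have := head?_treeL k d t j
  rw [h] at this
  simp at this

lemma chain'_treeL (k : ℕ) : ∀ (d : ℕ) (t : Fin 2) (j : ℕ), (treeL k d t j).Chain' R := by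
  intro d
  induction d with
  | zero =>
    intro t j
    unfold treeL
    refine List.isChain_append.mpr ⟨?_, List.isChain_singleton _, ?_⟩
    · refine List.isChain_cons.mpr ⟨?_, chain'_baseL⟩
      intro y hy
      rw [head?_baseL] at hy
      simp only [Option.mem_def, Option.some.injEq] at hy
      subst hy; exact R_of_snd_eq
    · intro x hx y hy
      rw [getLast?_cons_of_ne_nil _ baseL_ne_nil, getLast?_baseL] at hx
      simp only [Option.mem_def, Option.some.injEq, List.head?_cons] at hx hy
      subst hx; subst hy; exact R_of_snd_eq
  | succ d ih =>
    intro t j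
    unfold treeL
    set A := treeL k d 0 (2*j) with hA
    set B := treeL k d 1 (2*j+1) with hB
    refine List.isChain_append.mpr ⟨?_, List.isChain_singleton _, ?_⟩
    · refine List.isChain_cons.mpr ⟨?_, ?_⟩
      · intro y hy
        rw [List.head?_append_of_ne_nil _ (treeL_ne_nil _ _ _ _), head?_treeL] at hy
        simp only [Option.mem_def, Option.some.injEq] at hy
        subst hy; exact R_of_snd_eq
      · refine List.isChain_append.mpr ⟨ih _ _, ?_, ?_⟩
        · refine List.isChain_append.mpr ⟨ih _ _, ?_, ?_⟩
          · refine List.isChain_append.mpr ⟨chain'_invRev (ih _ _), chain'_invRev (ih _ _), ?_⟩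
            · intro x hx y hy
              rw [getLast?_invRev, head?_treeL] at hx
              rw [head?_invRev, getLast?_treeL] at hy
              simp only [Option.mem_def, Option.map_some, Option.some.injEq] at hx hy
              subst hx; subst hy
              exact R_of_fst_ne (by decide)
          · intro x hx y hy
            rw [getLast?_treeL] at hx
            rw [List.head?_append_of_ne_nil _ (invRev_ne_nil (treeL_ne_nil _ _ _ _)),
                head?_invRev, getLast?_treeL] at hy
            simp only [Option.mem_def, Option.map_some, Option.some.injEq] at hx hy
            subst hx; subst hy
            exact R_of_fst_ne (by decide)
        · intro x hx y hy
          rw [getLast?_treeL] at hx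
          rw [List.head?_append_of_ne_nil _ (treeL_ne_nil _ _ _ _), head?_treeL] at hy
          simp only [Option.mem_def, Option.some.injEq] at hx hy
          subst hx; subst hy
          exact R_of_fst_ne (by decide)
    · intro x hx y hy
      have h1 : FreeGroup.invRev B ≠ [] := invRev_ne_nil (treeL_ne_nil _ _ _ _)
      rw [getLast?_cons_of_ne_nil _ (ne_nil_append_right (ne_nil_append_right (ne_nil_append_right h1))),
          List.getLast?_append_of_ne_nil _ (ne_nil_append_right (ne_nil_append_right h1)),
          List.getLast?_append_of_ne_nil _ (ne_nil_append_right h1),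
          List.getLast?_append_of_ne_nil _ h1,
          getLast?_invRev, head?_treeL] at hx
      simp only [Option.mem_def, Option.map_some, Option.some.injEq, List.head?_cons] at hx hy
      subst hx; subst hy; exact R_of_snd_eq

lemma length_treeL {k : ℕ} (hk : 1 ≤ k) : ∀ (d : ℕ) (t : Fin 2) (j : ℕ),
    (treeL k d t j).length ≤ 4^d * (2*k+5) - 1 := by
  intro d
  induction d with
  | zero =>
    intro t j
    unfold treeL
    have := length_baseL (k := k) (j := j) hk
    rw [pow_zero, one_mul]
    simp only [List.length_append, List.length_cons, List.length_nil]
    omega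
  | succ d ih =>
    intro t j
    unfold treeL
    have hA := ih 0 (2*j)
    have hB := ih 1 (2*j+1)
    have h4 : 1 ≤ 4^d := Nat.one_le_pow _ _ (by norm_num)
    simp only [List.length_append, List.length_cons, List.length_nil, FreeGroup.invRev_length]
    have h5 : 4^(d+1) * (2*k+5) = 4 * (4^d * (2*k+5)) := by ring
    rw [h5]
    have hm1 : 1 ≤ 4^d * (2*k+5) := Nat.one_le_iff_ne_zero.mpr (by positivity)
    generalize 4^d * (2*k+5) = m at hA hB hm1 ⊢
    omega

lemma mk_singleton_true (t : Fin 2) : FreeGroup.mk [(t, true)] = FreeGroup.of t := rfl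

lemma mk_singleton_false (t : Fin 2) : FreeGroup.mk [(t, false)] = (FreeGroup.of t)⁻¹ := by
  rw [show FreeGroup.of t = FreeGroup.mk [(t, true)] from rfl, FreeGroup.inv_mk]
  congr 1

lemma mk_replicate_true (i : Fin 2) (a : ℕ) :
    FreeGroup.mk (replicate a (i, true)) = (FreeGroup.of i)^a := by
  induction a with
  | zero => simp [FreeGroup.one_eq_mk]
  | succ a ih =>
    rw [List.replicate_succ, show ((i,true) :: replicate a (i,true)) = [(i,true)] ++ replicate a (i,true) from rfl,
      ← FreeGroup.mul_mk, ih, mk_singleton_true, pow_succ']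

lemma mk_replicate_false (i : Fin 2) (a : ℕ) :
    FreeGroup.mk (replicate a (i, false)) = ((FreeGroup.of i)^a)⁻¹ := by
  have h : replicate a (i, false) = FreeGroup.invRev (replicate a (i, true)) := by
    simp [FreeGroup.invRev, List.reverse_replicate]
  rw [h, ← FreeGroup.inv_mk, mk_replicate_true]

lemma mk_w1 (a : ℕ) : FreeGroup.mk (w1 a) = ⁅(FreeGroup.of (0 : Fin 2))^a, FreeGroup.of (1 : Fin 2)⁆ := by
  unfold w1
  rw [← FreeGroup.mul_mk, ← FreeGroup.mul_mk, ← FreeGroup.mul_mk]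
  rw [show Xp = ((0 : Fin 2), true) from rfl, show Xm = ((0 : Fin 2), false) from rfl,
      show Yp = ((1 : Fin 2), true) from rfl, show Ym = ((1 : Fin 2), false) from rfl]
  rw [mk_replicate_true, mk_replicate_false, mk_singleton_true, mk_singleton_false]
  rw [commutatorElement_def]
  group

lemma mk_w2 (b : ℕ) : FreeGroup.mk (w2 b) = ⁅FreeGroup.of (0 : Fin 2), (FreeGroup.of (1 : Fin 2))^b⁆ := by
  unfold w2
  rw [show (Xp :: (replicate b Yp ++ ([Xm] ++ replicate b Ym))) =
    [Xp] ++ (replicate b Yp ++ ([Xm] ++ replicate b Ym)) from rfl]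
  rw [← FreeGroup.mul_mk, ← FreeGroup.mul_mk, ← FreeGroup.mul_mk]
  rw [show Xp = ((0 : Fin 2), true) from rfl, show Xm = ((0 : Fin 2), false) from rfl,
      show Yp = ((1 : Fin 2), true) from rfl, show Ym = ((1 : Fin 2), false) from rfl]
  rw [mk_replicate_true, mk_replicate_false, mk_singleton_true, mk_singleton_false]
  rw [commutatorElement_def]
  group

section Law

variable {Γ : Type} [Group Γ] (φ : FreeGroup (Fin 2) →* Γ)

lemma phi_mk_invRev (l : List β) : φ (FreeGroup.mk (FreeGroup.invRev l)) = (φ (FreeGroup.mk l))⁻¹ := by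
  rw [← FreeGroup.inv_mk]
  exact _root_.map_inv φ _

lemma law_treeL (k : ℕ) : ∀ (d : ℕ) (t : Fin 2) (j : ℕ),
    (∃ i, 2^d * j ≤ i ∧ i < 2^d * (j+1) ∧ φ (FreeGroup.mk (baseL k i)) = 1) →
    φ (FreeGroup.mk (treeL k d t j)) = 1 := by
  intro d
  induction d with
  | zero =>
    intro t j ⟨i, h1, h2, h3⟩
    rw [pow_zero, one_mul] at h1 h2
    have hij : i = j := by omega
    subst hij
    unfold treeL
    rw [show ((t, true) :: baseL k i) ++ [(t, false)] =
      [(t,true)] ++ (baseL k i ++ [(t,false)]) by simp]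
    rw [← FreeGroup.mul_mk, ← FreeGroup.mul_mk, mk_singleton_true, mk_singleton_false]
    simp only [_root_.map_mul, _root_.map_inv, h3, one_mul, mul_one]
    group
  | succ d ih =>
    intro t j ⟨i, h1, h2, h3⟩
    unfold treeL
    rw [show ((t, true) :: (treeL k d 0 (2*j) ++ (treeL k d 1 (2*j+1) ++
        (FreeGroup.invRev (treeL k d 0 (2*j)) ++ FreeGroup.invRev (treeL k d 1 (2*j+1)))))) ++ [(t, false)] =
      [(t,true)] ++ (treeL k d 0 (2*j) ++ (treeL k d 1 (2*j+1) ++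
        (FreeGroup.invRev (treeL k d 0 (2*j)) ++ (FreeGroup.invRev (treeL k d 1 (2*j+1)) ++ [(t,false)])))) by simp]
    rw [← FreeGroup.mul_mk, ← FreeGroup.mul_mk, ← FreeGroup.mul_mk, ← FreeGroup.mul_mk,
        ← FreeGroup.mul_mk, mk_singleton_true, mk_singleton_false]
    by_cases hc : i < 2^d * (2*j+1)
    · have hA : φ (FreeGroup.mk (treeL k d 0 (2*j))) = 1 := by
        refine ih 0 (2*j) ⟨i, ?_, hc, h3⟩
        calc 2^d * (2*j) = 2^(d+1) * j := by ring
        _ ≤ i := h1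
      simp only [_root_.map_mul, _root_.map_inv, phi_mk_invRev, hA, inv_one, one_mul, mul_one]
      group
    · have hB : φ (FreeGroup.mk (treeL k d 1 (2*j+1))) = 1 := by
        refine ih 1 (2*j+1) ⟨i, by omega, ?_, h3⟩
        calc i < 2^(d+1) * (j+1) := h2
        _ = 2^d * (2*j+1+1) := by ring
      simp only [_root_.map_mul, _root_.map_inv, phi_mk_invRev, hB, inv_one, one_mul, mul_one]
      group

lemma kill_w1 {a k : ℕ} (ha1 : 1 ≤ a) (hak : a ≤ k)
    (hcomm : Commute ((φ (FreeGroup.of 0))^a) (φ (FreeGroup.of 1))) :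
    ∃ i, i < 2*k ∧ φ (FreeGroup.mk (baseL k i)) = 1 := by
  refine ⟨a - 1, by omega, ?_⟩
  have hb : baseL k (a-1) = w1 a := by
    unfold baseL
    rw [if_pos (by omega : a - 1 < k)]
    congr 1
    omega
  rw [hb, mk_w1, map_commutatorElement]
  rw [map_pow]
  exact commutatorElement_eq_one_iff_commute.mpr hcomm

lemma kill_w2 {b k : ℕ} (hb1 : 1 ≤ b) (hbk : b ≤ k)
    (hp : (φ (FreeGroup.of 1))^b = 1) :
    ∃ i, i < 2*k ∧ φ (FreeGroup.mk (baseL k i)) = 1 := by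
  refine ⟨k + (b - 1), by omega, ?_⟩
  have hb : baseL k (k + (b-1)) = w2 b := by
    unfold baseL
    rw [if_neg (by omega : ¬ (k + (b-1) < k))]
    congr 1
    have h1 : k + (b-1) - k = b - 1 := by omega
    rw [h1, min_eq_left (by omega : b - 1 ≤ k - 1)]
    omega
  rw [hb, mk_w2, map_commutatorElement, map_pow, hp]
  simp

lemma exists_killed [Finite Γ] {k : ℕ} (hk : 1 ≤ k)
    (hcard : Nat.card Γ < (k+1)^2) :
    ∃ i, i < 2*k ∧ φ (FreeGroup.mk (baseL k i)) = 1 := by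
  classical
  cases nonempty_fintype Γ
  set g := φ (FreeGroup.of 0) with hg
  set h := φ (FreeGroup.of 1) with hh
  have hcard' : Fintype.card Γ < Fintype.card (Fin (k+1) × Fin (k+1)) := by
    rw [Fintype.card_prod, Fintype.card_fin, ← Nat.card_eq_fintype_card]
    calc Nat.card Γ < (k+1)^2 := hcard
    _ = (k+1) * (k+1) := sq (k+1) ▸ by ring
  obtain ⟨p, q, hne, heq⟩ := Fintype.exists_ne_map_eq_of_card_lt
    (fun p : Fin (k+1) × Fin (k+1) => g ^ (p.1 : ℕ) * h ^ (p.2 : ℕ)) hcard'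
  -- helper for the commuting case
  have main : ∀ (i i' j j' : ℕ), i ≤ k → i' ≤ k → j ≤ k → j' ≤ k → i' < i →
      g ^ i * h ^ j = g ^ i' * h ^ j' →
      ∃ i, i < 2*k ∧ φ (FreeGroup.mk (baseL k i)) = 1 := by
    intro i i' j j' hi hi' hj hj' hlt heq'
    have hpow : g ^ i = g ^ i' * g ^ (i - i') := by
      rw [← pow_add]
      congr 1
      omega
    have h2 : g ^ (i - i') * h ^ j = h ^ j' := by
      apply mul_left_cancel (a := g ^ i')
      rw [← mul_assoc, ← hpow, heq']
    have h3 : g ^ (i - i') = h ^ j' * (h ^ j)⁻¹ := by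
      rw [← h2]
      group
    have hcomm : Commute (g ^ (i - i')) h := by
      rw [h3]
      exact Commute.mul_left ((Commute.refl h).pow_left j') (((Commute.refl h).pow_left j).inv_left)
    exact kill_w1 φ (by omega) (by omega) hcomm
  -- helper for the torsion case
  have tors : ∀ (j j' : ℕ), j ≤ k → j' ≤ k → j' < j → h ^ j = h ^ j' →
      ∃ i, i < 2*k ∧ φ (FreeGroup.mk (baseL k i)) = 1 := by
    intro j j' hj hj' hlt heq'
    have hp : h ^ (j - j') = 1 := by
      apply mul_left_cancel (a := h ^ j')
      rw [← pow_add, mul_one]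
      rw [← heq']
      congr 1
      omega
    exact kill_w2 φ (by omega) (by omega) hp
  rcases Nat.lt_trichotomy (p.1 : ℕ) (q.1 : ℕ) with hlt | heqi | hgt
  · exact main q.1 p.1 q.2 p.2 (Nat.lt_succ_iff.mp q.1.isLt) (Nat.lt_succ_iff.mp p.1.isLt)
      (Nat.lt_succ_iff.mp q.2.isLt) (Nat.lt_succ_iff.mp p.2.isLt) hlt heq.symm
  · -- equal first coordinates
    have hji : h ^ (p.2 : ℕ) = h ^ (q.2 : ℕ) := by
      apply mul_left_cancel (a := g ^ (p.1 : ℕ))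
      rw [heq]
      congr 2
      omega
    have hjne : (p.2 : ℕ) ≠ (q.2 : ℕ) := by
      intro hcon
      apply hne
      apply Prod.ext
      · exact Fin.ext heqi
      · exact Fin.ext hcon
    rcases Nat.lt_trichotomy (p.2 : ℕ) (q.2 : ℕ) with h2 | h2 | h2
    · exact tors q.2 p.2 (Nat.lt_succ_iff.mp q.2.isLt) (Nat.lt_succ_iff.mp p.2.isLt) h2 hji.symm
    · exact absurd h2 hjne
    · exact tors p.2 q.2 (Nat.lt_succ_iff.mp p.2.isLt) (Nat.lt_succ_iff.mp q.2.isLt) h2 hji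
  · exact main p.1 q.1 p.2 q.2 (Nat.lt_succ_iff.mp p.1.isLt) (Nat.lt_succ_iff.mp q.1.isLt)
      (Nat.lt_succ_iff.mp p.2.isLt) (Nat.lt_succ_iff.mp q.2.isLt) hgt heq

end Law

lemma arith {n k d : ℕ} (hn : 5 ≤ n) (h1 : n ≤ 3*k) (h2 : 3*k ≤ n+2) (hd : 2^d ≤ 4*k - 1) :
    4^d * (2*k+5) - 1 ≤ 4 * n^2 * (n+1) := by
  have hk2 : 2 ≤ k := by omega
  have h4d : 4^d ≤ (4*k-1) * (4*k-1) := by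
    calc 4^d = 2^d * 2^d := by rw [← mul_pow]; norm_num
    _ ≤ (4*k-1) * (4*k-1) := Nat.mul_le_mul hd hd
  have hmain : (4*k-1) * (4*k-1) * (2*k+5) ≤ 4 * n^2 * (n+1) := by
    rcases eq_or_lt_of_le hk2 with hk | hk
    · -- k = 2
      have hk' : k = 2 := hk.symm
      subst hk'
      have h25 : 25 ≤ n^2 := by nlinarith
      nlinarith
    · -- k ≥ 3
      obtain ⟨m, rfl⟩ : ∃ m, k = m + 3 := ⟨k - 3, by omega⟩
      have e0 : 4*(m+3) - 1 = 4*m + 11 := by omega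
      have e0' : 2*(m+3) + 5 = 2*m + 11 := by omega
      rw [e0, e0']
      have hn3 : 3*m + 7 ≤ n := by omega
      have e1 : (3*m+7)^2 ≤ n^2 := Nat.pow_le_pow_left hn3 2
      have e2 : 3*m+8 ≤ n+1 := by omega
      calc (4*m+11) * (4*m+11) * (2*m+11) ≤ 4 * (3*m+7)^2 * (3*m+8) := by nlinarith [sq_nonneg m, Nat.zero_le m]
      _ ≤ 4 * n^2 * (n+1) := Nat.mul_le_mul (Nat.mul_le_mul_left 4 e1) e2
  calc 4^d * (2*k+5) - 1 ≤ (4*k-1) * (4*k-1) * (2*k+5) := by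
        exact le_trans (Nat.sub_le _ _) (Nat.mul_le_mul_right _ h4d)
  _ ≤ 4 * n^2 * (n+1) := hmain

end Stmt3Aux


/-- For every positive integer `n` there is a nontrivial word `v` in the free group on two
generators of word length at most `4n²(n+1)` which is a law in every finite group of
order at most `n²/9`. -/
theorem stmt_3 (n : ℕ) (hn : 0 < n) :
    ∃ v : FreeGroup (Fin 2), v ≠ 1 ∧
      (FreeGroup.toWord v).length ≤ 4 * n ^ 2 * (n + 1) ∧
      ∀ (Γ : Type) (_ : Group Γ) (_ : Finite Γ),
        (Nat.card Γ : ℝ) ≤ (n : ℝ) ^ 2 / 9 →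
        ∀ φ : FreeGroup (Fin 2) →* Γ, φ v = 1 := by
  by_cases hsmall : n < 5
  · refine ⟨FreeGroup.of 0, ?_, ?_, ?_⟩
    · intro h
      have := congrArg FreeGroup.toWord h
      rw [FreeGroup.toWord_of, FreeGroup.toWord_one] at this
      simp at this
    · rw [FreeGroup.toWord_of]
      have h1 : 1 ≤ 4 * n ^ 2 * (n+1) := Nat.one_le_iff_ne_zero.mpr (by positivity)
      simpa using h1
    · intro Γ _ _ hcard φ
      have h1 : Nat.card Γ ≤ 1 := by
        by_contra hcon
        push_neg at hcon
        have h2 : (2:ℝ) ≤ (Nat.card Γ : ℝ) := by exact_mod_cast hcon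
        have h3 : (n:ℝ) ≤ 4 := by exact_mod_cast (by omega : n ≤ 4)
        have h0 : (0:ℝ) ≤ (n:ℝ) := Nat.cast_nonneg n
        nlinarith [hcard]
      have : Subsingleton Γ := Finite.card_le_one_iff_subsingleton.mp h1
      exact Subsingleton.elim _ _
  · push_neg at hsmall
    set k := (n+2)/3 with hk
    have hk1 : 1 ≤ k := by omega
    have h3k : n ≤ 3*k := by omega
    have h3k' : 3*k ≤ n+2 := by omega
    set d := Nat.clog 2 (2*k) with hd
    have hcov : 2*k ≤ 2^d := Nat.le_pow_clog (by norm_num) _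
    have hdlt : 2^d ≤ 4*k - 1 := by
      have h2 : 1 < 2*k := by omega
      have h3 := Nat.pow_pred_clog_lt_self (b := 2) (by norm_num) h2
      have hd1 : 1 ≤ d := by
        by_contra hd0
        push_neg at hd0
        have hzero : d = 0 := by omega
        rw [hzero, pow_zero] at hcov
        omega
      have hds : d - 1 + 1 = d := by omega
      have h4 : 2^d = 2 * 2^(d-1) := by
        conv_lhs => rw [← hds]
        rw [pow_succ']
      rw [← hd, Nat.pred_eq_sub_one] at h3
      omega
    refine ⟨FreeGroup.mk (Stmt3Aux.treeL k d 0 0), ?_, ?_, ?_⟩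
    · intro hcon
      have h5 := Stmt3Aux.toWord_mk_of_chain (Stmt3Aux.chain'_treeL k d 0 0)
      rw [hcon, FreeGroup.toWord_one] at h5
      exact Stmt3Aux.treeL_ne_nil k d 0 0 h5.symm
    · rw [Stmt3Aux.toWord_mk_of_chain (Stmt3Aux.chain'_treeL k d 0 0)]
      exact le_trans (Stmt3Aux.length_treeL hk1 d 0 0) (Stmt3Aux.arith hsmall h3k h3k' hdlt)
    · intro Γ _ _ hcard φ
      have hlt : Nat.card Γ < (k+1)^2 := by
      -- real-number comparison
        have h1 : (n:ℝ) ≤ 3*(k:ℝ) := by exact_mod_cast h3k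
        have h0 : (0:ℝ) ≤ (k:ℝ) := Nat.cast_nonneg k
        have h2 : (Nat.card Γ : ℝ) < ((k:ℝ)+1)^2 := by nlinarith [hcard]
        have h2' : (Nat.card Γ : ℝ) < (((k+1)^2 : ℕ) : ℝ) := by push_cast; convert h2 using 2
        exact_mod_cast h2'
      obtain ⟨i, hi2k, hkill⟩ := Stmt3Aux.exists_killed φ hk1 hlt
      refine Stmt3Aux.law_treeL φ k d 0 0 ⟨i, by omega, ?_, hkill⟩
      have : 2^d * (0+1) = 2^d := by ring
      rw [this]
      omega
end

section
/- There exists a constant C > 0 (depending only on k) such that for every integer n ≥ 2 and every nonzero element v ∈ ℤ^k with Σ_{i=1}^{k} |v_i| ≤ n, there exists a finite group H with |H| ≤ C·log n and a group homomorphism φ : ℤ^k → H with φ(v) ≠ 1. (This is the upper bound F_{ℤ^k}(n) ≼ log n.) -/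
private lemma aux_centralBinom_dvd {V m : ℕ} (hV : V ≠ 0)
    (h : ∀ j, 0 < j → j ≤ 2 * m → j ∣ V) : Nat.centralBinom m ∣ V := by
  rw [← Nat.factorization_le_iff_dvd (Nat.centralBinom_ne_zero m) hV]
  intro p
  rcases Nat.eq_zero_or_pos m with rfl | hm
  · simp [Nat.centralBinom]
  by_cases hp : p.Prime
  · have h1 : p ^ ((Nat.centralBinom m).factorization p) ≤ 2 * m := by
      rw [Nat.centralBinom_eq_two_mul_choose]
      exact Nat.pow_factorization_choose_le (by omega)
    have h2 : p ^ ((Nat.centralBinom m).factorization p) ∣ V :=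
      h _ (Nat.pow_pos hp.pos) h1
    exact (hp.pow_dvd_iff_le_factorization hV).mp h2
  · simp [Nat.factorization_eq_zero_of_not_prime _ hp]

private lemma aux_two_pow_le {V n m : ℕ} (hV : V ≠ 0) (hVn : V ≤ n) (hm : 3 ≤ m)
    (h : ∀ j, 0 < j → j ≤ 2 * m → j ∣ V) : 2 ^ m ≤ n := by
  have h1 : Nat.centralBinom m ∣ V := aux_centralBinom_dvd hV h
  have h2 : 4 ^ m ≤ 2 * m * Nat.centralBinom m :=
    Nat.four_pow_le_two_mul_self_mul_centralBinom m (by omega)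
  have h3 : Nat.centralBinom m ≤ n := (Nat.le_of_dvd (Nat.pos_of_ne_zero hV) h1).trans hVn
  have h4 : 2 * m ≤ 2 ^ m := by
    have h5 : m - 1 < 2 ^ (m - 1) := Nat.lt_two_pow_self
    have h6 : m ≤ 2 ^ (m - 1) := by omega
    calc 2 * m ≤ 2 * 2 ^ (m - 1) := by omega
    _ = 2 ^ (m - 1 + 1) := by ring
    _ = 2 ^ m := by congr 1; omega
  have key : 2 ^ m * 2 ^ m ≤ 2 ^ m * n := by
    calc 2 ^ m * 2 ^ m = 4 ^ m := by rw [← mul_pow]; norm_num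
    _ ≤ 2 * m * Nat.centralBinom m := h2
    _ ≤ 2 ^ m * n := Nat.mul_le_mul h4 h3
  exact Nat.le_of_mul_le_mul_left key (Nat.pow_pos (n := m) (by norm_num))

/-- There is a constant `C > 0`, depending only on `k`, such that every nonzero
`v ∈ ℤᵏ` with `∑ |vᵢ| ≤ n` (where `n ≥ 2`) is detected by a homomorphism to a finite
group of order at most `C·log n`.  (The upper bound `F_{ℤᵏ}(n) ≼ log n`.) -/
theorem stmt_7 (k : ℕ) :
    ∃ C : ℝ, 0 < C ∧
      ∀ n : ℕ, 2 ≤ n → ∀ v : Fin k → ℤ, v ≠ 0 → (∑ i, |v i|) ≤ (n : ℤ) →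
        ∃ (H : Type) (_ : AddGroup H) (_ : Finite H),
          (Nat.card H : ℝ) ≤ C * Real.log n ∧
          ∃ φ : (Fin k → ℤ) →+ H, φ v ≠ 0 := by
  have hlog2 : (0:ℝ) < Real.log 2 := Real.log_pos (by norm_num)
  refine ⟨10 / Real.log 2, div_pos (by norm_num) hlog2, ?_⟩
  intro n hn v hv hsum
  obtain ⟨i, hi⟩ : ∃ i, v i ≠ 0 := by
    by_contra h; push_neg at h; exact hv (funext h)
  set V := (v i).natAbs with hVdef
  have hV0 : V ≠ 0 := Int.natAbs_ne_zero.mpr hi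
  have hVn : V ≤ n := by
    have h1 : |v i| ≤ ∑ j, |v j| :=
      Finset.single_le_sum (fun j _ => abs_nonneg (v j)) (Finset.mem_univ i)
    have h2 : ((V : ℤ)) ≤ (n : ℤ) := by
      rw [hVdef, ← Int.abs_eq_natAbs]; exact h1.trans hsum
    exact_mod_cast h2
  have hex : ∃ d, 0 < d ∧ ¬ d ∣ V := by
    refine ⟨V + 1, by omega, fun h => ?_⟩
    have := Nat.le_of_dvd (Nat.pos_of_ne_zero hV0) h
    omega
  set d := Nat.find hex with hddef
  obtain ⟨hdpos, hd⟩ : 0 < d ∧ ¬ d ∣ V := Nat.find_spec hex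
  have hmin : ∀ j, 0 < j → j < d → j ∣ V := by
    intro j hj hjd
    have := Nat.find_min hex hjd
    push_neg at this
    exact this hj
  have hd2 : 2 ≤ d := by
    have h1 : d ≠ 1 := fun h => hd (h ▸ one_dvd V)
    omega
  -- key bound : (d : ℝ) * log 2 ≤ 10 * log n
  have hlogn : Real.log 2 ≤ Real.log n :=
    Real.log_le_log (by norm_num) (by exact_mod_cast hn)
  have hlogn0 : 0 < Real.log n := lt_of_lt_of_le hlog2 hlogn
  have hbound : (d : ℝ) * Real.log 2 ≤ 10 * Real.log n := by
    rcases Nat.lt_or_ge d 8 with h8 | h8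
    · have : (d : ℝ) ≤ 7 := by exact_mod_cast Nat.lt_succ_iff.mp h8
      nlinarith
    · set m := (d - 1) / 2 with hmdef
      have hm3 : 3 ≤ m := by omega
      have h2m : 2 * m ≤ d - 1 := by omega
      have hpow : 2 ^ m ≤ n :=
        aux_two_pow_le hV0 hVn hm3 (fun j hj hjm => hmin j hj (by omega))
      have hpowR : ((2:ℝ)) ^ m ≤ (n : ℝ) := by exact_mod_cast hpow
      have hmlog : (m : ℝ) * Real.log 2 ≤ Real.log n := by
        have := Real.log_le_log (by positivity) hpowR
        rwa [Real.log_pow] at this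
      have hdm : (d : ℝ) ≤ 2 * m + 2 := by
        have : d ≤ 2 * m + 2 := by omega
        exact_mod_cast this
      nlinarith
  haveI : NeZero d := ⟨by omega⟩
  refine ⟨ZMod d, inferInstance, inferInstance, ?_, ?_⟩
  · rw [Nat.card_zmod, div_mul_eq_mul_div, le_div_iff₀ hlog2]
    exact hbound
  · refine ⟨(Int.castAddHom (ZMod d)).comp (Pi.evalAddMonoidHom (fun _ : Fin k => ℤ) i), ?_⟩
    simp only [AddMonoidHom.comp_apply, Pi.evalAddMonoidHom_apply, Int.coe_castAddHom]
    intro hzero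
    rw [ZMod.intCast_zmod_eq_zero_iff_dvd] at hzero
    exact hd (Int.natCast_dvd_natCast.mp (Int.dvd_natAbs.mpr hzero))
end

section
/- For every positive integer m, let N = lcm(1, 2, …, m) and let v = N·e_1 ∈ ℤ^k (where e_1 is the first standard basis vector). Then v ≠ 0, the ℓ¹-norm of v satisfies Σ|v_i| = N ≤ 4^m, and for every finite group H with |H| ≤ m and every group homomorphism φ : ℤ^k → H one has φ(v) = 1. (This gives the lower bound F_{ℤ^k}(n) ≽ log n.) -/
open Finset

lemma lcm_Icc_ne_zero (m : ℕ) : Finset.lcm (Finset.Icc 1 m) id ≠ 0 := by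
  intro h
  rw [Finset.lcm_eq_zero_iff] at h
  obtain ⟨k, hk, hk0⟩ := h
  simp only [Finset.coe_Icc, Set.mem_Icc, Finset.mem_Icc, id] at hk hk0
  omega

lemma factorization_lcm_sup (S : Finset ℕ) (hS : 0 ∉ S) (p : ℕ) :
    (S.lcm id).factorization p = S.sup fun k => k.factorization p := by
  classical
  induction S using Finset.induction_on with
  | empty => simp
  | @insert a S ha ih =>
    have ha0 : a ≠ 0 := by rintro rfl; exact hS (Finset.mem_insert_self 0 S)
    have hS0 : (0 : ℕ) ∉ S := fun h => hS (Finset.mem_insert_of_mem h)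
    have hlcm0 : S.lcm id ≠ 0 := by
      intro h
      rw [Finset.lcm_eq_zero_iff] at h
      obtain ⟨k, hk, hk0⟩ := h
      simp only [id] at hk0
      subst hk0
      exact hS0 hk
    rw [Finset.lcm_insert, Finset.sup_insert, ← ih hS0]
    have : GCDMonoid.lcm (id a) (S.lcm id) = Nat.lcm a (S.lcm id) := rfl
    rw [this, Nat.factorization_lcm ha0 hlcm0, Finsupp.sup_apply]

lemma factorization_lcm_Icc (m p : ℕ) (hp : p.Prime) :
    (Finset.lcm (Finset.Icc 1 m) id).factorization p = Nat.log p m := by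
  rcases Nat.eq_zero_or_pos m with rfl | hm
  · simp
  rw [factorization_lcm_sup _ (by simp)]
  apply le_antisymm
  · apply Finset.sup_le
    intro k hk
    rw [Finset.mem_Icc] at hk
    have h1 : p ^ k.factorization p ≤ m :=
      le_trans (Nat.ordProj_le p (by omega)) hk.2
    exact (Nat.le_log_iff_pow_le hp.one_lt (by omega)).2 h1
  · by_cases hpm : p ≤ m
    · have hmem : p ^ Nat.log p m ∈ Finset.Icc 1 m := by
        rw [Finset.mem_Icc]
        exact ⟨Nat.one_le_pow _ _ hp.pos, Nat.pow_log_le_self p (by omega)⟩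
      refine le_trans ?_ (Finset.le_sup hmem)
      rw [hp.factorization_pow]
      simp
    · have : Nat.log p m = 0 := Nat.log_eq_zero_iff.2 (Or.inl (by omega))
      simp [this]

lemma key_dvd (m : ℕ) (hm : 2 ≤ m) :
    Finset.lcm (Finset.Icc 1 m) id ∣
      Finset.lcm (Finset.Icc 1 (m - m / 2)) id * Nat.choose m (m / 2) := by
  have h1 := lcm_Icc_ne_zero m
  have h2 := lcm_Icc_ne_zero (m - m / 2)
  have hch : Nat.choose m (m / 2) ≠ 0 := (Nat.choose_pos (Nat.div_le_self _ _)).ne'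
  rw [← Nat.factorization_le_iff_dvd h1 (mul_ne_zero h2 hch), Finsupp.le_def]
  intro p
  by_cases hp : p.Prime
  swap
  · rw [Nat.factorization_eq_zero_of_not_prime _ hp]; exact Nat.zero_le _
  rw [Nat.factorization_mul h2 hch, Finsupp.add_apply,
    factorization_lcm_Icc _ _ hp, factorization_lcm_Icc _ _ hp]
  set n := m / 2 with hn
  set r := m - m / 2 with hr
  have hnr : n ≤ r := by omega
  have hm2r : m ≤ 2 * r := by omega
  set a := Nat.log p m with hA
  set b := Nat.log p r with hB
  by_cases hba : a ≤ b
  · exact le_trans hba (Nat.le_add_right _ _)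
  push_neg at hba
  -- show a = b + 1
  have hpa : p ^ a ≤ m := Nat.pow_log_le_self p (by omega)
  have hrb : r < p ^ (b + 1) := Nat.lt_pow_succ_log_self hp.one_lt r
  have hab : a ≤ b + 1 := by
    by_contra hcon
    push_neg at hcon
    have : p ^ (b + 2) ≤ p ^ a := Nat.pow_le_pow_right hp.pos (by omega)
    have h2p : 2 * p ^ (b + 1) ≤ p ^ (b + 2) := by
      rw [pow_succ]
      calc 2 * p ^ (b + 1) = p ^ (b + 1) * 2 := by ring
        _ ≤ p ^ (b + 1) * p := by
            exact Nat.mul_le_mul_left _ hp.two_le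
    omega
  have haeq : a = b + 1 := by omega
  -- show p divides choose m n
  have hdvd : p ∣ Nat.choose m n := by
    have hrpa : r < p ^ a := by rw [haeq]; exact hrb
    have hmem : a ∈ Finset.filter (fun i => p ^ i ≤ n % p ^ i + (m - n) % p ^ i)
        (Finset.Ico 1 (a + 1)) := by
      rw [Finset.mem_filter, Finset.mem_Ico]
      refine ⟨⟨by omega, by omega⟩, ?_⟩
      have hrn : m - n = r := rfl
      rw [hrn, Nat.mod_eq_of_lt (lt_of_le_of_lt hnr hrpa), Nat.mod_eq_of_lt hrpa]
      omega
    have hcard : 1 ≤ (Finset.filter (fun i => p ^ i ≤ n % p ^ i + (m - n) % p ^ i)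
        (Finset.Ico 1 (a + 1))).card := Finset.card_pos.2 ⟨a, hmem⟩
    have hmul := Nat.Prime.emultiplicity_choose hp (Nat.div_le_self m 2)
      (show Nat.log p m < a + 1 by omega)
    have : (1 : ℕ∞) ≤ emultiplicity p (Nat.choose m n) := by
      rw [hmul]
      exact_mod_cast hcard
    simpa using pow_dvd_of_le_emultiplicity this
  have : 1 ≤ (Nat.choose m n).factorization p :=
    (Nat.Prime.dvd_iff_one_le_factorization hp hch).1 hdvd
  omega

lemma choose_half_le (m : ℕ) : Nat.choose m (m / 2) ≤ 4 ^ (m / 2) := by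
  rcases Nat.even_or_odd m with ⟨t, ht⟩ | ⟨t, ht⟩
  · have h2 : m / 2 = t := by omega
    have hm : m = 2 * t := by omega
    rw [h2, hm]
    calc Nat.choose (2 * t) t ≤ 2 ^ (2 * t) := by
          rw [← Nat.sum_range_choose (2 * t)]
          exact Finset.single_le_sum (f := fun i => Nat.choose (2 * t) i)
            (fun i _ => Nat.zero_le _) (Finset.mem_range.2 (by omega))
      _ = 4 ^ t := by rw [show 4 = 2 ^ 2 by norm_num, ← pow_mul]
  · have h2 : m / 2 = t := by omega
    have hm : m = 2 * t + 1 := by omega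
    rw [h2, hm]
    exact Nat.choose_middle_le_pow t

lemma lcm_Icc_le_four_pow (m : ℕ) : Finset.lcm (Finset.Icc 1 m) id ≤ 4 ^ m := by
  induction m using Nat.strong_induction_on with
  | _ m ih =>
    match m with
    | 0 => simp
    | 1 =>
      have : Finset.Icc 1 1 = {1} := rfl
      rw [this]
      simp
    | (n + 2) =>
      set M := n + 2 with hM
      have h2 : 2 ≤ M := by omega
      have hd := key_dvd M h2
      have hpos : 0 < Finset.lcm (Finset.Icc 1 (M - M / 2)) id * Nat.choose M (M / 2) :=
        Nat.pos_of_ne_zero (mul_ne_zero (lcm_Icc_ne_zero _)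
          (Nat.choose_pos (Nat.div_le_self _ _)).ne')
      have hle := Nat.le_of_dvd hpos hd
      have hrec : Finset.lcm (Finset.Icc 1 (M - M / 2)) id ≤ 4 ^ (M - M / 2) :=
        ih _ (by omega)
      calc Finset.lcm (Finset.Icc 1 M) id
          ≤ Finset.lcm (Finset.Icc 1 (M - M / 2)) id * Nat.choose M (M / 2) := hle
        _ ≤ 4 ^ (M - M / 2) * 4 ^ (M / 2) :=
            Nat.mul_le_mul hrec (choose_half_le M)
        _ = 4 ^ M := by rw [← pow_add]; congr 1; omega

/-- For `N = lcm(1,…,m)` the vector `v = N·e₁ ∈ ℤᵏ` is nonzero, has ℓ¹-norm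
`N ≤ 4^m`, and is killed by every homomorphism from `ℤᵏ` to a finite group of order
at most `m`.  (The lower bound `F_{ℤᵏ}(n) ≽ log n`.) -/
theorem stmt_8 (k : ℕ) (hk : 0 < k) (m : ℕ) (hm : 0 < m) :
    ∀ N : ℕ, N = Finset.lcm (Finset.Icc 1 m) id →
      ∀ v : Fin k → ℤ, v = Pi.single (⟨0, hk⟩ : Fin k) (N : ℤ) →
        v ≠ 0 ∧ (∑ i, |v i|) = (N : ℤ) ∧ N ≤ 4 ^ m ∧
        ∀ (H : Type) (_ : AddGroup H) (_ : Finite H),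
          Nat.card H ≤ m → ∀ φ : (Fin k → ℤ) →+ H, φ v = 0 := by
  intro N hN v hv
  have hN0 : N ≠ 0 := hN ▸ lcm_Icc_ne_zero m
  subst hv
  set i0 : Fin k := ⟨0, hk⟩
  refine ⟨?_, ?_, ?_, ?_⟩
  · intro h
    have := congrFun h i0
    rw [Pi.single_eq_same, Pi.zero_apply] at this
    exact hN0 (by exact_mod_cast this)
  · have habs : ∀ i, |(Pi.single i0 (N : ℤ) : Fin k → ℤ) i| = (Pi.single i0 (N : ℤ) : Fin k → ℤ) i := by
      intro i
      apply abs_of_nonneg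
      by_cases h : i = i0
      · subst h; rw [Pi.single_eq_same]; positivity
      · rw [Pi.single_eq_of_ne h]
    simp_rw [habs]
    simp [Finset.sum_pi_single']
  · rw [hN]; exact lcm_Icc_le_four_pow m
  · intro H _ _ hcard φ
    have : Nonempty H := ⟨0⟩
    have hc1 : 1 ≤ Nat.card H := Nat.card_pos
    have hdvd : Nat.card H ∣ N := by
      rw [hN]
      exact Finset.dvd_lcm (Finset.mem_Icc.2 ⟨hc1, hcard⟩)
    obtain ⟨t, ht⟩ := hdvd
    have hsingle : (Pi.single i0 ((N : ℤ)) : Fin k → ℤ) = N • (Pi.single i0 (1 : ℤ) : Fin k → ℤ) := by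
      rw [← Pi.single_smul]
      norm_num
    rw [hsingle, AddMonoidHom.map_nsmul, ht, mul_comm, mul_nsmul,
      card_nsmul_eq_zero']
end

section
/- (Hadad, upper bound) For every prime power q there exists a nontrivial word w ∈ F_2 of word length strictly less than 10(q + 2) such that w is a law in SL_2(F_q), i.e. every group homomorphism F_2 → SL_2(F_q) sends w to the identity. -/
open scoped MatrixGroups

open Polynomial

section Tri

variable {F : Type} [Field F] [Fintype F]

/-- Cayley–Hamilton for 2×2 matrices of determinant 1. -/
private lemma CH2 (M : Matrix (Fin 2) (Fin 2) F) (hdet : M.det = 1) :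
    M * M - M.trace • M + 1 = 0 := by
  have h := M.det_fin_two
  rw [hdet] at h
  ext i j
  fin_cases i <;> fin_cases j <;>
    simp [Matrix.mul_apply, Fin.sum_univ_two, Matrix.trace_fin_two, Matrix.one_apply] <;>
    first
      | linear_combination h
      | ring

/-- Trichotomy for elements of `SL₂` over a finite field. -/
private lemma tri (M : Matrix (Fin 2) (Fin 2) F) (hdet : M.det = 1) :
    M ^ (Fintype.card F + 1) = 1 ∨ M ^ (Fintype.card F - 1) = 1 ∨
      ∃ c : F, M ^ (Fintype.card F) = c • 1 := by
  set q := Fintype.card F with hqdef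
  have hq2 : 2 ≤ q := Fintype.one_lt_card
  set t := M.trace with htdef
  set χ : F[X] := X ^ 2 - C t * X + 1 with hχ
  have hCH : aeval M χ = 0 := by
    have h := CH2 M hdet
    simp only [hχ, map_add, map_sub, map_mul, map_pow, aeval_X, aeval_C, map_one]
    rw [← Algebra.smul_def, pow_two]
    exact h
  have hdvd : ∀ n : ℕ, χ ∣ (X ^ n - 1 : F[X]) → M ^ n = 1 := by
    rintro n ⟨g, hg⟩
    have h := congrArg (aeval M) hg
    simp only [map_sub, map_pow, aeval_X, map_one, map_mul, hCH, zero_mul] at h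
    exact sub_eq_zero.mp h
  by_cases hroot : ∃ l : F, l ^ 2 - t * l + 1 = 0
  · obtain ⟨l, hl⟩ := hroot
    have hl0 : l ≠ 0 := by
      rintro rfl
      simp at hl
    have h1 : l + l⁻¹ = t := by
      field_simp
      linear_combination hl
    have hfact : χ = (X - C l) * (X - C l⁻¹) := by
      have h2 : (C l : F[X]) * C l⁻¹ = 1 := by
        rw [← map_mul, mul_inv_cancel₀ hl0, map_one]
      have h3 : (C l : F[X]) + C l⁻¹ = C t := by rw [← map_add, h1]
      rw [hχ]
      linear_combination (X : F[X]) * h3 - h2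
    by_cases hll : l = l⁻¹
    · -- double root ±1 : M ^ q is scalar
      right; right
      have h0 : (M - l • 1) ^ 2 = 0 := by
        have h := hCH
        rw [hfact, ← hll] at h
        simpa [map_mul, map_sub, aeval_X, aeval_C, Algebra.algebraMap_eq_smul_one, sq] using h
      obtain ⟨p, hcp⟩ := CharP.exists F
      haveI := hcp
      obtain ⟨n, hpp, hcard⟩ := FiniteField.card F p
      haveI : Fact p.Prime := ⟨hpp⟩
      rw [← hqdef] at hcard
      refine ⟨l ^ q, ?_⟩
      have hcomm : Commute (l • (1 : Matrix (Fin 2) (Fin 2) F)) (M - l • 1) :=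
        (Commute.one_left _).smul_left l
      have hN : (M - l • 1) ^ q = 0 := by
        have hsplit : q = 2 + (q - 2) := by omega
        rw [hsplit, pow_add, h0, zero_mul]
      calc M ^ q = (l • 1 + (M - l • 1)) ^ q := by rw [add_sub_cancel]
        _ = (l • (1 : Matrix (Fin 2) (Fin 2) F)) ^ q + (M - l • 1) ^ q := by
            rw [hcard]; exact add_pow_char_pow_of_commute p _ hcomm
        _ = l ^ q • 1 := by rw [hN, add_zero, _root_.smul_pow, one_pow]
    · -- two distinct roots in F : M ^ (q-1) = 1
      right; left
      have d1 : (X - C l) ∣ (X ^ (q - 1) - 1 : F[X]) := by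
        refine dvd_iff_isRoot.mpr ?_
        simp [IsRoot, hqdef, FiniteField.pow_card_sub_one_eq_one l hl0]
      have d2 : (X - C l⁻¹) ∣ (X ^ (q - 1) - 1 : F[X]) := by
        refine dvd_iff_isRoot.mpr ?_
        simp [IsRoot, hqdef, FiniteField.pow_card_sub_one_eq_one l hl0, FiniteField.pow_card_sub_one_eq_one l⁻¹ (inv_ne_zero hl0)]
      have hcop : IsCoprime (X - C l) (X - C l⁻¹ : F[X]) :=
        isCoprime_X_sub_C_of_isUnit_sub (sub_ne_zero.mpr hll).isUnit
      exact hdvd _ (hfact ▸ hcop.mul_dvd d1 d2)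
  · -- irreducible case : M ^ (q+1) = 1
    left
    have hmon : χ.Monic := by
      have hrw : χ = X ^ 2 + (C (-t) * X + C 1) := by
        rw [hχ, map_neg, map_one]; ring
      rw [hrw]
      exact monic_X_pow_add (lt_of_le_of_lt degree_linear_le (by norm_num))
    have hdeg : χ.natDegree = 2 := by
      have hrw : χ = C 1 * X ^ 2 + C (-t) * X + C 1 := by
        rw [hχ, map_neg, map_one]; ring
      rw [hrw]
      exact natDegree_quadratic one_ne_zero
    have hirr : Irreducible χ := by
      rw [hmon.irreducible_iff_roots_eq_zero_of_degree_le_three (by rw [hdeg]) (by rw [hdeg]; norm_num)]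
      by_contra hne
      obtain ⟨l, hlmem⟩ := Multiset.exists_mem_of_ne_zero hne
      rw [mem_roots hmon.ne_zero] at hlmem
      refine hroot ⟨l, ?_⟩
      simpa [hχ, IsRoot] using hlmem
    haveI : Fact (Irreducible χ) := ⟨hirr⟩
    set K := AdjoinRoot χ with hK
    set r : K := AdjoinRoot.root χ with hrdef
    have hχr : r ^ 2 - algebraMap F K t * r + 1 = 0 := by
      have h := AdjoinRoot.aeval_eq (f := χ) χ
      rw [AdjoinRoot.mk_self] at h
      simp [hχ, map_sub, map_add, map_pow, map_mul, aeval_X, aeval_C, map_one] at h; exact h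
    obtain ⟨p, hcp⟩ := CharP.exists F
    haveI := hcp
    obtain ⟨n, hpp, hcard⟩ := FiniteField.card F p
    haveI : Fact p.Prime := ⟨hpp⟩
    rw [← hqdef] at hcard
    haveI : CharP K p := charP_of_injective_algebraMap (algebraMap F K).injective p
    set s : K := r ^ q with hsdef
    have hmapt : (algebraMap F K t) ^ q = algebraMap F K t := by
      rw [← map_pow, FiniteField.pow_card]
    have hχs : s ^ 2 - algebraMap F K t * s + 1 = 0 := by
      have hφ := congrArg (iterateFrobenius K p n) hχr
      simp only [map_add, map_sub, map_mul, map_pow, map_one, map_zero,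
        iterateFrobenius_def] at hφ
      rw [← hcard] at hφ
      rw [hmapt] at hφ
      exact hφ
    have hrs : r ≠ s := by
      intro he
      have hP0 : (X ^ q - X : K[X]) ≠ 0 := by
        intro h0
        have := congrArg natDegree h0
        rw [natDegree_sub_eq_left_of_natDegree_lt
          (by rw [natDegree_X, natDegree_X_pow]; omega), natDegree_X_pow, natDegree_zero] at this
        omega
      have hPdeg : (X ^ q - X : K[X]).natDegree = q := by
        rw [natDegree_sub_eq_left_of_natDegree_lt
          (by rw [natDegree_X, natDegree_X_pow]; omega), natDegree_X_pow]
      have hinj : Function.Injective (algebraMap F K) := (algebraMap F K).injective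
      have hnotmem : r ∉ Finset.univ.image (algebraMap F K) := by
        intro hmem
        obtain ⟨c, -, hc⟩ := Finset.mem_image.mp hmem
        have h0 : aeval ((algebraMap F K) c) χ = 0 := by
          rw [hc, hrdef, AdjoinRoot.aeval_eq, AdjoinRoot.mk_self]
        have hcroot := isRoot_of_aeval_algebraMap_eq_zero h0
        refine hroot ⟨c, ?_⟩
        simpa [hχ, IsRoot] using hcroot
      have hsub : (insert r (Finset.univ.image (algebraMap F K))).val ⊆
          (X ^ q - X : K[X]).roots := by
        intro z hz
        rw [Finset.mem_val, Finset.mem_insert] at hz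
        rw [mem_roots hP0]
        rcases hz with rfl | hz
        · simp only [IsRoot, eval_sub, eval_pow, eval_X]
          rw [← hsdef, ← he, sub_self]
        · obtain ⟨c, -, rfl⟩ := Finset.mem_image.mp hz
          simp only [IsRoot, eval_sub, eval_pow, eval_X]
          rw [← map_pow, FiniteField.pow_card, sub_self]
      have hle := card_le_degree_of_subset_roots hsub
      rw [hPdeg, Finset.card_insert_of_notMem hnotmem,
        Finset.card_image_of_injective _ hinj, Finset.card_univ] at hle
      omega
    have hsum : r + s = algebraMap F K t := by
      have h1 : (r - s) * (r + s - algebraMap F K t) = 0 := by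
        linear_combination hχr - hχs
      rcases mul_eq_zero.mp h1 with h | h
      · exact absurd (sub_eq_zero.mp h) hrs
      · exact sub_eq_zero.mp h
    have hprod : r * s = 1 := by linear_combination r * hsum - hχr
    have hr1 : r ^ (q + 1) = 1 := by
      rw [pow_succ, ← hsdef]  -- r^(q+1) = r^q * r ; careful: pow_succ : r^(q+1)= r^q * r
      linear_combination hprod
    refine hdvd _ ?_
    rw [← AdjoinRoot.mk_eq_zero, ← AdjoinRoot.aeval_eq]
    rw [map_sub, map_pow, aeval_X, map_one, ← hrdef, hr1, sub_self]

end Tri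

section NonTrivial

private def Agen : Matrix.SpecialLinearGroup (Fin 2) ℚ :=
  ⟨!![1, 1; 0, 1], by simp [Matrix.det_fin_two_of]⟩

private def Bgen : Matrix.SpecialLinearGroup (Fin 2) ℚ :=
  ⟨!![1, 0; 1, 1], by simp [Matrix.det_fin_two_of]⟩

private lemma Agen_pow (n : ℕ) :
    ((Agen ^ n : Matrix.SpecialLinearGroup (Fin 2) ℚ) : Matrix (Fin 2) (Fin 2) ℚ)
      = !![1, (n : ℚ); 0, 1] := by
  induction n with
  | zero => simp [Matrix.SpecialLinearGroup.coe_one, Matrix.one_fin_two]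
  | succ n ih =>
      rw [pow_succ, Matrix.SpecialLinearGroup.coe_mul, ih,
        show ((Agen : Matrix.SpecialLinearGroup (Fin 2) ℚ) : Matrix (Fin 2) (Fin 2) ℚ)
          = !![1, 1; 0, 1] from rfl, Matrix.mul_fin_two]
      push_cast
      ext i j
      fin_cases i <;> fin_cases j <;> simp <;> ring

end NonTrivial

/-- (Hadad, upper bound) For every finite field `F` (of cardinality `q`, a prime power)
there is a nontrivial word `w` in the free group on two generators of length strictly
less than `10(q + 2)` which is a law in `SL₂(F)`. -/
theorem stmt_9 (F : Type) [Field F] [Fintype F] :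
    ∃ w : FreeGroup (Fin 2), w ≠ 1 ∧
      (FreeGroup.toWord w).length < 10 * (Fintype.card F + 2) ∧
      ∀ φ : FreeGroup (Fin 2) →* Matrix.SpecialLinearGroup (Fin 2) F, φ w = 1 := by
  classical
  set q := Fintype.card F with hqdef
  have hq2 : 2 ≤ q := Fintype.one_lt_card
  set x : FreeGroup (Fin 2) := FreeGroup.of 0 with hx
  set y : FreeGroup (Fin 2) := FreeGroup.of 1 with hy
  set Cw : FreeGroup (Fin 2) :=
    x ^ (q + 1) * (y * x ^ (q - 1) * y⁻¹) * (x ^ (q + 1))⁻¹ * (y * x ^ (q - 1) * y⁻¹)⁻¹ with hCw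
  refine ⟨Cw * x ^ q * Cw⁻¹ * (x ^ q)⁻¹, ?_, ?_, ?_⟩
  · -- nontriviality
    intro hw
    set ψ : FreeGroup (Fin 2) →* Matrix.SpecialLinearGroup (Fin 2) ℚ :=
      FreeGroup.lift ![Agen, Bgen] with hψ
    have hone := congrArg ψ hw
    rw [map_one, map_mul, map_mul, map_mul, map_inv, map_inv] at hone
    have hcomm : ψ Cw * ψ (x ^ q) = ψ (x ^ q) * ψ Cw :=
      mul_inv_eq_iff_eq_mul.mp (mul_inv_eq_one.mp hone)
    have hψx : ψ x = Agen := by simp [hψ, hx]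
    have hψy : ψ y = Bgen := by simp [hψ, hy]
    have hq1 : (1 : ℕ) ≤ q := by omega
    set nn : ℚ := (q : ℚ) - 1 with hnn
    set mm : ℚ := (q : ℚ) + 1 with hmm
    have hcast1 : ((q - 1 : ℕ) : ℚ) = nn := by rw [hnn]; push_cast [hq1]; ring
    have hcast2 : ((q + 1 : ℕ) : ℚ) = mm := by rw [hmm]; push_cast; ring
    have hBval : ((Bgen : Matrix.SpecialLinearGroup (Fin 2) ℚ) : Matrix (Fin 2) (Fin 2) ℚ)
        = !![1, 0; 1, 1] := rfl
    have hBinv : ((Bgen⁻¹ : Matrix.SpecialLinearGroup (Fin 2) ℚ) : Matrix (Fin 2) (Fin 2) ℚ)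
        = !![1, 0; -1, 1] := by
      rw [Matrix.SpecialLinearGroup.coe_inv, hBval, Matrix.adjugate_fin_two]
      norm_num
    have hB'val : ((Bgen * Agen ^ (q - 1) * Bgen⁻¹ : Matrix.SpecialLinearGroup (Fin 2) ℚ) :
        Matrix (Fin 2) (Fin 2) ℚ) = !![1 - nn, nn; -nn, nn + 1] := by
      rw [Matrix.SpecialLinearGroup.coe_mul, Matrix.SpecialLinearGroup.coe_mul, Agen_pow, hBinv,
        hBval, hcast1, Matrix.mul_fin_two, Matrix.mul_fin_two]
      ext i j
      fin_cases i <;> fin_cases j <;> simp <;> ring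
    have hB'inv : (((Bgen * Agen ^ (q - 1) * Bgen⁻¹)⁻¹ : Matrix.SpecialLinearGroup (Fin 2) ℚ) :
        Matrix (Fin 2) (Fin 2) ℚ) = !![nn + 1, -nn; nn, 1 - nn] := by
      rw [Matrix.SpecialLinearGroup.coe_inv, hB'val, Matrix.adjugate_fin_two]
      norm_num
    have hAinv : (((Agen ^ (q + 1))⁻¹ : Matrix.SpecialLinearGroup (Fin 2) ℚ) :
        Matrix (Fin 2) (Fin 2) ℚ) = !![1, -mm; 0, 1] := by
      rw [Matrix.SpecialLinearGroup.coe_inv, Agen_pow, hcast2, Matrix.adjugate_fin_two]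
      norm_num
    have hCim : ψ Cw = Agen ^ (q + 1) * (Bgen * Agen ^ (q - 1) * Bgen⁻¹) * (Agen ^ (q + 1))⁻¹ *
        (Bgen * Agen ^ (q - 1) * Bgen⁻¹)⁻¹ := by
      rw [hCw]
      simp only [map_mul, map_inv, map_pow, hψx, hψy]
    have hMC : ((ψ Cw : Matrix.SpecialLinearGroup (Fin 2) ℚ) : Matrix (Fin 2) (Fin 2) ℚ)
        = !![1, mm; 0, 1] * !![1 - nn, nn; -nn, nn + 1] * !![1, -mm; 0, 1] *
          !![nn + 1, -nn; nn, 1 - nn] := by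
      rw [hCim, Matrix.SpecialLinearGroup.coe_mul, Matrix.SpecialLinearGroup.coe_mul,
        Matrix.SpecialLinearGroup.coe_mul, hB'val, hB'inv, hAinv, Agen_pow, hcast2]
    have hval := congrArg
      (fun g : Matrix.SpecialLinearGroup (Fin 2) ℚ => (g : Matrix (Fin 2) (Fin 2) ℚ)) hcomm
    simp only [Matrix.SpecialLinearGroup.coe_mul] at hval
    rw [hMC, map_pow, hψx, Agen_pow] at hval
    simp only [Matrix.mul_fin_two] at hval
    have hent := congrFun (congrFun hval 1) 1
    simp only [Matrix.cons_val', Matrix.cons_val_zero, Matrix.cons_val_one, Matrix.head_cons,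
      Matrix.empty_val', Matrix.cons_val_fin_one, Matrix.head_fin_const, Matrix.of_apply] at hent
    have hqQ : (2 : ℚ) ≤ (q : ℚ) := by exact_mod_cast hq2
    rw [hnn, hmm] at hent
    ring_nf at hent
    nlinarith [hent, sq_nonneg ((q : ℚ) - 1), sq_nonneg ((q : ℚ) + 1)]
  · -- length bound
    have hnorm_pow : ∀ (g : FreeGroup (Fin 2)) (n : ℕ),
        FreeGroup.norm (g ^ n) ≤ n * FreeGroup.norm g := by
      intro g n
      induction n with
      | zero => simp
      | succ k ih =>
          rw [pow_succ]
          refine le_trans (FreeGroup.norm_mul_le _ _) ?_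
          rw [Nat.succ_mul]
          exact Nat.add_le_add_right ih _
    have hx1 : FreeGroup.norm x = 1 := FreeGroup.norm_of 0
    have hy1 : FreeGroup.norm y = 1 := FreeGroup.norm_of 1
    have hb1 : FreeGroup.norm (x ^ (q + 1)) ≤ q + 1 := by
      simpa [hx1] using hnorm_pow x (q + 1)
    have hbq : FreeGroup.norm (x ^ q) ≤ q := by
      simpa [hx1] using hnorm_pow x q
    have hb2 : FreeGroup.norm (y * x ^ (q - 1) * y⁻¹) ≤ q + 1 := by
      refine le_trans (FreeGroup.norm_mul_le _ _) ?_
      have h1 := FreeGroup.norm_mul_le y (x ^ (q - 1))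
      have h2 : FreeGroup.norm (x ^ (q - 1)) ≤ q - 1 := by
        simpa [hx1] using hnorm_pow x (q - 1)
      have h3 : FreeGroup.norm (y⁻¹) = 1 := by rw [FreeGroup.norm_inv_eq, hy1]
      omega
    have hbC : FreeGroup.norm Cw ≤ 4 * q + 4 := by
      rw [hCw]
      refine le_trans (FreeGroup.norm_mul_le _ _) ?_
      have h1 := FreeGroup.norm_mul_le (x ^ (q + 1) * (y * x ^ (q - 1) * y⁻¹)) ((x ^ (q + 1))⁻¹)
      have h2 := FreeGroup.norm_mul_le (x ^ (q + 1)) (y * x ^ (q - 1) * y⁻¹)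
      have h3 : FreeGroup.norm ((x ^ (q + 1))⁻¹) ≤ q + 1 := by
        rw [FreeGroup.norm_inv_eq]; exact hb1
      have h4 : FreeGroup.norm ((y * x ^ (q - 1) * y⁻¹)⁻¹) ≤ q + 1 := by
        rw [FreeGroup.norm_inv_eq]; exact hb2
      omega
    have hfin : FreeGroup.norm (Cw * x ^ q * Cw⁻¹ * (x ^ q)⁻¹) ≤ 10 * q + 8 := by
      refine le_trans (FreeGroup.norm_mul_le _ _) ?_
      have h1 := FreeGroup.norm_mul_le (Cw * x ^ q) (Cw⁻¹)
      have h2 := FreeGroup.norm_mul_le Cw (x ^ q)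
      have h3 : FreeGroup.norm (Cw⁻¹) ≤ 4 * q + 4 := by
        rw [FreeGroup.norm_inv_eq]; exact hbC
      have h4 : FreeGroup.norm ((x ^ q)⁻¹) ≤ q := by
        rw [FreeGroup.norm_inv_eq]; exact hbq
      omega
    have hlen : (FreeGroup.toWord (Cw * x ^ q * Cw⁻¹ * (x ^ q)⁻¹)).length
        = FreeGroup.norm (Cw * x ^ q * Cw⁻¹ * (x ^ q)⁻¹) := rfl
    omega
  · -- the law
    intro φ
    rcases tri ((φ x : Matrix.SpecialLinearGroup (Fin 2) F) : Matrix (Fin 2) (Fin 2) F)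
        (φ x).prop with h | h | h
    · have hA : (φ x) ^ (q + 1) = 1 := by
        apply Subtype.ext
        rw [Matrix.SpecialLinearGroup.coe_pow]
        simpa using h
      simp only [hCw, map_mul, map_inv, map_pow]
      rw [hA]
      group
    · have hA : (φ x) ^ (q - 1) = 1 := by
        apply Subtype.ext
        rw [Matrix.SpecialLinearGroup.coe_pow]
        simpa using h
      simp only [hCw, map_mul, map_inv, map_pow]
      rw [hA]
      group
    · have hcen : ∀ g : Matrix.SpecialLinearGroup (Fin 2) F,
          (φ x) ^ q * g = g * (φ x) ^ q := by
        obtain ⟨c, hc⟩ := h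
        intro g
        apply Subtype.ext
        rw [Matrix.SpecialLinearGroup.coe_mul, Matrix.SpecialLinearGroup.coe_mul,
          Matrix.SpecialLinearGroup.coe_pow, hc, smul_mul_assoc, mul_smul_comm,
          one_mul, mul_one]
      simp only [map_mul, map_inv, map_pow]
      rw [← hcen (φ Cw)]
      group
end

section
/- (Hadad, lower bound) For every prime power q, every nontrivial word w ∈ F_k of word length strictly less than (q − 1)/3 fails to be a law in PSL_2(F_q): there exists a group homomorphism φ : F_k → PSL_2(F_q) with φ(w) ≠ 1. In particular the same holds for SL_2(F_q). -/
open scoped MatrixGroups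

open Polynomial

namespace HadadAux

variable {F : Type} [Field F] {k : ℕ}

/-- outgoing vector of a letter -/
def va (a b : Fin k → F) (x : Fin k × Bool) : Fin 2 → F :=
  if x.2 then ![a x.1, 1] else ![-b x.1, -1]

/-- incoming covector of a letter -/
def ua (a b : Fin k → F) (x : Fin k × Bool) : Fin 2 → F :=
  if x.2 then ![1, -b x.1] else ![1, -a x.1]

/-- matrix of a letter -/
noncomputable def fM (a b : Fin k → F) (x : Fin k × Bool) : Matrix (Fin 2) (Fin 2) F[X] :=
  if x.2 then
    !![1 + C (a x.1) * X, C (a x.1 - b x.1) - C (a x.1 * b x.1) * X;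
       X, 1 - C (b x.1) * X]
  else
    !![1 - C (b x.1) * X, - C (a x.1 - b x.1) + C (a x.1 * b x.1) * X;
       -X, 1 + C (a x.1) * X]

lemma fM_natDegree_le (a b : Fin k → F) (x : Fin k × Bool) (r t : Fin 2) :
    (fM a b x r t).natDegree ≤ 1 := by
  rcases x with ⟨i, _ | _⟩ <;> fin_cases r <;> fin_cases t <;>
    simp [fM] <;> compute_degree

lemma fM_coeff_one (a b : Fin k → F) (x : Fin k × Bool) (r t : Fin 2) :
    (fM a b x r t).coeff 1 = va a b x r * ua a b x t := by
  rcases x with ⟨i, _ | _⟩ <;> fin_cases r <;> fin_cases t <;>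
    simp [fM, va, ua, Polynomial.coeff_one] <;> ring

lemma fM_det (a b : Fin k → F) (x : Fin k × Bool) : (fM a b x).det = 1 := by
  rcases x with ⟨i, _ | _⟩ <;> simp [fM, Matrix.det_fin_two_of] <;> ring


lemma coeff_mul_succ (p q : F[X]) (n : ℕ) (hp : p.natDegree ≤ 1) (hq : q.natDegree ≤ n) :
    (p * q).coeff (n + 1) = p.coeff 1 * q.coeff n := by
  conv_lhs => rw [eq_X_add_C_of_natDegree_le_one hp]
  rw [add_mul, coeff_add, mul_assoc, coeff_C_mul, coeff_C_mul, coeff_X_mul,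
    coeff_eq_zero_of_natDegree_lt (lt_of_le_of_lt hq (Nat.lt_succ_self n)), mul_zero, add_zero]

lemma junction (a b : Fin k → F) (S : Finset (Fin k))
    (hab : ∀ i ∈ S, ∀ j ∈ S, a i ≠ b j)
    (ha : ∀ i ∈ S, ∀ j ∈ S, a i = a j → i = j)
    (hb : ∀ i ∈ S, ∀ j ∈ S, b i = b j → i = j)
    (x y : Fin k × Bool) (hx : x.1 ∈ S) (hy : y.1 ∈ S)
    (hred : ¬(x.1 = y.1 ∧ y.2 = !x.2)) :
    (∑ j : Fin 2, ua a b x j * va a b y j) ≠ 0 := by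
  rcases x with ⟨i, bi⟩; rcases y with ⟨j, bj⟩
  simp only at hx hy
  have E : ∀ p q r s : F, (∑ t : Fin 2, ![(1:F), p] t * ![q, r] t) = q + p * r := by
    intro p q r s; simp [Fin.sum_univ_two]
  rcases bi <;> rcases bj
  · -- (i, false), (j, false)
    have hs : (∑ t : Fin 2, ua a b (i, false) t * va a b (j, false) t) = a i - b j := by
      simp [ua, va, Fin.sum_univ_two]; ring
    rw [hs]; exact sub_ne_zero_of_ne (hab i hx j hy)
  · -- (i, false), (j, true)
    have hij : i ≠ j := fun h => hred ⟨h, rfl⟩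
    have hs : (∑ t : Fin 2, ua a b (i, false) t * va a b (j, true) t) = a j - a i := by
      simp [ua, va, Fin.sum_univ_two]; ring
    rw [hs]; exact sub_ne_zero_of_ne fun h => hij (ha i hx j hy h.symm)
  · -- (i, true), (j, false)
    have hij : i ≠ j := fun h => hred ⟨h, rfl⟩
    have hs : (∑ t : Fin 2, ua a b (i, true) t * va a b (j, false) t) = b i - b j := by
      simp [ua, va, Fin.sum_univ_two]; ring
    rw [hs]; exact sub_ne_zero_of_ne fun h => hij (hb i hx j hy h)
  · -- (i, true), (j, true)
    have hs : (∑ t : Fin 2, ua a b (i, true) t * va a b (j, true) t) = a j - b i := by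
      simp [ua, va, Fin.sum_univ_two]; ring
    rw [hs]; exact sub_ne_zero_of_ne (hab j hy i hx)

lemma key (a b : Fin k → F) (S : Finset (Fin k))
    (hab : ∀ i ∈ S, ∀ j ∈ S, a i ≠ b j)
    (ha : ∀ i ∈ S, ∀ j ∈ S, a i = a j → i = j)
    (hb : ∀ i ∈ S, ∀ j ∈ S, b i = b j → i = j) :
    ∀ (L : List (Fin k × Bool)) (x : Fin k × Bool),
      (∀ y ∈ x :: L, y.1 ∈ S) →
      List.Chain' (fun y z => ¬(y.1 = z.1 ∧ z.2 = !y.2)) (x :: L) →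
      ∃ c : F, c ≠ 0 ∧
        (∀ r t : Fin 2, (((x :: L).map (fM a b)).prod r t).natDegree ≤ L.length + 1) ∧
        (∀ r t : Fin 2, (((x :: L).map (fM a b)).prod r t).coeff (L.length + 1) =
          c * va a b x r * ua a b ((x :: L).getLast (List.cons_ne_nil x L)) t) := by
  intro L
  induction L with
  | nil =>
    intro x _ _
    refine ⟨1, one_ne_zero, ?_, ?_⟩ <;> intro r t <;>
      simp [fM_natDegree_le, fM_coeff_one]
  | cons y L ih =>
    intro x hmem hchain
    obtain ⟨hxy, hchain'⟩ := List.isChain_cons_cons.mp hchain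
    obtain ⟨c, hc0, hdeg, hcoeff⟩ :=
      ih y (fun z hz => hmem z (List.mem_cons_of_mem x hz)) hchain'
    have hjunc := junction a b S hab ha hb x y (hmem x (by simp)) (hmem y (by simp)) hxy
    set P := ((y :: L).map (fM a b)).prod with hP
    have hprod : ((x :: y :: L).map (fM a b)).prod = fM a b x * P := by
      simp [hP]
    refine ⟨c * (∑ j : Fin 2, ua a b x j * va a b y j), mul_ne_zero hc0 hjunc, ?_, ?_⟩
    · intro r t
      rw [hprod, Matrix.mul_apply]
      refine Polynomial.natDegree_sum_le_of_forall_le _ _ fun j _ => ?_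
      refine le_trans (Polynomial.natDegree_mul_le) ?_
      have h1 := fM_natDegree_le a b x r j
      have h2 := hdeg j t
      simp only [List.length_cons]
      omega
    · intro r t
      rw [hprod, Matrix.mul_apply, Polynomial.finset_sum_coeff]
      have hlen : (y :: L).length + 1 = (L.length + 1) + 1 := by simp
      rw [List.getLast_cons_cons]
      calc (∑ j : Fin 2, (fM a b x r j * P j t).coeff ((y :: L).length + 1))
          = ∑ j : Fin 2, (va a b x r * ua a b x j) *
              (c * va a b y j * ua a b ((y :: L).getLast (List.cons_ne_nil y L)) t) := by
            refine Finset.sum_congr rfl fun j _ => ?_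
            rw [hlen, coeff_mul_succ _ _ _ (fM_natDegree_le a b x r j) (by
              simpa using hdeg j t), fM_coeff_one, hcoeff]
        _ = c * (∑ j : Fin 2, ua a b x j * va a b y j) * va a b x r *
              ua a b ((y :: L).getLast (List.cons_ne_nil y L)) t := by
            rw [Fin.sum_univ_two, Fin.sum_univ_two]; ring


lemma chain'_of_reduced {α : Type*} [DecidableEq α] (L : List (α × Bool))
    (h : FreeGroup.reduce L = L) :
    List.Chain' (fun y z : α × Bool => ¬(y.1 = z.1 ∧ z.2 = !y.2)) L := by
  show List.IsChain _ L
  rw [List.isChain_iff_getElem]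
  intro i hi
  by_contra hcon
  obtain ⟨h1, h2⟩ := hcon
  have hilen : i < L.length := by omega
  have hilen' : i + 1 < L.length := by omega
  have hsplit : L = L.take i ++ L.get ⟨i, hilen⟩ :: L.get ⟨i+1, hilen'⟩ :: L.drop (i + 2) := by
    conv_lhs => rw [← List.take_append_drop i L]
    congr 1
    rw [← List.cons_get_drop_succ (l := L) (n := ⟨i, hilen⟩)]
    congr 1
    rw [← List.cons_get_drop_succ (l := L) (n := ⟨i+1, hilen'⟩)]
  have hpair : L.get ⟨i+1, hilen'⟩ = ((L.get ⟨i, hilen⟩).1, !(L.get ⟨i, hilen⟩).2) := by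
    rw [Prod.ext_iff]; exact ⟨h1.symm, h2⟩
  exact FreeGroup.reduce.not (x := (L.get ⟨i, hilen⟩).1) (b := (L.get ⟨i, hilen⟩).2)
    (L₂ := L.take i) (L₃ := L.drop (i + 2))
    (by rw [h, Prod.mk.eta, ← hpair]; exact hsplit)

lemma coe_list_prod {R : Type*} [CommRing R] {α : Type*} (f : α → Matrix.SpecialLinearGroup (Fin 2) R)
    (L : List α) :
    (((L.map f).prod : Matrix.SpecialLinearGroup (Fin 2) R) : Matrix (Fin 2) (Fin 2) R) =
      (L.map (fun y => (f y : Matrix (Fin 2) (Fin 2) R))).prod := by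
  induction L with
  | nil => simp
  | cons g L ih => simp [Matrix.SpecialLinearGroup.coe_mul, ih]

end HadadAux

/-- (Hadad, lower bound) For every finite field `F` of cardinality `q`, every nontrivial
word `w ∈ F_k` of length strictly less than `(q-1)/3` fails to be a law in `PSL₂(F)`,
and in particular also fails to be a law in `SL₂(F)`. -/
theorem stmt_10 (F : Type) [Field F] [Fintype F] (k : ℕ) (w : FreeGroup (Fin k))
    (hw : w ≠ 1)
    (hlen : ((FreeGroup.toWord w).length : ℝ) < ((Fintype.card F : ℝ) - 1) / 3) :
    (∃ φ : FreeGroup (Fin k) →* Matrix.ProjectiveSpecialLinearGroup (Fin 2) F,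
      φ w ≠ 1) ∧
    (∃ ψ : FreeGroup (Fin k) →* Matrix.SpecialLinearGroup (Fin 2) F, ψ w ≠ 1) := by
  classical
  have hne : w.toWord ≠ [] := fun h => hw (FreeGroup.toWord_eq_nil_iff.mp h)
  obtain ⟨x, L, hxL⟩ := List.exists_cons_of_ne_nil hne
  have hn1 : 1 ≤ w.toWord.length := by rw [hxL]; simp
  have hq : 3 * w.toWord.length + 1 < Fintype.card F := by
    have h2 : ((3 * w.toWord.length + 1 : ℕ) : ℝ) < (Fintype.card F : ℝ) := by
      push_cast; linarith
    exact_mod_cast h2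
  set S : Finset (Fin k) := (w.toWord.map Prod.fst).toFinset with hS
  have hScard : S.card ≤ w.toWord.length :=
    le_trans (List.toFinset_card_le _) (by simp)
  have hcard2 : Fintype.card (↥S × Bool) ≤ Fintype.card F := by
    simp only [Fintype.card_prod, Fintype.card_coe, Fintype.card_bool]
    omega
  obtain ⟨e⟩ : Nonempty (↥S × Bool ↪ F) := Function.Embedding.nonempty_iff_card_le.mpr hcard2
  set a : Fin k → F := fun i => if h : i ∈ S then e (⟨i, h⟩, true) else 0 with hadef
  set b : Fin k → F := fun i => if h : i ∈ S then e (⟨i, h⟩, false) else 1 with hbdef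
  have hab : ∀ i ∈ S, ∀ j ∈ S, a i ≠ b j := by
    intro i hi j hj hcon
    simp only [hadef, hbdef, dif_pos hi, dif_pos hj] at hcon
    exact Bool.noConfusion (congrArg Prod.snd (e.injective hcon))
  have ha : ∀ i ∈ S, ∀ j ∈ S, a i = a j → i = j := by
    intro i hi j hj hcon
    simp only [hadef, dif_pos hi, dif_pos hj] at hcon
    simpa using congrArg (fun p : ↥S × Bool => (p.1 : Fin k)) (e.injective hcon)
  have hb : ∀ i ∈ S, ∀ j ∈ S, b i = b j → i = j := by
    intro i hi j hj hcon
    simp only [hbdef, dif_pos hi, dif_pos hj] at hcon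
    simpa using congrArg (fun p : ↥S × Bool => (p.1 : Fin k)) (e.injective hcon)
  set Mpos : Fin k → Matrix.SpecialLinearGroup (Fin 2) (Polynomial F) :=
    fun i => ⟨HadadAux.fM a b (i, true), HadadAux.fM_det a b _⟩ with hMpos
  set ψ0 : FreeGroup (Fin k) →* Matrix.SpecialLinearGroup (Fin 2) (Polynomial F) :=
    FreeGroup.lift Mpos with hψ0
  have hcoe : ∀ x : Fin k × Bool,
      ((cond x.2 (Mpos x.1) (Mpos x.1)⁻¹ : Matrix.SpecialLinearGroup (Fin 2) (Polynomial F)) :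
        Matrix (Fin 2) (Fin 2) (Polynomial F)) = HadadAux.fM a b x := by
    rintro ⟨i, (_ | _)⟩
    · show ((Mpos i)⁻¹ : Matrix.SpecialLinearGroup (Fin 2) (Polynomial F)).1 = _
      rw [Matrix.SpecialLinearGroup.coe_inv]
      have hM : (Mpos i : Matrix (Fin 2) (Fin 2) (Polynomial F)) = HadadAux.fM a b (i, true) := rfl
      rw [hM, Matrix.adjugate_fin_two]
      ext r t
      fin_cases r <;> fin_cases t <;> simp [HadadAux.fM] <;> ring
    · rfl
  have hlift : ((ψ0 w : Matrix.SpecialLinearGroup (Fin 2) (Polynomial F)) :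
      Matrix (Fin 2) (Fin 2) (Polynomial F)) = ((w.toWord.map (HadadAux.fM a b)).prod) := by
    conv_lhs => rw [← FreeGroup.mk_toWord (x := w)]
    rw [hψ0, FreeGroup.lift_mk, HadadAux.coe_list_prod]
    congr 1
    exact List.map_congr_left fun y _ => hcoe y
  have hmem : ∀ y ∈ x :: L, y.1 ∈ S := fun y hy => by
    rw [hS]
    exact List.mem_toFinset.mpr (List.mem_map_of_mem (hxL ▸ hy))
  have hchain : List.Chain' (fun y z : Fin k × Bool => ¬(y.1 = z.1 ∧ z.2 = !y.2)) (x :: L) :=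
    hxL ▸ HadadAux.chain'_of_reduced w.toWord (FreeGroup.reduce_toWord w)
  obtain ⟨c, hc0, hdeg, hcoeff⟩ := HadadAux.key a b S hab ha hb L x hmem hchain
  set P : Matrix (Fin 2) (Fin 2) (Polynomial F) := ((x :: L).map (HadadAux.fM a b)).prod with hPdef
  have hva : HadadAux.va a b x 1 ≠ 0 := by
    rcases x with ⟨i, (_ | _)⟩ <;> simp [HadadAux.va]
  have hua : HadadAux.ua a b ((x :: L).getLast (List.cons_ne_nil x L)) 0 = 1 := by
    rcases hgl : (x :: L).getLast (List.cons_ne_nil x L) with ⟨i, (_ | _)⟩ <;> simp [HadadAux.ua]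
  have hpcoeff : (P 1 0).coeff (L.length + 1) ≠ 0 := by
    rw [hPdef, hcoeff 1 0, hua, mul_one]
    exact mul_ne_zero hc0 hva
  have hpne : P 1 0 ≠ 0 := fun h => hpcoeff (by simp [h])
  have hpdeg : (P 1 0).natDegree ≤ L.length + 1 := hdeg 1 0
  have hlenn : L.length + 1 = w.toWord.length := by rw [hxL]; simp
  have hroots : (P 1 0).roots.toFinset.card < Fintype.card F := by
    refine lt_of_le_of_lt (le_trans (Multiset.toFinset_card_le _)
      (le_trans (Polynomial.card_roots' _) hpdeg)) ?_
    omega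
  obtain ⟨t, ht⟩ : ∃ t : F, t ∉ (P 1 0).roots.toFinset := by
    by_contra hcon
    push_neg at hcon
    rw [Finset.eq_univ_iff_forall.mpr hcon, Finset.card_univ] at hroots
    exact lt_irrefl _ hroots
  have heval : Polynomial.eval t (P 1 0) ≠ 0 := fun h =>
    ht (Multiset.mem_toFinset.mpr (Polynomial.mem_roots'.mpr ⟨hpne, h⟩))
  set Ψ : FreeGroup (Fin k) →* Matrix.SpecialLinearGroup (Fin 2) F :=
    (Matrix.SpecialLinearGroup.map (Polynomial.evalRingHom t)).comp ψ0 with hΨdef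
  have hentry : ((Ψ w : Matrix.SpecialLinearGroup (Fin 2) F) :
      Matrix (Fin 2) (Fin 2) F) 1 0 ≠ 0 := by
    have hmat : ((Ψ w : Matrix.SpecialLinearGroup (Fin 2) F) :
        Matrix (Fin 2) (Fin 2) F) 1 0 = Polynomial.eval t (P 1 0) := by
      rw [hΨdef]
      show ((Matrix.SpecialLinearGroup.map (Polynomial.evalRingHom t) (ψ0 w) :
        Matrix.SpecialLinearGroup (Fin 2) F) : Matrix (Fin 2) (Fin 2) F) 1 0 = _
      rw [Matrix.SpecialLinearGroup.map_apply_coe, RingHom.mapMatrix_apply, hlift, hxL]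
      rw [Matrix.map_apply, ← hPdef]
      simp
    rw [hmat]
    exact heval
  have hcent : Ψ w ∉ Subgroup.center (Matrix.SpecialLinearGroup (Fin 2) F) := by
    intro hmemc
    have hE := Subgroup.mem_center_iff.mp hmemc
      ⟨!![1, 1; 0, 1], by simp [Matrix.det_fin_two_of]⟩
    have h11 := congrArg (fun g : Matrix.SpecialLinearGroup (Fin 2) F =>
      ((g : Matrix (Fin 2) (Fin 2) F)) 1 1) hE
    erw [Matrix.SpecialLinearGroup.coe_mul, Matrix.SpecialLinearGroup.coe_mul] at h11
    simp [Matrix.mul_apply, Fin.sum_univ_two] at h11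
    exact hentry h11
  constructor
  · refine ⟨(QuotientGroup.mk' (Subgroup.center (Matrix.SpecialLinearGroup (Fin 2) F))).comp Ψ,
      fun h => hcent ?_⟩
    simpa using h
  · refine ⟨Ψ, fun h => hentry ?_⟩
    rw [h]
    simp [Matrix.SpecialLinearGroup.coe_one, Matrix.one_apply]
end

section
/- There exists a constant C > 0 such that for every k ≥ 1, every integer n ≥ 1, and every nontrivial word w ∈ F_k of word length at most n, there exists a finite group H with |H| ≤ C·n³ and a group homomorphism φ : F_k → H with φ(w) ≠ 1. (That is, F_{F_k}(n) ≼ n³; one can take H = PSL_2(F_p) for a prime p with 3n + 1 < p, |H| = (p³ − p)/2.) -/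
open Polynomial

namespace Stmt11


variable {K : Type} [Field K]

noncomputable def step (c : K) (e : Bool) (v : K[X] × K[X]) : K[X] × K[X] :=
  if e then (v.1 + C c * X * v.2, v.2 + C c * X * (v.1 + C c * X * v.2))
  else (v.1 + C (-c) * X * (v.2 + C (-c) * X * v.1), v.2 + C (-c) * X * v.1)

lemma step_true (c : K) (v : K[X] × K[X]) :
    step c true v = (v.1 + C c * X * v.2, v.2 + C c * X * (v.1 + C c * X * v.2)) := rfl

lemma step_false (c : K) (v : K[X] × K[X]) :
    step c false v = (v.1 + C (-c) * X * (v.2 + C (-c) * X * v.1), v.2 + C (-c) * X * v.1) := rfl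

variable {k : ℕ}

noncomputable def wvec (a : Fin k → K) : List (Fin k × Bool) → K[X] × K[X]
  | [] => (1, 1)
  | x :: L => step (a x.1) x.2 (wvec a L)

lemma wvec_nil (a : Fin k → K) : wvec a [] = (1, 1) := rfl

lemma wvec_cons (a : Fin k → K) (x : Fin k × Bool) (L : List (Fin k × Bool)) :
    wvec a (x :: L) = step (a x.1) x.2 (wvec a L) := rfl

def Inv (a : Fin k → K) (x : Fin k × Bool) (m : ℕ) (v : K[X] × K[X]) : Prop :=
  ∃ d : ℕ, 1 ≤ d ∧ d + 1 ≤ m ∧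
    ((x.2 = true →
      v.1.degree = ((d : ℕ) : WithBot ℕ) ∧ v.2.degree = ((d + 1 : ℕ) : WithBot ℕ) ∧
        v.2.leadingCoeff = a x.1 * v.1.leadingCoeff) ∧
     (x.2 = false →
      v.2.degree = ((d : ℕ) : WithBot ℕ) ∧ v.1.degree = ((d + 1 : ℕ) : WithBot ℕ) ∧
        v.1.leadingCoeff = -(a x.1 * v.2.leadingCoeff)))

lemma stepA {c : K} (hc : c ≠ 0) {f g : K[X]} {dg : ℕ} (hg : g.degree = (dg : ℕ))
    (hf : f.degree < ((dg + 1 : ℕ) : WithBot ℕ)) :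
    (f + C c * X * g).degree = ((dg + 1 : ℕ) : WithBot ℕ) ∧
      (f + C c * X * g).leadingCoeff = c * g.leadingCoeff := by
  have hm : (C c * X * g).degree = ((dg + 1 : ℕ) : WithBot ℕ) := by
    rw [degree_mul, degree_C_mul_X hc, hg]
    rw [show ((dg + 1 : ℕ) : WithBot ℕ) = ((1 : ℕ) : WithBot ℕ) + (dg : ℕ) by
      push_cast; exact add_comm _ _]
    rfl
  have hlt : f.degree < (C c * X * g).degree := by rw [hm]; exact hf
  have hlc : (C c * X * g).leadingCoeff = c * g.leadingCoeff := by
    rw [leadingCoeff_mul]; simp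
  refine ⟨?_, ?_⟩
  · rw [degree_add_eq_right_of_degree_lt hlt, hm]
  · rw [leadingCoeff_add_of_degree_lt hlt, hlc]

lemma stepB {c : K} (hc : c ≠ 0) {f g : K[X]} {dg : ℕ} (hg : g.degree = (dg : ℕ))
    (hf : f.degree = ((dg + 1 : ℕ) : WithBot ℕ))
    (hsum : f.leadingCoeff + c * g.leadingCoeff ≠ 0) :
    (f + C c * X * g).degree = ((dg + 1 : ℕ) : WithBot ℕ) ∧
      (f + C c * X * g).leadingCoeff = f.leadingCoeff + c * g.leadingCoeff := by
  have hm : (C c * X * g).degree = ((dg + 1 : ℕ) : WithBot ℕ) := by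
    rw [degree_mul, degree_C_mul_X hc, hg]
    rw [show ((dg + 1 : ℕ) : WithBot ℕ) = ((1 : ℕ) : WithBot ℕ) + (dg : ℕ) by
      push_cast; exact add_comm _ _]
    rfl
  have hlc : (C c * X * g).leadingCoeff = c * g.leadingCoeff := by
    rw [leadingCoeff_mul]; simp
  have hde : f.degree = (C c * X * g).degree := by rw [hf, hm]
  have hsum' : f.leadingCoeff + (C c * X * g).leadingCoeff ≠ 0 := by rw [hlc]; exact hsum
  refine ⟨?_, ?_⟩
  · rw [degree_add_eq_of_leadingCoeff_add_ne_zero hsum', hf, hm, max_self]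
  · rw [leadingCoeff_add_of_degree_eq hde hsum', hlc]

lemma ne_zero_of_degree_natCast {f : K[X]} {d : ℕ} (h : f.degree = ((d : ℕ) : WithBot ℕ)) :
    f ≠ 0 := by
  intro h0
  rw [h0, degree_zero] at h
  exact absurd h (by simp)

/-- The main induction: the invariant holds for every nonempty reduced word. -/
lemma inv_main (a : Fin k → K) :
    ∀ (L : List (Fin k × Bool)) (x : Fin k × Bool),
      List.Chain' (fun u v => u.1 = v.1 → u.2 = v.2) (x :: L) →
      (∀ y ∈ x :: L, a y.1 ≠ 0) →
      (∀ y ∈ x :: L, ∀ z ∈ x :: L, y.1 ≠ z.1 → a y.1 ≠ a z.1) →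
      Inv a x (2 * (x :: L).length) (wvec a (x :: L)) := by
  intro L
  induction L with
  | nil =>
    intro x _ hz _
    have hc : a x.1 ≠ 0 := hz x (List.mem_cons_self)
    rcases x with ⟨i, e⟩
    have h1 : ((1 : K[X])).degree = ((0 : ℕ) : WithBot ℕ) := degree_one
    cases e with
    | true =>
      have hA := stepA hc (f := 1) h1 (by rw [degree_one]; exact_mod_cast Nat.zero_lt_one)
      have hB := stepA hc (f := 1) (dg := 1) hA.1
        (by rw [degree_one]; exact_mod_cast Nat.zero_lt_succ 1)
      rw [wvec_cons, wvec_nil, step_true]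
      exact ⟨1, le_refl 1, by simp, fun _ => ⟨hA.1, hB.1, by rw [hB.2]⟩, by simp⟩
    | false =>
      have hc' : -a i ≠ 0 := neg_ne_zero.mpr hc
      have hA := stepA hc' (f := 1) h1 (by rw [degree_one]; exact_mod_cast Nat.zero_lt_one)
      have hB := stepA hc' (f := 1) (dg := 1) hA.1
        (by rw [degree_one]; exact_mod_cast Nat.zero_lt_succ 1)
      rw [wvec_cons, wvec_nil, step_false]
      refine ⟨1, le_refl 1, by simp, by simp, fun _ => ⟨hA.1, hB.1, ?_⟩⟩
      show (1 + C (-a i) * X * (1 + C (-a i) * X * 1)).leadingCoeff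
          = -(a i * (1 + C (-a i) * X * 1).leadingCoeff)
      rw [hB.2]; ring
  | cons y M ih =>
    intro x hchain hz hinj
    have hxy : x.1 = y.1 → x.2 = y.2 := (List.isChain_cons_cons.mp hchain).1
    have hchain' : List.Chain' (fun u v : Fin k × Bool => u.1 = v.1 → u.2 = v.2) (y :: M) :=
      (List.isChain_cons_cons.mp hchain).2
    have hz' : ∀ w ∈ y :: M, a w.1 ≠ 0 := fun w hw => hz w (List.mem_cons_of_mem _ hw)
    have hinj' : ∀ u ∈ y :: M, ∀ w ∈ y :: M, u.1 ≠ w.1 → a u.1 ≠ a w.1 := fun u hu w hw =>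
      hinj u (List.mem_cons_of_mem _ hu) w (List.mem_cons_of_mem _ hw)
    obtain ⟨d, hd1, hdm, hcase⟩ := ih y hchain' hz' hinj'
    simp only [List.length_cons] at hdm ⊢
    have hcx : a x.1 ≠ 0 := hz x (List.mem_cons_self)
    have hxmem : x ∈ x :: y :: M := List.mem_cons_self
    have hymem : y ∈ x :: y :: M := List.mem_cons_of_mem _ (List.mem_cons_self)
    rw [wvec_cons]
    rcases x with ⟨i, e⟩
    rcases y with ⟨j, e'⟩
    simp only at hcx hxy ⊢
    cases e with
    | true =>
      rw [step_true]
      cases e' with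
      | true =>
        obtain ⟨hdf, hdg, hlg⟩ := hcase.1 rfl
        have hA := stepA hcx (f := (wvec a ((j, true) :: M)).1) (dg := d + 1) hdg
          (by rw [hdf]; exact_mod_cast by omega)
        have hB := stepA hcx (f := (wvec a ((j, true) :: M)).2) (dg := d + 2) hA.1
          (by rw [hdg]; exact_mod_cast by omega)
        exact ⟨d + 2, by omega, by omega,
          fun _ => ⟨hA.1, hB.1, by rw [hB.2]⟩, by simp⟩
      | false =>
        obtain ⟨hdg, hdf, hlf⟩ := hcase.2 rfl
        have hne : i ≠ j := fun h => absurd (hxy h) (by simp)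
        have haij : a i ≠ a j := hinj _ hxmem _ hymem hne
        have hg0 : (wvec a ((j, false) :: M)).2 ≠ 0 := ne_zero_of_degree_natCast hdg
        have hsum : (wvec a ((j, false) :: M)).1.leadingCoeff
            + a i * (wvec a ((j, false) :: M)).2.leadingCoeff ≠ 0 := by
          rw [hlf]
          intro h
          have h2 : (a i - a j) * (wvec a ((j, false) :: M)).2.leadingCoeff = 0 := by
            linear_combination h
          rcases mul_eq_zero.mp h2 with h' | h'
          · exact haij (sub_eq_zero.mp h')
          · exact (leadingCoeff_ne_zero.mpr hg0) h'
        have hA := stepB hcx (dg := d) hdg hdf hsum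
        have hB := stepA hcx (f := (wvec a ((j, false) :: M)).2) (dg := d + 1) hA.1
          (by rw [hdg]; exact_mod_cast by omega)
        exact ⟨d + 1, by omega, by omega,
          fun _ => ⟨hA.1, hB.1, by rw [hB.2]⟩, by simp⟩
    | false =>
      rw [step_false]
      have hcx' : -a i ≠ 0 := neg_ne_zero.mpr hcx
      cases e' with
      | false =>
        obtain ⟨hdg, hdf, hlf⟩ := hcase.2 rfl
        have hA := stepA hcx' (f := (wvec a ((j, false) :: M)).2) (dg := d + 1) hdf
          (by rw [hdg]; exact_mod_cast by omega)
        have hB := stepA hcx' (f := (wvec a ((j, false) :: M)).1) (dg := d + 2) hA.1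
          (by rw [hdf]; exact_mod_cast by omega)
        exact ⟨d + 2, by omega, by omega, by simp,
          fun _ => ⟨hA.1, hB.1, by rw [hB.2]; ring⟩⟩
      | true =>
        obtain ⟨hdf, hdg, hlg⟩ := hcase.1 rfl
        have hne : i ≠ j := fun h => absurd (hxy h) (by simp)
        have haij : a i ≠ a j := hinj _ hxmem _ hymem hne
        have hf0 : (wvec a ((j, true) :: M)).1 ≠ 0 := ne_zero_of_degree_natCast hdf
        have hsum : (wvec a ((j, true) :: M)).2.leadingCoeff
            + -a i * (wvec a ((j, true) :: M)).1.leadingCoeff ≠ 0 := by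
          rw [hlg]
          intro h
          have h2 : (a j - a i) * (wvec a ((j, true) :: M)).1.leadingCoeff = 0 := by
            linear_combination h
          rcases mul_eq_zero.mp h2 with h' | h'
          · exact haij (sub_eq_zero.mp h').symm
          · exact (leadingCoeff_ne_zero.mpr hf0) h'
        have hA := stepB hcx' (dg := d) hdf hdg hsum
        have hB := stepA hcx' (f := (wvec a ((j, true) :: M)).1) (dg := d + 1) hA.1
          (by rw [hdf]; exact_mod_cast by omega)
        exact ⟨d + 1, by omega, by omega, by simp,
          fun _ => ⟨hA.1, hB.1, by rw [hB.2]; ring⟩⟩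

/-- The image of a generator: a symmetric matrix of determinant 1. -/
def msl (c : K) : Matrix.SpecialLinearGroup (Fin 2) K :=
  ⟨!![1, c; c, c * c + 1], by rw [Matrix.det_fin_two_of]; ring⟩

lemma mulVec_two (A : Matrix (Fin 2) (Fin 2) K) (x y : K) :
    A.mulVec ![x, y] = ![A 0 0 * x + A 0 1 * y, A 1 0 * x + A 1 1 * y] := by
  funext i
  fin_cases i <;> simp [Matrix.mulVec, dotProduct, Fin.sum_univ_two]

lemma coe_msl (c : K) : (msl c : Matrix (Fin 2) (Fin 2) K) = !![1, c; c, c * c + 1] := rfl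

lemma coe_msl_inv (c : K) :
    ((msl c)⁻¹ : Matrix.SpecialLinearGroup (Fin 2) K) = (!![c * c + 1, -c; -c, 1] :
      Matrix (Fin 2) (Fin 2) K) := by
  rw [Matrix.SpecialLinearGroup.coe_inv, coe_msl, Matrix.adjugate_fin_two]
  norm_num

/-- Evaluation of the polynomial vector matches the matrix action on `![1,1]`. -/
lemma eval_eq (a : Fin k → K) (t : K) :
    ∀ L : List (Fin k × Bool),
      (((L.map fun x => cond x.2 (msl (a x.1 * t)) (msl (a x.1 * t))⁻¹).prod :
          Matrix.SpecialLinearGroup (Fin 2) K) : Matrix (Fin 2) (Fin 2) K).mulVec ![1, 1]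
        = ![((wvec a L).1).eval t, ((wvec a L).2).eval t] := by
  intro L
  induction L with
  | nil =>
    simp [wvec_nil, Matrix.one_mulVec]
  | cons x M ih =>
    rw [List.map_cons, List.prod_cons, Matrix.SpecialLinearGroup.coe_mul,
      ← Matrix.mulVec_mulVec, ih, wvec_cons]
    rcases x with ⟨i, e⟩
    cases e with
    | true =>
      rw [step_true]
      simp only [cond_true, coe_msl, mulVec_two]
      funext idx
      fin_cases idx <;>
        simp [Matrix.cons_val_zero, Matrix.cons_val_one, Matrix.head_cons] <;> ring
    | false =>
      rw [step_false]
      simp only [cond_false, coe_msl_inv, mulVec_two]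
      funext idx
      fin_cases idx <;>
        simp [Matrix.cons_val_zero, Matrix.cons_val_one, Matrix.head_cons] <;> ring



lemma card_SL2_le (p : ℕ) [Fact p.Prime] :
    Nat.card (Matrix.SpecialLinearGroup (Fin 2) (ZMod p)) ≤ p ^ 3 := by
  have hcard : Nat.card (ZMod p × ZMod p × ZMod p) = p ^ 3 := by
    simp [Nat.card_prod, Nat.card_zmod]; ring
  rw [← hcard]
  apply Nat.card_le_card_of_injective
    (f := fun M : Matrix.SpecialLinearGroup (Fin 2) (ZMod p) =>
      if (M : Matrix (Fin 2) (Fin 2) (ZMod p)) 0 0 = 0 then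
        ((0 : ZMod p), (M : Matrix (Fin 2) (Fin 2) (ZMod p)) 0 1,
          (M : Matrix (Fin 2) (Fin 2) (ZMod p)) 1 1)
      else ((M : Matrix (Fin 2) (Fin 2) (ZMod p)) 0 0,
        (M : Matrix (Fin 2) (Fin 2) (ZMod p)) 0 1,
        (M : Matrix (Fin 2) (Fin 2) (ZMod p)) 1 0))
  intro M N h
  have detM : ((M : Matrix (Fin 2) (Fin 2) (ZMod p))).det = 1 := M.prop
  have detN : ((N : Matrix (Fin 2) (Fin 2) (ZMod p))).det = 1 := N.prop
  rw [Matrix.det_fin_two] at detM detN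
  by_cases hM : (M : Matrix (Fin 2) (Fin 2) (ZMod p)) 0 0 = 0 <;>
    by_cases hN : (N : Matrix (Fin 2) (Fin 2) (ZMod p)) 0 0 = 0 <;>
    simp only [hM, hN, if_pos, if_neg, if_true, if_false, Prod.mk.injEq, true_and] at h
  · -- both corner entries are 0
    obtain ⟨h01, h11⟩ := h
    have hne : (M : Matrix (Fin 2) (Fin 2) (ZMod p)) 0 1 ≠ 0 := by
      intro h0
      rw [hM, h0] at detM
      simp at detM
    have h10 : (M : Matrix (Fin 2) (Fin 2) (ZMod p)) 1 0
        = (N : Matrix (Fin 2) (Fin 2) (ZMod p)) 1 0 := by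
      apply mul_left_cancel₀ hne
      rw [hM] at detM
      rw [hN, ← h01] at detN
      linear_combination detN - detM
    have h00 : (M : Matrix (Fin 2) (Fin 2) (ZMod p)) 0 0
        = (N : Matrix (Fin 2) (Fin 2) (ZMod p)) 0 0 := by rw [hM, hN]
    apply Subtype.ext
    apply Matrix.ext
    intro i j
    fin_cases i <;> fin_cases j
    · simpa using h00
    · simpa using h01
    · simpa using h10
    · simpa using h11
  · exact absurd h.1.symm hN
  · exact h.1.elim
  · obtain ⟨h00, h01, h10⟩ := h
    have h11 : (M : Matrix (Fin 2) (Fin 2) (ZMod p)) 1 1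
        = (N : Matrix (Fin 2) (Fin 2) (ZMod p)) 1 1 := by
      apply mul_left_cancel₀ hM
      rw [← h00, ← h01, ← h10] at detN
      linear_combination detM - detN
    apply Subtype.ext
    apply Matrix.ext
    intro i j
    fin_cases i <;> fin_cases j
    · simpa using h00
    · simpa using h01
    · simpa using h10
    · simpa using h11

lemma chain'_toWord {k : ℕ} (w : FreeGroup (Fin k)) :
    List.Chain' (fun u v : Fin k × Bool => u.1 = v.1 → u.2 = v.2) w.toWord := by
  rw [List.Chain', List.isChain_iff_getElem]
  intro n hlt
  intro hfst
  by_contra hne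
  have h1 : n < w.toWord.length := by omega
  have h2 : n + 1 < w.toWord.length := by omega
  have hb : (w.toWord.get ⟨n + 1, h2⟩).2 = !(w.toWord.get ⟨n, h1⟩).2 := by
    cases hx : (w.toWord.get ⟨n, h1⟩).2 <;> cases hy : (w.toWord.get ⟨n + 1, h2⟩).2 <;>
      simp_all
  have hfac : FreeGroup.reduce w.toWord
      = w.toWord.take n ++ ((w.toWord.get ⟨n, h1⟩).1, (w.toWord.get ⟨n, h1⟩).2)
        :: ((w.toWord.get ⟨n, h1⟩).1, !(w.toWord.get ⟨n, h1⟩).2) :: w.toWord.drop (n + 2) := by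
    rw [FreeGroup.reduce_toWord]
    conv_lhs => rw [← List.take_append_drop n w.toWord]
    congr 1
    rw [List.drop_eq_getElem_cons h1, List.drop_eq_getElem_cons h2]
    simp only [List.get_eq_getElem] at hb ⊢
    congr 1
    rw [hfst, ← hb]
  exact FreeGroup.reduce.not hfac


end Stmt11

open Stmt11

/-- There is a constant `C > 0` such that every nontrivial word of length at most `n`
in a free group of finite rank is detected by a finite group of order at most `C·n³`.
(The upper bound `F_{F_k}(n) ≼ n³`.) -/
theorem stmt_11 :
    ∃ C : ℝ, 0 < C ∧
      ∀ k : ℕ, 1 ≤ k → ∀ n : ℕ, 1 ≤ n →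
        ∀ w : FreeGroup (Fin k), w ≠ 1 → (FreeGroup.toWord w).length ≤ n →
          ∃ (H : Type) (_ : Group H) (_ : Finite H),
            (Nat.card H : ℝ) ≤ C * (n : ℝ) ^ 3 ∧
            ∃ φ : FreeGroup (Fin k) →* H, φ w ≠ 1 := by
  classical
  refine ⟨64, by norm_num, ?_⟩
  intro k _hk n hn w hw hlen
  obtain ⟨p, hp, hp1, hp2⟩ := Nat.exists_prime_lt_and_le_two_mul (2 * n) (by omega)
  haveI : Fact p.Prime := ⟨hp⟩
  haveI : NeZero p := ⟨hp.pos.ne'⟩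
  set s : List (Fin k) := (w.toWord.map Prod.fst).dedup with hs
  have hslen : s.length ≤ n := by
    refine le_trans (le_trans (List.Sublist.length_le (List.dedup_sublist _)) ?_) hlen
    rw [List.length_map]
  set a : Fin k → ZMod p := fun i => ((s.idxOf i + 1 : ℕ) : ZMod p) with ha
  have hval : ∀ i : Fin k, i ∈ s → (a i).val = s.idxOf i + 1 := by
    intro i hi
    apply ZMod.val_cast_of_lt
    have : s.idxOf i < s.length := List.idxOf_lt_length_iff.mpr hi
    omega
  have hmem : ∀ y ∈ w.toWord, y.1 ∈ s := fun y hy =>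
    List.mem_dedup.mpr (List.mem_map_of_mem hy)
  have hz : ∀ y ∈ w.toWord, a y.1 ≠ 0 := by
    intro y hy h0
    have hv := hval y.1 (hmem y hy)
    rw [h0, ZMod.val_zero] at hv
    omega
  have hinj : ∀ y ∈ w.toWord, ∀ z ∈ w.toWord, y.1 ≠ z.1 → a y.1 ≠ a z.1 := by
    intro y hy z hz' hne heq
    have h1 := hval y.1 (hmem y hy)
    have h2 := hval z.1 (hmem z hz')
    rw [heq] at h1
    have hidx : s.idxOf y.1 = s.idxOf z.1 := by omega
    have hy' : s.idxOf y.1 < s.length := List.idxOf_lt_length_iff.mpr (hmem y hy)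
    have hz'' : s.idxOf z.1 < s.length := List.idxOf_lt_length_iff.mpr (hmem z hz')
    have e1 : s.get ⟨s.idxOf y.1, hy'⟩ = y.1 := List.idxOf_get hy'
    have e2 : s.get ⟨s.idxOf z.1, hz''⟩ = z.1 := List.idxOf_get hz''
    apply hne
    rw [← e1, ← e2]
    congr 1
    exact Fin.ext hidx
  obtain ⟨x, M, hLM⟩ :=
    List.exists_cons_of_ne_nil (fun h => hw (FreeGroup.toWord_eq_nil_iff.mp h))
  obtain ⟨d, hd1, hdm, hT, hF⟩ := inv_main a M x
    (by rw [← hLM]; exact chain'_toWord w)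
    (by rw [← hLM]; exact hz)
    (by rw [← hLM]; exact hinj)
  have hl : (x :: M).length ≤ n := by rw [← hLM]; exact hlen
  have hdlen : d + 1 ≤ 2 * n := by
    simp only [List.length_cons] at hdm hl ⊢
    omega
  obtain ⟨V, idx, hdeg, hcomp⟩ : ∃ (V : Polynomial (ZMod p)) (idx : Fin 2),
      V.degree = ((d + 1 : ℕ) : WithBot ℕ) ∧
      ∀ t : ZMod p,
        (![((wvec a (x :: M)).1).eval t, ((wvec a (x :: M)).2).eval t]) idx = V.eval t := by
    cases hx2 : x.2 with
    | false =>
      obtain ⟨hdg, hdf, _⟩ := hF hx2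
      exact ⟨_, 0, hdf, fun t => by simp⟩
    | true =>
      obtain ⟨hdf, hdg, _⟩ := hT hx2
      exact ⟨_, 1, hdg, fun t => by simp⟩
  have hlt1 : (1 : Polynomial (ZMod p)).degree < V.degree := by
    rw [hdeg, Polynomial.degree_one]
    exact_mod_cast Nat.succ_pos d
  have hd' : (V - 1).degree = ((d + 1 : ℕ) : WithBot ℕ) := by
    rw [Polynomial.degree_sub_eq_left_of_degree_lt hlt1, hdeg]
  have hne0 : V - 1 ≠ 0 := ne_zero_of_degree_natCast hd'
  have hndeg : (V - 1).natDegree = d + 1 := Polynomial.natDegree_eq_of_degree_eq_some hd'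
  obtain ⟨t, ht⟩ := Polynomial.exists_eval_ne_zero_of_natDegree_lt_card (V - 1) hne0
    (by
      rw [Cardinal.mk_fintype, ZMod.card]
      exact_mod_cast (show (V - 1).natDegree < p by omega))
  have htV : V.eval t ≠ 1 := by
    intro h
    apply ht
    simp [h]
  set φ : FreeGroup (Fin k) →* Matrix.SpecialLinearGroup (Fin 2) (ZMod p) :=
    FreeGroup.lift (fun i => msl (a i * t)) with hφ
  refine ⟨Matrix.SpecialLinearGroup (Fin 2) (ZMod p), inferInstance, inferInstance, ?_, φ, ?_⟩
  · calc (Nat.card (Matrix.SpecialLinearGroup (Fin 2) (ZMod p)) : ℝ) ≤ (p : ℝ) ^ 3 := by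
          exact_mod_cast card_SL2_le p
      _ ≤ ((4 * n : ℕ) : ℝ) ^ 3 := by
          apply pow_le_pow_left₀ (by positivity)
          exact_mod_cast (show p ≤ 4 * n by omega)
      _ = 64 * (n : ℝ) ^ 3 := by push_cast; ring
  · intro heq
    have hprod : φ w
        = (((x :: M).map fun y => cond y.2 (msl (a y.1 * t)) (msl (a y.1 * t))⁻¹).prod) := by
      rw [hφ]
      conv_lhs => rw [← FreeGroup.mk_toWord (x := w), hLM]
      exact FreeGroup.lift_mk
    have he := eval_eq a t (x :: M)
    rw [← hprod, heq] at he
    have he' : (![(1 : ZMod p), 1] : Fin 2 → ZMod p)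
        = ![((wvec a (x :: M)).1).eval t, ((wvec a (x :: M)).2).eval t] := by
      simpa using he
    have hcontr := congr_fun he' idx
    rw [hcomp t] at hcontr
    apply htV
    rw [← hcontr]
    fin_cases idx <;> rfl
end

section
/- For all sufficiently large n there exists a nontrivial word w ∈ F_k of word length at most e^{4k(log n)²}·log n such that for every finite group H with |H| ≤ n and every group homomorphism φ : F_k → H one has φ(w) = 1. (Consequently F_{F_k}(n) ≽ e^{√(log n)}.) -/
namespace Stmt12

open FreeGroup

variable {k : ℕ}

/-- Letters of the free group on `Fin k`. -/
abbrev Ltr (k : ℕ) := Fin k × Bool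

/-- `R a b` holds iff the pair `a, b` does not cancel (a before b). -/
def R : Ltr k → Ltr k → Prop := fun a b => a.1 = b.1 → a.2 = b.2

/-- A word is reduced iff no adjacent pair cancels. -/
abbrev Reduced (l : List (Ltr k)) : Prop := List.Chain' R l

lemma R_of_ne {a b : Fin k} (h : a ≠ b) {x y : Bool} : R (k := k) (a, x) (b, y) :=
  fun e => absurd e h

lemma R_same_bool {a b : Fin k} {x : Bool} : R (k := k) (a, x) (b, x) := fun _ => rfl

lemma reduce_eq_self : ∀ {l : List (Ltr k)}, Reduced l → FreeGroup.reduce l = l := by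
  intro l
  induction l with
  | nil => intro _; rfl
  | cons a l ih =>
    intro h
    have hl : Reduced l := h.tail
    rw [FreeGroup.reduce.cons, ih hl]
    cases l with
    | nil => rfl
    | cons b t =>
      have hr : R a b := (List.isChain_cons_cons.mp h).1
      show (if a.1 = b.1 ∧ a.2 = !b.2 then t else a :: b :: t) = a :: b :: t
      rw [if_neg]
      rintro ⟨h1, h2⟩
      have := hr h1
      rw [this] at h2
      simp at h2

lemma toWord_mk_reduced {l : List (Ltr k)} (h : Reduced l) : (mk l).toWord = l := by
  rw [toWord_mk, reduce_eq_self h]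

/-- inverse of a letter -/
def linv (p : Ltr k) : Ltr k := (p.1, !p.2)

lemma invRev_eq (l : List (Ltr k)) : invRev l = l.reverse.map linv := by
  simp [invRev, linv, List.map_reverse]

lemma head?_invRev (l : List (Ltr k)) : (invRev l).head? = l.getLast?.map linv := by
  rw [invRev_eq, List.head?_map, List.head?_reverse]

lemma getLast?_invRev (l : List (Ltr k)) : (invRev l).getLast? = l.head?.map linv := by
  rw [invRev_eq, List.map_reverse, List.getLast?_reverse, List.head?_map]

lemma reduced_invRev {l : List (Ltr k)} (h : Reduced l) : Reduced (invRev l) := by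
  rw [invRev_eq, List.map_reverse]
  show List.Chain' R (List.map linv l).reverse
  rw [show List.Chain' R (List.map linv l).reverse = List.IsChain R (List.map linv l).reverse from rfl,
    List.isChain_reverse, List.isChain_map]
  refine h.imp ?_
  intro a b hab
  intro e
  simp only [linv]
  rw [hab e.symm]

lemma head?_append_left {l₁ l₂ : List (Ltr k)} {u : Ltr k} (h : l₁.head? = some u) :
    (l₁ ++ l₂).head? = some u := by
  cases l₁ <;> simp_all

lemma getLast?_append_right (l₁ : List (Ltr k)) {l₂ : List (Ltr k)} {u : Ltr k}
    (h : l₂.getLast? = some u) : (l₁ ++ l₂).getLast? = some u := by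
  rw [List.getLast?_append_of_ne_nil]
  · exact h
  · rintro rfl; simp at h

lemma glue2 {l₁ l₂ : List (Ltr k)} {u v : Ltr k} (h₁ : Reduced l₁) (h₂ : Reduced l₂)
    (hu : l₁.getLast? = some u) (hv : l₂.head? = some v) (r : R u v) :
    Reduced (l₁ ++ l₂) := by
  refine List.isChain_append.mpr ⟨h₁, h₂, ?_⟩
  intro x hx y hy
  rw [hu, Option.mem_some_iff] at hx
  rw [hv, Option.mem_some_iff] at hy
  subst hx; subst hy; exact r

lemma reduced_of_const {c : Bool} : ∀ {l : List (Ltr k)}, (∀ p ∈ l, p.2 = c) → Reduced l := by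
  intro l
  induction l with
  | nil => intro _; exact List.isChain_nil
  | cons a t ih =>
    intro h
    refine List.isChain_cons.mpr ⟨?_, ih fun p hp => h p (List.mem_cons_of_mem _ hp)⟩
    intro y hy _
    have hy' : y ∈ t := List.mem_of_mem_head? hy
    rw [h a List.mem_cons_self, h y (List.mem_cons_of_mem _ hy')]

/-- Shape invariant: reduced, starts with `(i,+)`, ends with `(i,-)`. -/
def Shaped (i : Fin k) (l : List (Ltr k)) : Prop :=
  Reduced l ∧ l.head? = some (i, true) ∧ l.getLast? = some (i, false)

lemma Shaped.invRev {i : Fin k} {l : List (Ltr k)} (h : Shaped i l) : Shaped i (FreeGroup.invRev l) := by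
  obtain ⟨h1, h2, h3⟩ := h
  exact ⟨reduced_invRev h1, by rw [head?_invRev, h3]; simp [linv],
    by rw [getLast?_invRev, h2]; simp [linv]⟩

/-! ### Word constructions -/

lemma mk_pos (x : Fin k) : mk [(x, true)] = of x := rfl

lemma mk_neg (x : Fin k) : mk [(x, false)] = (of x)⁻¹ := by
  have h : (of x)⁻¹ = mk (invRev [(x, true)]) := inv_mk
  rw [h]; rfl

/-- positive code of a bit string -/
def pcode (i j : Fin k) (bs : List Bool) : List (Ltr k) :=
  bs.map fun b => ((if b then j else i), true)

/-- negative code of a bit string -/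
def ncode (i j : Fin k) (bs : List Bool) : List (Ltr k) :=
  bs.map fun b => ((if b then j else i), false)

lemma mk_ncode (i j : Fin k) (bs : List Bool) :
    mk (ncode i j bs) = (mk ((pcode i j bs).reverse))⁻¹ := by
  rw [inv_mk]
  congr 1
  rw [invRev_eq]
  simp [pcode, ncode, linv, List.map_reverse]

/-- the encoding word of a bit string -/
def wrd (i j : Fin k) (bs : List Bool) : FreeGroup (Fin k) :=
  mk ([(i, true)] ++ (pcode i j bs).reverse)

/-- leaf word representing `wrd (c ++ a) * (wrd (c ++ b))⁻¹` -/
def leafL (i j : Fin k) (a b : List Bool) : List (Ltr k) :=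
  [(i, true)] ++ (pcode i j a).reverse ++ ncode i j b ++ [(i, false)]

lemma mk_leafL (i j : Fin k) (c a b : List Bool) :
    mk (leafL i j a b) = wrd i j (c ++ a) * (wrd i j (c ++ b))⁻¹ := by
  have hsplit : ∀ u : List Bool, wrd i j (c ++ u)
      = of i * (mk ((pcode i j u).reverse) * mk ((pcode i j c).reverse)) := by
    intro u
    rw [wrd]
    have : pcode i j (c ++ u) = pcode i j c ++ pcode i j u := by simp [pcode]
    rw [this, List.reverse_append, ← mul_mk, ← mul_mk, mk_pos]
  rw [hsplit, hsplit, leafL, ← mul_mk, ← mul_mk, ← mul_mk, mk_pos, mk_neg, mk_ncode]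
  group

/-- the combination (lcm) step -/
def combine (i j : Fin k) (A B : List (Ltr k)) : List (Ltr k) :=
  [(i, true)] ++ A ++ [(j, true)] ++ B ++ [(j, false)] ++ invRev A
    ++ [(j, true)] ++ invRev B ++ [(j, false)] ++ [(i, false)]

lemma mk_combine (i j : Fin k) (A B : List (Ltr k)) :
    mk (combine i j A B) = of i * mk A * of j * mk B * (of j)⁻¹ * (mk A)⁻¹
      * of j * (mk B)⁻¹ * (of j)⁻¹ * (of i)⁻¹ := by
  rw [combine]
  simp only [← mul_mk, ← inv_mk, mk_pos, mk_neg]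

lemma combine_kill_left {G : Type} [Group G] (φ : FreeGroup (Fin k) →* G)
    {i j : Fin k} {A B : List (Ltr k)} (h : φ (mk A) = 1) :
    φ (mk (combine i j A B)) = 1 := by
  rw [mk_combine]
  simp only [MonoidHom.map_mul, MonoidHom.map_inv, h, inv_one, one_mul, mul_one]
  group

lemma combine_kill_right {G : Type} [Group G] (φ : FreeGroup (Fin k) →* G)
    {i j : Fin k} {A B : List (Ltr k)} (h : φ (mk B) = 1) :
    φ (mk (combine i j A B)) = 1 := by
  rw [mk_combine]
  simp only [MonoidHom.map_mul, MonoidHom.map_inv, h, inv_one, one_mul, mul_one]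
  group

lemma combine_shaped {i j : Fin k} (hij : i ≠ j) {A B : List (Ltr k)}
    (hA : Shaped i A) (hB : Shaped i B) : Shaped i (combine i j A B) := by
  obtain ⟨hAr, hAh, hAl⟩ := hA
  obtain ⟨hBr, hBh, hBl⟩ := hB
  have hIAr : Reduced (invRev A) := reduced_invRev hAr
  have hIAh : (invRev A).head? = some (i, true) := by rw [head?_invRev, hAl]; rfl
  have hIAl : (invRev A).getLast? = some (i, false) := by rw [getLast?_invRev, hAh]; rfl
  have hIBr : Reduced (invRev B) := reduced_invRev hBr
  have hIBh : (invRev B).head? = some (i, true) := by rw [head?_invRev, hBl]; rfl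
  have hIBl : (invRev B).getLast? = some (i, false) := by rw [getLast?_invRev, hBh]; rfl
  have hassoc : combine i j A B = [(i, true)] ++ (A ++ ([(j, true)] ++ (B ++ ([(j, false)]
      ++ (invRev A ++ ([(j, true)] ++ (invRev B ++ ([(j, false)] ++ [(i, false)])))))))) := by
    simp [combine]
  have hsng : ∀ u : Ltr k, Reduced [u] := by intro u; exact List.isChain_singleton u
  -- build reducedness inside out
  have t1 : Reduced ([(j, false)] ++ [(i, false)] : List (Ltr k)) :=
    glue2 (hsng _) (hsng _) rfl rfl R_same_bool
  have t1h : (([(j, false)] ++ [(i, false)] : List (Ltr k))).head? = some (j, false) := rfl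
  have t2 : Reduced (invRev B ++ ([(j, false)] ++ [(i, false)])) :=
    glue2 hIBr t1 hIBl t1h R_same_bool
  have t2h : (invRev B ++ ([(j, false)] ++ [(i, false)])).head? = some (i, true) :=
    head?_append_left hIBh
  have t3 : Reduced ([(j, true)] ++ (invRev B ++ ([(j, false)] ++ [(i, false)]))) :=
    glue2 (hsng _) t2 rfl t2h (R_of_ne (Ne.symm hij))
  have t3h : ([(j, true)] ++ (invRev B ++ ([(j, false)] ++ [(i, false)]))).head? = some (j, true) := rfl
  have t4 : Reduced (invRev A ++ ([(j, true)] ++ (invRev B ++ ([(j, false)] ++ [(i, false)])))) :=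
    glue2 hIAr t3 hIAl t3h (R_of_ne hij)
  have t4h : (invRev A ++ ([(j, true)] ++ (invRev B ++ ([(j, false)] ++ [(i, false)])))).head?
      = some (i, true) := head?_append_left hIAh
  have t5 : Reduced ([(j, false)] ++ (invRev A ++ ([(j, true)] ++ (invRev B
      ++ ([(j, false)] ++ [(i, false)]))))) := glue2 (hsng _) t4 rfl t4h (R_of_ne (Ne.symm hij))
  have t5h : ([(j, false)] ++ (invRev A ++ ([(j, true)] ++ (invRev B
      ++ ([(j, false)] ++ [(i, false)]))))).head? = some (j, false) := rfl
  have t6 : Reduced (B ++ ([(j, false)] ++ (invRev A ++ ([(j, true)] ++ (invRev B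
      ++ ([(j, false)] ++ [(i, false)])))))) := glue2 hBr t5 hBl t5h R_same_bool
  have t6h : (B ++ ([(j, false)] ++ (invRev A ++ ([(j, true)] ++ (invRev B
      ++ ([(j, false)] ++ [(i, false)])))))).head? = some (i, true) := head?_append_left hBh
  have t7 : Reduced ([(j, true)] ++ (B ++ ([(j, false)] ++ (invRev A ++ ([(j, true)]
      ++ (invRev B ++ ([(j, false)] ++ [(i, false)]))))))) :=
    glue2 (hsng _) t6 rfl t6h (R_of_ne (Ne.symm hij))
  have t7h : ([(j, true)] ++ (B ++ ([(j, false)] ++ (invRev A ++ ([(j, true)]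
      ++ (invRev B ++ ([(j, false)] ++ [(i, false)]))))))).head? = some (j, true) := rfl
  have t8 : Reduced (A ++ ([(j, true)] ++ (B ++ ([(j, false)] ++ (invRev A ++ ([(j, true)]
      ++ (invRev B ++ ([(j, false)] ++ [(i, false)])))))))) :=
    glue2 hAr t7 hAl t7h (R_of_ne hij)
  have t8h : (A ++ ([(j, true)] ++ (B ++ ([(j, false)] ++ (invRev A ++ ([(j, true)]
      ++ (invRev B ++ ([(j, false)] ++ [(i, false)])))))))).head? = some (i, true) :=
    head?_append_left hAh
  refine ⟨?_, ?_, ?_⟩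
  · rw [hassoc]
    exact glue2 (hsng _) t8 rfl t8h R_same_bool
  · rw [hassoc]; exact head?_append_left rfl
  · rw [combine]; exact getLast?_append_right _ rfl

lemma combine_length (i j : Fin k) (A B : List (Ltr k)) :
    (combine i j A B).length = 2 * A.length + 2 * B.length + 6 := by
  simp [combine]
  omega

/-! ### Stripping common prefixes -/

def strip : List Bool → List Bool → List Bool × List Bool
  | a :: as, b :: bs => if a = b then strip as bs else (a :: as, b :: bs)
  | as, bs => (as, bs)

lemma strip_spec : ∀ a b : List Bool, ∃ c, a = c ++ (strip a b).1 ∧ b = c ++ (strip a b).2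
  | [], bs => ⟨[], by simp [strip]⟩
  | a :: as, [] => ⟨[], by simp [strip]⟩
  | a :: as, b :: bs => by
    by_cases h : a = b
    · obtain ⟨c, h1, h2⟩ := strip_spec as bs
      refine ⟨a :: c, ?_, ?_⟩
      · rw [show strip (a :: as) (b :: bs) = strip as bs by simp [strip, h]]
        simpa using h1
      · rw [show strip (a :: as) (b :: bs) = strip as bs by simp [strip, h]]
        rw [h]
        simpa using h2
    · exact ⟨[], by simp [strip, h]⟩

lemma strip_len : ∀ a b : List Bool, a.length = b.length →
    (strip a b).1.length = (strip a b).2.length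
  | [], bs => by intro h; simp [strip]; exact h
  | a :: as, [] => by intro h; simp at h
  | a :: as, b :: bs => by
    intro h
    by_cases hab : a = b
    · rw [show strip (a :: as) (b :: bs) = strip as bs by simp [strip, hab]]
      exact strip_len as bs (by simpa using h)
    · rw [show strip (a :: as) (b :: bs) = (a :: as, b :: bs) by simp [strip, hab]]
      simpa using h

lemma strip_heads : ∀ (a b : List Bool) (x y : Bool) (xs ys : List Bool),
    strip a b = (x :: xs, y :: ys) → x ≠ y
  | [], bs => by intro x y xs ys h; simp [strip] at h
  | a :: as, [] => by intro x y xs ys h; simp [strip] at h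
  | a :: as, b :: bs => by
    intro x y xs ys h
    by_cases hab : a = b
    · rw [show strip (a :: as) (b :: bs) = strip as bs by simp [strip, hab]] at h
      exact strip_heads as bs x y xs ys h
    · rw [show strip (a :: as) (b :: bs) = (a :: as, b :: bs) by simp [strip, hab]] at h
      rw [Prod.mk.injEq] at h
      obtain ⟨h1, h2⟩ := h
      injection h1 with hx _
      injection h2 with hy _
      rw [← hx, ← hy]
      exact hab

/-! ### Leaf words -/

def fallbackL (i j : Fin k) : List (Ltr k) := [(i, true), (j, true), (i, false)]

def leaf (i j : Fin k) (r : ℕ) (l : List Bool) : List (Ltr k) :=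
  match strip (l.take r) ((l.drop r).take r) with
  | (x :: xs, y :: ys) => leafL i j (x :: xs) (y :: ys)
  | _ => fallbackL i j

lemma fallback_shaped {i j : Fin k} (hij : i ≠ j) : Shaped i (fallbackL i j) := by
  refine ⟨?_, rfl, rfl⟩
  refine List.isChain_cons_cons.mpr ⟨R_of_ne hij, ?_⟩
  refine List.isChain_cons_cons.mpr ⟨R_of_ne (Ne.symm hij), ?_⟩
  simp

lemma head?_append_of_ne_nil {l₁ l₂ : List (Ltr k)} (h : l₁ ≠ []) :
    (l₁ ++ l₂).head? = l₁.head? := by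
  cases l₁ <;> simp_all

lemma leafL_shaped {i j : Fin k} (hij : i ≠ j) {x y : Bool} (hxy : x ≠ y) (xs ys : List Bool) :
    Shaped i (leafL i j (x :: xs) (y :: ys)) := by
  have hposmem : ∀ p ∈ (pcode i j (x :: xs)).reverse, p.2 = true := by
    intro p hp
    rw [List.mem_reverse] at hp
    simp only [pcode, List.mem_map] at hp
    obtain ⟨b, _, hb⟩ := hp
    rw [← hb]
  have hpr : Reduced ((pcode i j (x :: xs)).reverse) := reduced_of_const hposmem
  have hpl : ((pcode i j (x :: xs)).reverse).getLast? = some ((if x then j else i), true) := by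
    rw [List.getLast?_reverse]; rfl
  have hnr : Reduced (ncode i j (y :: ys) ++ [(i, false)]) := by
    refine reduced_of_const (c := false) ?_
    intro p hp
    rcases List.mem_append.mp hp with hp | hp
    · simp only [ncode, List.mem_map] at hp
      obtain ⟨b, _, hb⟩ := hp
      rw [← hb]
    · simp at hp; rw [hp]
  have hnh : (ncode i j (y :: ys) ++ [(i, false)]).head? = some ((if y then j else i), false) := rfl
  have henc : (if x then j else i) ≠ (if y then j else i) := by
    cases x <;> cases y <;> simp_all <;> exact Ne.symm hij
  have hmid : Reduced ((pcode i j (x :: xs)).reverse ++ (ncode i j (y :: ys) ++ [(i, false)])) :=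
    glue2 hpr hnr hpl hnh (R_of_ne henc)
  have hpne : (pcode i j (x :: xs)).reverse ≠ [] := by simp [pcode]
  have hmidh : ((pcode i j (x :: xs)).reverse ++ (ncode i j (y :: ys) ++ [(i, false)])).head?
      = ((pcode i j (x :: xs)).reverse).head? := head?_append_of_ne_nil hpne
  have hassoc : leafL i j (x :: xs) (y :: ys)
      = [(i, true)] ++ ((pcode i j (x :: xs)).reverse ++ (ncode i j (y :: ys) ++ [(i, false)])) := by
    simp [leafL]
  refine ⟨?_, ?_, ?_⟩
  · rw [hassoc]
    refine List.isChain_append.mpr ⟨by simp, hmid, ?_⟩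
    intro u hu v hv
    simp only [List.getLast?_singleton, Option.mem_some_iff] at hu
    subst hu
    rw [hmidh] at hv
    have hv' : v ∈ (pcode i j (x :: xs)).reverse := List.mem_of_mem_head? hv
    have := hposmem v hv'
    intro _
    rw [this]
  · rw [hassoc]; rfl
  · rw [leafL]; exact getLast?_append_right _ rfl

lemma leaf_shaped {i j : Fin k} (hij : i ≠ j) (r : ℕ) (l : List Bool) :
    Shaped i (leaf i j r l) := by
  rw [leaf]
  split
  · next x xs y ys heq => exact leafL_shaped hij (strip_heads _ _ _ _ _ _ heq) xs ys
  · exact fallback_shaped hij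

lemma leafL_length (i j : Fin k) (a b : List Bool) :
    (leafL i j a b).length = a.length + b.length + 2 := by
  simp [leafL, pcode, ncode]
  omega

lemma leaf_length {i j : Fin k} {r : ℕ} (hr : 1 ≤ r) (l : List Bool) :
    (leaf i j r l).length ≤ 2 * r + 2 := by
  rw [leaf]
  split
  · next x xs y ys heq =>
    obtain ⟨c, h1, h2⟩ := strip_spec (l.take r) ((l.drop r).take r)
    rw [heq] at h1 h2
    have h1' : l.take r = c ++ (x :: xs) := h1
    have h2' : (l.drop r).take r = c ++ (y :: ys) := h2
    have ha : (x :: xs).length ≤ r := by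
      have h4 := congrArg List.length h1'
      rw [List.length_append] at h4
      have h3 : (l.take r).length ≤ r := l.length_take_le r
      omega
    have hb : (y :: ys).length ≤ r := by
      have h4 := congrArg List.length h2'
      rw [List.length_append] at h4
      have h3 : ((l.drop r).take r).length ≤ r := (l.drop r).length_take_le r
      omega
    rw [leafL_length]
    omega
  · simp [fallbackL]
    omega

lemma leaf_kill {G : Type} [Group G] (φ : FreeGroup (Fin k) →* G) {i j : Fin k} {r : ℕ}
    {l : List Bool} (hne : l.take r ≠ (l.drop r).take r)
    (hlen : (l.take r).length = ((l.drop r).take r).length)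
    (hφ : φ (wrd i j (l.take r)) = φ (wrd i j ((l.drop r).take r))) :
    φ (mk (leaf i j r l)) = 1 := by
  obtain ⟨c, h1, h2⟩ := strip_spec (l.take r) ((l.drop r).take r)
  have hlen' := strip_len _ _ hlen
  rw [leaf]
  split
  · next x xs y ys heq =>
    rw [heq] at h1 h2
    have h1' : l.take r = c ++ (x :: xs) := h1
    have h2' : (l.drop r).take r = c ++ (y :: ys) := h2
    rw [mk_leafL i j c, ← h1', ← h2', MonoidHom.map_mul, MonoidHom.map_inv, hφ]
    simp
  · next hnc =>
    exfalso
    rcases ha : (strip (l.take r) ((l.drop r).take r)).1 with _ | ⟨x, xs⟩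
    · rcases hb : (strip (l.take r) ((l.drop r).take r)).2 with _ | ⟨y, ys⟩
      · rw [ha] at h1; rw [hb] at h2
        simp at h1 h2
        exact hne (h1.trans h2.symm)
      · rw [ha, hb] at hlen'; simp at hlen'
    · rcases hb : (strip (l.take r) ((l.drop r).take r)).2 with _ | ⟨y, ys⟩
      · rw [ha, hb] at hlen'; simp at hlen'
      · exact hnc x xs y ys (by rw [← ha, ← hb])

/-! ### The balanced tree of iterated commutators -/

def tree (i j : Fin k) : ℕ → (List Bool → List (Ltr k)) → List (Ltr k)
  | 0, f => f []
  | m + 1, f => combine i j (tree i j m fun l => f (false :: l)) (tree i j m fun l => f (true :: l))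

lemma tree_shaped {i j : Fin k} (hij : i ≠ j) :
    ∀ (m : ℕ) (f : List Bool → List (Ltr k)), (∀ l, Shaped i (f l)) → Shaped i (tree i j m f) := by
  intro m
  induction m with
  | zero => intro f hf; exact hf []
  | succ m ih =>
    intro f hf
    exact combine_shaped hij (ih _ fun l => hf _) (ih _ fun l => hf _)

lemma tree_length {i j : Fin k} :
    ∀ (m : ℕ) (f : List Bool → List (Ltr k)) (c : ℕ), (∀ l, (f l).length ≤ c) →
      (tree i j m f).length + 2 ≤ 4 ^ m * (c + 2) := by
  intro m
  induction m with
  | zero => intro f c hf; have := hf []; simp [tree]; omega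
  | succ m ih =>
    intro f c hf
    have hA := ih (fun l => f (false :: l)) c (fun l => hf _)
    have hB := ih (fun l => f (true :: l)) c (fun l => hf _)
    rw [tree, combine_length]
    have h4 : 4 ^ (m + 1) * (c + 2) = 4 * (4 ^ m * (c + 2)) := by rw [pow_succ]; ring
    rw [h4]
    omega

lemma tree_kill {G : Type} [Group G] (φ : FreeGroup (Fin k) →* G) {i j : Fin k} :
    ∀ (m : ℕ) (f : List Bool → List (Ltr k)) (l : List Bool), l.length = m →
      φ (mk (f l)) = 1 → φ (mk (tree i j m f)) = 1 := by
  intro m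
  induction m with
  | zero =>
    intro f l hl h
    rw [List.length_eq_zero_iff] at hl
    subst hl
    exact h
  | succ m ih =>
    intro f l hl h
    cases l with
    | nil => simp at hl
    | cons b t =>
      simp at hl
      rw [tree]
      cases b with
      | false => exact combine_kill_left φ (ih (fun l => f (false :: l)) t hl h)
      | true => exact combine_kill_right φ (ih (fun l => f (true :: l)) t hl h)

lemma pow_aux : ∀ (r : ℕ), 2 ≤ r → 2 * r + 4 ≤ 4 ^ r := by
  intro r h
  induction r, h using Nat.le_induction with
  | base => norm_num
  | succ m hm ih =>
    rw [pow_succ]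
    omega

end Stmt12

/-- For all sufficiently large `n` there is a nontrivial word `w` in the free group on
`k ≥ 2` generators, of word length at most `e^{4k(log n)²}·log n`, which is killed by
every homomorphism to a finite group of order at most `n`.
(Consequently `F_{F_k}(n) ≽ e^{√(log n)}`.) -/
theorem stmt_12 (k : ℕ) (hk : 2 ≤ k) :
    ∃ N : ℕ, ∀ n : ℕ, N ≤ n →
      ∃ w : FreeGroup (Fin k), w ≠ 1 ∧
        ((FreeGroup.toWord w).length : ℝ) ≤
          Real.exp (4 * k * (Real.log n) ^ 2) * Real.log n ∧
        ∀ (H : Type) (_ : Group H) (_ : Finite H),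
          Nat.card H ≤ n → ∀ φ : FreeGroup (Fin k) →* H, φ w = 1 := by
  refine ⟨4096, fun n hn => ?_⟩
  have hn0 : 0 < n := by omega
  obtain ⟨i, hi⟩ : ∃ i : Fin k, i = ⟨0, by omega⟩ := ⟨_, rfl⟩
  obtain ⟨j, hj⟩ : ∃ j : Fin k, j = ⟨1, by omega⟩ := ⟨_, rfl⟩
  have hij : i ≠ j := by simp [hi, hj, Fin.ext_iff]
  obtain ⟨r, hr⟩ : ∃ r : ℕ, r = Nat.log 2 n + 1 := ⟨_, rfl⟩
  have hr1 : 1 ≤ r := by omega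
  have hlog12 : 12 ≤ Nat.log 2 n := by
    refine (Nat.le_log_iff_pow_le (by norm_num) (by omega)).mpr (by norm_num; omega)
  have hr2 : 2 ≤ r := by omega
  obtain ⟨T, hT⟩ : ∃ T : List (Fin k × Bool), T = Stmt12.tree i j (2 * r) (Stmt12.leaf i j r) :=
    ⟨_, rfl⟩
  obtain ⟨hred, hhead, hlast⟩ : Stmt12.Shaped i T := by
    rw [hT]
    exact Stmt12.tree_shaped hij (2 * r) (Stmt12.leaf i j r) (fun l => Stmt12.leaf_shaped hij r l)
  have htw : (FreeGroup.mk T).toWord = T := Stmt12.toWord_mk_reduced hred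
  refine ⟨FreeGroup.mk T, ?_, ?_, ?_⟩
  · intro h
    have hTnil : T = [] := by rw [← htw, h, FreeGroup.toWord_one]
    rw [hTnil] at hhead
    simp at hhead
  · -- length estimate
    have hlen : T.length + 2 ≤ 4 ^ (2 * r) * (2 * r + 2 + 2) := by
      rw [hT]
      exact Stmt12.tree_length (i := i) (j := j) (2 * r) (Stmt12.leaf i j r) (2 * r + 2)
        (fun l => Stmt12.leaf_length hr1 l)
    have hb1 : 4 ^ (2 * r) * (2 * r + 2 + 2) ≤ 4 ^ (2 * r) * 4 ^ r :=
      Nat.mul_le_mul_left _ (by have := Stmt12.pow_aux r hr2; omega)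
    have hb2 : (4 : ℕ) ^ (2 * r) * 4 ^ r = 4 ^ (3 * r) := by
      rw [← pow_add]
      congr 1
      omega
    have hb3 : (4 : ℕ) ^ (3 * r) ≤ 64 * n ^ 6 := by
      have e1 : (4 : ℕ) ^ (3 * r) = 64 * (2 ^ Nat.log 2 n) ^ 6 := by
        rw [hr]
        rw [show (4 : ℕ) = 2 ^ 2 from rfl, ← pow_mul, ← pow_mul]
        rw [show 64 = 2 ^ 6 from rfl, ← pow_add]
        congr 1
        ring
      rw [e1]
      have e2 : 2 ^ Nat.log 2 n ≤ n := Nat.pow_log_le_self 2 (by omega)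
      have e3 : (2 ^ Nat.log 2 n) ^ 6 ≤ n ^ 6 := Nat.pow_le_pow_left e2 6
      omega
    have hnat : T.length ≤ 64 * n ^ 6 := by omega
    -- now the real-number estimate
    have hx0 : (0 : ℝ) < (n : ℝ) := by exact_mod_cast hn0
    have hx : (4096 : ℝ) ≤ (n : ℝ) := by exact_mod_cast hn
    have hlog8 : (8 : ℝ) ≤ Real.log n := by
      rw [Real.le_log_iff_exp_le hx0]
      have e1 : Real.exp (8 : ℝ) = Real.exp 1 ^ (8 : ℕ) := by
        rw [Real.exp_one_pow]; norm_num
      have e2 : Real.exp 1 ^ (8 : ℕ) ≤ (2.7182818286 : ℝ) ^ (8 : ℕ) :=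
        pow_le_pow_left₀ (Real.exp_pos 1).le Real.exp_one_lt_d9.le 8
      have e3 : (2.7182818286 : ℝ) ^ (8 : ℕ) ≤ 4096 := by norm_num
      linarith
    have h1log : (1 : ℝ) ≤ Real.log n := by linarith
    have hcast : ((FreeGroup.mk T).toWord.length : ℝ) ≤ 64 * (n : ℝ) ^ 6 := by
      rw [htw]
      exact_mod_cast hnat
    have hstep2 : (64 : ℝ) * (n : ℝ) ^ 6 ≤ (n : ℝ) ^ 8 := by
      have h64 : (64 : ℝ) ≤ (n : ℝ) ^ 2 := by nlinarith
      nlinarith [pow_pos hx0 6]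
    have hstep3 : (n : ℝ) ^ 8 = Real.exp (8 * Real.log n) := by
      rw [← Real.exp_log (pow_pos hx0 8), Real.log_pow]
      norm_num
    have hstep4 : Real.exp (8 * Real.log n) ≤ Real.exp (4 * k * (Real.log n) ^ 2) := by
      rw [Real.exp_le_exp]
      have hk' : (8 : ℝ) ≤ 4 * (k : ℝ) := by
        have : (2 : ℝ) ≤ (k : ℝ) := by exact_mod_cast hk
        linarith
      nlinarith
    have hstep5 : Real.exp (4 * k * (Real.log n) ^ 2)
        ≤ Real.exp (4 * k * (Real.log n) ^ 2) * Real.log n :=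
      le_mul_of_one_le_right (Real.exp_pos _).le h1log
    linarith
  · -- the killing property
    intro H _ _ hcard φ
    letI : Fintype H := Fintype.ofFinite H
    have hcard' : Fintype.card H < Fintype.card (Fin r → Bool) := by
      rw [Fintype.card_fun, Fintype.card_bool, Fintype.card_fin]
      have h2 : n < 2 ^ r := by
        rw [hr]
        exact Nat.lt_pow_succ_log_self (by norm_num) n
      have h3 : Fintype.card H ≤ n := by rw [← Nat.card_eq_fintype_card]; exact hcard
      omega
    obtain ⟨s, s', hss, heq⟩ := Fintype.exists_ne_map_eq_of_card_lt
      (fun s : Fin r → Bool => φ (Stmt12.wrd i j (List.ofFn s))) hcard'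
    obtain ⟨l, hl⟩ : ∃ l : List Bool, l = List.ofFn s ++ List.ofFn s' := ⟨_, rfl⟩
    have hlt : l.take r = List.ofFn s := by
      rw [hl]
      exact List.take_left' (by simp)
    have hld : l.drop r = List.ofFn s' := by
      rw [hl]
      exact List.drop_left' (by simp)
    have hldt : (l.drop r).take r = List.ofFn s' := by
      rw [hld]
      exact List.take_of_length_le (by simp)
    have hne : l.take r ≠ (l.drop r).take r := by
      rw [hlt, hldt]
      exact fun h => hss (List.ofFn_injective h)
    have hlen : (l.take r).length = ((l.drop r).take r).length := by rw [hlt, hldt]; simp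
    have hkill := Stmt12.leaf_kill φ hne hlen (by rw [hlt, hldt]; exact heq)
    have hl2 : l.length = 2 * r := by
      rw [hl]
      simp [two_mul]
    rw [hT]
    exact Stmt12.tree_kill φ (2 * r) _ l hl2 hkill
end
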